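/- arXiv:2106.12176 — 11 statements merged into one kernel-verified Lean document; each statement's English description precedes it below -/
import Mathlib

section
/- Let m ∈ ℕ and let α, β, γ, μ, ν, φ, ψ ∈ ℝ. Define F(x) = αx² + βx + γ and G(x) = (α + mμ)x³ + (β + mν)x² + (γ + mφ)x + mψ. Suppose that G(z) + w·F(z) ≠ 0 for all complex numbers z, w with Im(z) > 0 and Im(w) > 0 (i.e., the bivariate polynomial G(x) + y·F(x) is real stable). Then for every real-rooted real polynomial f of degree at most m, the polynomial (αx² + βx + γ)·f(x) + (μx³ + νx² + φx + ψ)·f′(x) is real-rooted. -/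
open Polynomial Filter

/-- A real polynomial is real-rooted if it is identically zero or
all of its complex roots are real. -/
def RealRooted (f : Polynomial ℝ) : Prop :=
  f = 0 ∨ ∀ z : ℂ, aeval z f = 0 → z.im = 0

private lemma ms_cs (M : Multiset ℝ) (h : ∀ x ∈ M, 0 ≤ x) :
    M.sum ^ 2 ≤ M.card * (M.map (fun x => x ^ 2)).sum := by
  induction M using Multiset.induction with
  | empty => simp
  | cons a M ih =>
    have ha : 0 ≤ a := h a (Multiset.mem_cons_self a M)
    have hM : ∀ x ∈ M, 0 ≤ x := fun x hx => h x (Multiset.mem_cons_of_mem hx)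
    have hS : 0 ≤ M.sum := Multiset.sum_nonneg hM
    have hQ : 0 ≤ (M.map (fun x => x ^ 2)).sum := Multiset.sum_nonneg (by
      intro x hx; obtain ⟨y, _, rfl⟩ := Multiset.mem_map.1 hx; positivity)
    have ihs := ih hM
    simp only [Multiset.sum_cons, Multiset.card_cons, Multiset.map_cons]
    push_cast
    nlinarith [sq_nonneg ((M.card : ℝ) * a ^ 2 - (M.map (fun x => x ^ 2)).sum),
      sq_nonneg (M.sum - (M.card : ℝ) * a), Nat.cast_nonneg (α := ℝ) M.card,
      mul_nonneg (mul_nonneg (Nat.cast_nonneg (α := ℝ) M.card) ha) ha]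

private lemma ms_zero (M : Multiset ℝ) (h : ∀ x ∈ M, 0 ≤ x) (hs : M.sum ≤ 0) :
    ∀ x ∈ M, x = 0 := by
  induction M using Multiset.induction with
  | empty => simp
  | cons a M ih =>
    have ha : 0 ≤ a := h a (Multiset.mem_cons_self a M)
    have hM : ∀ x ∈ M, 0 ≤ x := fun x hx => h x (Multiset.mem_cons_of_mem hx)
    have hS : 0 ≤ M.sum := Multiset.sum_nonneg hM
    simp only [Multiset.sum_cons] at hs
    have ha0 : a = 0 := le_antisymm (by linarith) ha
    intro x hx
    rcases Multiset.mem_cons.1 hx with rfl | hx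
    · exact ha0
    · exact ih hM (by linarith) x hx

private lemma ms_pos (M : Multiset ℝ) (h : ∀ x ∈ M, 0 < x) (hM : M ≠ 0) : 0 < M.sum := by
  obtain ⟨a, ha⟩ := Multiset.exists_mem_of_ne_zero hM
  obtain ⟨M', rfl⟩ := Multiset.exists_cons_of_mem ha
  simp only [Multiset.sum_cons]
  have : 0 ≤ M'.sum := Multiset.sum_nonneg fun x hx => (h x (Multiset.mem_cons_of_mem hx)).le
  linarith [h a (Multiset.mem_cons_self a M')]

private lemma ms_im (S : Multiset ℂ) : S.sum.im = (S.map Complex.im).sum := by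
  induction S using Multiset.induction with
  | empty => simp
  | cons a S ih => simp [ih]

private lemma ms_re (S : Multiset ℂ) : S.sum.re = (S.map Complex.re).sum := by
  induction S using Multiset.induction with
  | empty => simp
  | cons a S ih => simp [ih]

private lemma t_im (z : ℂ) (r : ℝ) :
    ((z - (r : ℂ))⁻¹).im = -z.im * Complex.normSq ((z - (r : ℂ))⁻¹) := by
  have h : (z - (r : ℂ)).im = z.im := by simp
  rw [Complex.inv_im, Complex.normSq_inv, h, div_eq_mul_inv, neg_mul]

private lemma t_re (z : ℂ) (r : ℝ) :
    ((z - (r : ℂ))⁻¹).re = (z.re - r) * Complex.normSq ((z - (r : ℂ))⁻¹) := by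
  have h : (z - (r : ℂ)).re = z.re - r := by simp
  rw [Complex.inv_re, Complex.normSq_inv, h, div_eq_mul_inv]

private lemma t_norm (z : ℂ) (r : ℝ) (hz : 0 < z.im) :
    ((z.re - r) ^ 2 + z.im ^ 2) * Complex.normSq ((z - (r : ℂ))⁻¹) = 1 := by
  rw [Complex.normSq_inv]
  have h : Complex.normSq (z - (r : ℂ)) = (z.re - r) ^ 2 + z.im ^ 2 := by
    rw [Complex.normSq_apply]
    simp
    ring
  rw [h]
  have hne : (z.re - r) ^ 2 + z.im ^ 2 ≠ 0 := by positivity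
  field_simp

private lemma ms_affine (R : Multiset ℝ) (F G H : ℝ → ℝ) (a b c0 : ℝ)
    (h : ∀ r ∈ R, F r = a * G r + b * H r + c0) :
    (R.map F).sum = a * (R.map G).sum + b * (R.map H).sum + R.card * c0 := by
  induction R using Multiset.induction with
  | empty => simp
  | cons x R ih =>
    have hx := h x (Multiset.mem_cons_self x R)
    have hR : ∀ r ∈ R, F r = a * G r + b * H r + c0 :=
      fun r hr => h r (Multiset.mem_cons_of_mem hr)
    simp only [Multiset.map_cons, Multiset.sum_cons, Multiset.card_cons, ih hR, hx]
    push_cast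
    ring

noncomputable def pOf (a : ℂ) (R : Multiset ℝ) : ℂ[X] :=
  C a * (R.map (fun r : ℝ => X - C (r : ℂ))).prod

private lemma pOf_eval_ne (a : ℂ) (ha : a ≠ 0) (R : Multiset ℝ) (z : ℂ)
    (hz : ∀ r ∈ R, z ≠ (r : ℂ)) : eval z (pOf a R) ≠ 0 := by
  unfold pOf
  rw [eval_mul, eval_C, eval_multiset_prod]
  refine mul_ne_zero ha (Multiset.prod_ne_zero ?_)
  intro h0
  rw [Multiset.mem_map] at h0
  obtain ⟨p, hp, hp0⟩ := h0
  rw [Multiset.mem_map] at hp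
  obtain ⟨r, hr, rfl⟩ := hp
  simp only [eval_sub, eval_X, eval_C] at hp0
  exact hz r hr (by linear_combination hp0)

private lemma pOf_logderiv (a : ℂ) (R : Multiset ℝ) (z : ℂ) (hz : ∀ r ∈ R, z ≠ (r : ℂ)) :
    eval z (derivative (pOf a R)) =
      eval z (pOf a R) * (R.map (fun r : ℝ => (z - (r : ℂ))⁻¹)).sum := by
  induction R using Multiset.induction with
  | empty => simp [pOf]
  | cons r R ih =>
    have hz' : ∀ r' ∈ R, z ≠ (r' : ℂ) := fun r' hr' => hz r' (Multiset.mem_cons_of_mem hr')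
    have key : pOf a (r ::ₘ R) = (X - C (r : ℂ)) * pOf a R := by
      unfold pOf
      rw [Multiset.map_cons, Multiset.prod_cons]; ring
    rw [key, derivative_mul, eval_add, eval_mul, eval_mul, Multiset.map_cons,
      Multiset.sum_cons, ih hz', eval_mul]
    have hzr : z - (r : ℂ) ≠ 0 := sub_ne_zero.2 (hz r (Multiset.mem_cons_self r R))
    simp only [derivative_sub, derivative_X, derivative_C, sub_zero, eval_one,
      eval_sub, eval_X, eval_C]
    field_simp

private lemma loc_const (g : ℂ → ℂ) (z₀ : ℂ) (hg : AnalyticAt ℂ g z₀)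
    (hub : ∀ᶠ z in nhds z₀, 0 ≤ (g z).im) (him : (g z₀).im = 0) :
    ∀ᶠ z in nhds z₀, g z = g z₀ := by
  rcases hg.eventually_constant_or_nhds_le_map_nhds with h | h
  · exact h
  · exfalso
    have hS : {w : ℂ | 0 ≤ w.im} ∈ map g (nhds z₀) := by
      rw [mem_map]; exact hub
    have hS' : {w : ℂ | 0 ≤ w.im} ∈ nhds (g z₀) := h hS
    obtain ⟨ε, hε, hball⟩ := Metric.mem_nhds_iff.1 hS'
    have hmem : g z₀ - (ε / 2 : ℝ) * Complex.I ∈ Metric.ball (g z₀) ε := by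
      rw [Metric.mem_ball, dist_eq_norm]
      have h1 : g z₀ - (ε / 2 : ℝ) * Complex.I - g z₀ = -((ε/2 : ℝ) * Complex.I) := by ring
      rw [h1, norm_neg]
      rw [norm_mul, Complex.norm_real, Complex.norm_I, mul_one, Real.norm_eq_abs,
        abs_of_pos (by linarith)]
      linarith
    have h2 := hball hmem
    simp only [Set.mem_setOf_eq, Complex.sub_im, Complex.mul_im, Complex.I_im,
      Complex.I_re, Complex.ofReal_re, Complex.ofReal_im, him] at h2
    nlinarith

private lemma myFactorization (f : ℝ[X]) (hf0 : f ≠ 0)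
    (hf : ∀ z : ℂ, aeval z f = 0 → z.im = 0) :
    ∃ (a : ℂ) (R : Multiset ℝ), a ≠ 0 ∧ R.card = f.natDegree ∧
      f.map (algebraMap ℝ ℂ) = pOf a R := by
  set g := f.map (algebraMap ℝ ℂ) with hg
  have hg0 : g ≠ 0 := by
    simpa [hg, Polynomial.map_eq_zero_iff (algebraMap ℝ ℂ).injective] using hf0
  have hsplit : Splits g := IsAlgClosed.splits g
  have hprod := hsplit.eq_prod_roots
  have hcard : g.roots.card = f.natDegree := by
    rw [← hsplit.natDegree_eq_card_roots, hg, natDegree_map]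
  have hreal : ∀ r ∈ g.roots, r.im = 0 := by
    intro r hr
    have : IsRoot g r := (mem_roots hg0).1 hr
    apply hf
    rw [aeval_def, ← eval_map]
    exact this
  refine ⟨g.leadingCoeff, g.roots.map Complex.re, ?_, by simp [hcard], ?_⟩
  · exact leadingCoeff_ne_zero.2 hg0
  · unfold pOf
    rw [Multiset.map_map]
    show g = C g.leadingCoeff * (Multiset.map (fun r => X - C ((r.re:ℝ):ℂ)) g.roots).prod
    have : g.roots.map (fun r => X - C ((r.re : ℝ) : ℂ)) = g.roots.map (fun a => X - C a) := by
      apply Multiset.map_congr rfl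
      intro r hr
      have : ((r.re : ℝ) : ℂ) = r := Complex.ext rfl (by simp [hreal r hr])
      rw [this]
    rw [this, ← hprod]

theorem stmt_0 (m : ℕ) (α β γ μ ν φ ψ : ℝ)
    (hstable : ∀ z w : ℂ, 0 < z.im → 0 < w.im →
      (((α : ℂ) + m * μ) * z ^ 3 + ((β : ℂ) + m * ν) * z ^ 2
          + ((γ : ℂ) + m * φ) * z + m * ψ)
        + w * ((α : ℂ) * z ^ 2 + β * z + γ) ≠ 0)
    (f : Polynomial ℝ) (hdeg : f.natDegree ≤ m) (hf : RealRooted f) :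
    RealRooted ((C α * X ^ 2 + C β * X + C γ) * f
      + (C μ * X ^ 3 + C ν * X ^ 2 + C φ * X + C ψ) * derivative f) := by
  classical
  set Fp : ℝ[X] := C α * X ^ 2 + C β * X + C γ with hFp
  set Pp : ℝ[X] := C μ * X ^ 3 + C ν * X ^ 2 + C φ * X + C ψ with hPp
  set T : ℝ[X] := Fp * f + Pp * derivative f with hTdef
  by_cases hT : T = 0
  · exact Or.inl hT
  right
  set Fz : ℂ → ℂ := fun z => α * z ^ 2 + β * z + γ with hFz_def
  set Pz : ℂ → ℂ := fun z => μ * z ^ 3 + ν * z ^ 2 + φ * z + ψ with hPz_def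
  have hFz_eval : ∀ z : ℂ, eval z (Fp.map (algebraMap ℝ ℂ)) = Fz z := by
    intro z; simp [hFp, hFz_def]
  have hPz_eval : ∀ z : ℂ, eval z (Pp.map (algebraMap ℝ ℂ)) = Pz z := by
    intro z; simp [hPp, hPz_def]
  have hFzdiff : Differentiable ℂ Fz := by
    rw [hFz_def]; fun_prop
  have hPzdiff : Differentiable ℂ Pz := by
    rw [hPz_def]; fun_prop
  have hstable' : ∀ z w : ℂ, 0 < z.im → 0 < w.im →
      Fz z * (z + w) + (m : ℂ) * Pz z ≠ 0 := by
    intro z w hz hw h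
    exact hstable z w hz hw (by rw [hFz_def, hPz_def] at h; push_cast at h ⊢; linear_combination h)
  have hloc : ∀ z : ℂ, 0 < z.im → Fz z ≠ 0 → 0 ≤ (z + (m : ℂ) * Pz z / Fz z).im := by
    intro z hz hF
    by_contra hneg
    push_neg at hneg
    have hw : 0 < (-(z + (m : ℂ) * Pz z / Fz z)).im := by
      rw [Complex.neg_im]; linarith
    apply hstable' z (-(z + (m : ℂ) * Pz z / Fz z)) hz hw
    field_simp
    ring
  have hzeroF : ∀ z : ℂ, 0 < z.im → Fz z = 0 → (m : ℂ) * Pz z ≠ 0 := by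
    intro z hz hF h
    apply hstable' z Complex.I hz (by simp)
    rw [hF, h]; ring
  -- main claim : no roots in the open upper half plane
  have key : ∀ z : ℂ, 0 < z.im → aeval z T ≠ 0 := by
    intro z hz hTz
    have hf0 : f ≠ 0 := by
      rintro rfl
      simp [hTdef] at hT
    have hfr : ∀ w : ℂ, aeval w f = 0 → w.im = 0 := hf.resolve_left hf0
    obtain ⟨a, R, ha, hcard, hfac⟩ := myFactorization f hf0 hfr
    have hzR : ∀ r ∈ R, z ≠ (r : ℂ) := by
      intro r hr h
      rw [h] at hz
      simp at hz
    set fz : ℂ := aeval z f with hfz_def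
    have hfz_eval : fz = eval z (pOf a R) := by
      rw [hfz_def, aeval_def, ← eval_map, hfac]
    have hfz0 : fz ≠ 0 := by rw [hfz_eval]; exact pOf_eval_ne a ha R z hzR
    set s : ℂ := (R.map (fun r : ℝ => (z - (r : ℂ))⁻¹)).sum with hs_def
    have hf'z : aeval z (derivative f) = fz * s := by
      rw [aeval_def, ← eval_map, ← derivative_map, hfac, pOf_logderiv a R z hzR, ← hfz_eval]
    have hT0 : Fz z * fz + Pz z * (fz * s) = 0 := by
      have h0 : aeval z T = Fz z * fz + Pz z * (fz * s) := by
        rw [hTdef, map_add, map_mul, map_mul, hf'z, ← hfz_def]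
        congr 2
        · rw [aeval_def, ← eval_map, hFz_eval]
        · rw [aeval_def, ← eval_map, hPz_eval]
      rw [← h0]; exact hTz
    set nsqf : ℝ → ℝ := fun r => Complex.normSq ((z - (r : ℂ))⁻¹) with hnsqf_def
    set Q : ℝ := (R.map nsqf).sum with hQ_def
    have hnsq_pos : ∀ r : ℝ, r ∈ R → 0 < nsqf r := by
      intro r hr
      rw [hnsqf_def]
      exact Complex.normSq_pos.2 (inv_ne_zero (sub_ne_zero.2 (hzR r hr)))
    have hQ_nonneg : 0 ≤ Q := Multiset.sum_nonneg (by
      intro x hx; obtain ⟨r, hr, rfl⟩ := Multiset.mem_map.1 hx; exact (hnsq_pos r hr).le)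
    have hs_im : s.im = -z.im * Q := by
      rw [hs_def, ms_im, Multiset.map_map, hQ_def, ← Multiset.sum_map_mul_left]
      congr 1
      exact Multiset.map_congr rfl (fun r _ => t_im z r)
    have hs_re : s.re = (R.map (fun r => (z.re - r) * nsqf r)).sum := by
      rw [hs_def, ms_re, Multiset.map_map]
      congr 1
      exact Multiset.map_congr rfl (fun r _ => t_re z r)
    by_cases hFzz : Fz z = 0
    · -- Case A
      have hmP := hzeroF z hz hFzz
      have hs0 : s = 0 := by
        have h1 : Pz z * (fz * s) = 0 := by rw [← hT0, hFzz]; ring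
        have hPz0 : Pz z ≠ 0 := fun h => hmP (by rw [h, mul_zero])
        have h2 := (mul_eq_zero.1 h1).resolve_left hPz0
        exact (mul_eq_zero.1 h2).resolve_left hfz0
      by_cases hR : R = 0
      · -- f is a nonzero constant
        have hdeg0 : f.natDegree = 0 := by rw [← hcard, hR]; rfl
        have hfC : f = C (f.coeff 0) := eq_C_of_natDegree_eq_zero hdeg0
        have hdf : derivative f = 0 := by rw [hfC]; exact derivative_C
        have hFpne : Fp.map (algebraMap ℝ ℂ) ≠ 0 := by
          intro h
          have hFp0 : Fp = 0 :=
            Polynomial.map_injective _ (algebraMap ℝ ℂ).injective (by rw [h]; simp)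
          apply hT
          rw [hTdef, hFp0, hdf]
          ring
        set j : ℂ → ℂ := fun w => Fz w / ((m : ℂ) * Pz w) with hj_def
        have hjana : AnalyticAt ℂ j z := by
          apply AnalyticAt.div (hFzdiff.analyticAt z)
          · exact AnalyticAt.mul analyticAt_const (hPzdiff.analyticAt z)
          · exact hmP
        have hj0 : j z = 0 := by rw [hj_def]; simp [hFzz]
        rcases hjana.eventually_constant_or_nhds_le_map_nhds with hconst | hmap
        · -- j locally zero, so Fz locally zero: contradiction
          apply hFpne
          apply Polynomial.eq_zero_of_infinite_isRoot
          have hPev : ∀ᶠ w in nhds z, (m : ℂ) * Pz w ≠ 0 :=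
            ContinuousAt.eventually_ne
              (g := fun w => (m : ℂ) * Pz w)
              (continuousAt_const.mul (hPzdiff.continuous.continuousAt)) hmP
          have hE : {w : ℂ | eval w (Fp.map (algebraMap ℝ ℂ)) = 0} ∈ nhds z := by
            filter_upwards [hconst, hPev] with w hw1 hw2
            rw [hj0] at hw1
            rw [hj_def] at hw1
            simp only [_root_.div_eq_zero_iff] at hw1
            show eval w (Fp.map (algebraMap ℝ ℂ)) = 0
            rw [hFz_eval]
            exact hw1.resolve_right hw2
          exact Set.Infinite.mono (fun w hw => hw) (infinite_of_mem_nhds z hE)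
        · -- open mapping contradiction
          rw [hj0] at hmap
          set E : Set ℂ := {w : ℂ | 0 < w.im ∧ w.im < z.im + 1} with hE_def
          have hEopen : IsOpen E := by
            apply IsOpen.inter
            · exact isOpen_lt continuous_const Complex.continuous_im
            · exact isOpen_lt Complex.continuous_im continuous_const
          have hzE : z ∈ E := ⟨hz, by linarith⟩
          have hEnhds : E ∈ nhds z := hEopen.mem_nhds hzE
          have himg : j '' E ∈ map j (nhds z) := by
            rw [mem_map]
            exact mem_of_superset hEnhds (Set.subset_preimage_image j E)
          have himg' : j '' E ∈ nhds (0 : ℂ) := hmap himg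
          obtain ⟨ε, hε, hball⟩ := Metric.mem_nhds_iff.1 himg'
          set δ : ℝ := min (ε / 2) (1 / (z.im + 2)) with hδ_def
          have hδpos : 0 < δ := by
            apply lt_min (by linarith)
            positivity
          have hδε : δ < ε := lt_of_le_of_lt (min_le_left _ _) (by linarith)
          have hpt : (δ : ℂ) * Complex.I ∈ Metric.ball (0 : ℂ) ε := by
            rw [Metric.mem_ball, dist_zero_right, norm_mul, Complex.norm_real,
              Complex.norm_I, mul_one, Real.norm_eq_abs, abs_of_pos hδpos]
            exact hδε
          obtain ⟨z', hz'E, hjz'⟩ := hball hpt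
          have hz'im : 0 < z'.im := hz'E.1
          have hz'im2 : z'.im < z.im + 1 := hz'E.2
          have hδI : (δ : ℂ) * Complex.I ≠ 0 := by
            apply mul_ne_zero
            · exact_mod_cast ne_of_gt hδpos
            · exact Complex.I_ne_zero
          have hFz' : Fz z' ≠ 0 := by
            intro h
            apply hδI
            rw [← hjz', hj_def]
            simp [h]
          have hmPz' : (m : ℂ) * Pz z' ≠ 0 := by
            intro h
            apply hδI
            rw [← hjz', hj_def]
            simp [h]
          have hrot : (m : ℂ) * Pz z' / Fz z' = ((δ : ℂ) * Complex.I)⁻¹ := by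
            rw [← hjz', hj_def]
            simp only
            rw [inv_div]
          have hle := hloc z' hz'im hFz'
          rw [hrot] at hle
          have hIinv : (((δ : ℂ)) * Complex.I)⁻¹.im = -δ⁻¹ := by
            rw [mul_inv, Complex.inv_I]
            simp [Complex.ofReal_inv]
          rw [Complex.add_im, hIinv] at hle
          have hδle : δ ≤ 1 / (z.im + 2) := min_le_right _ _
          have h2pos : (0:ℝ) < z.im + 2 := by linarith
          have hδinv : z.im + 2 ≤ δ⁻¹ := by
            rw [← one_div, le_div_iff₀ hδpos]
            calc (z.im + 2) * δ ≤ (z.im + 2) * (1 / (z.im + 2)) := by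
                  apply mul_le_mul_of_nonneg_left hδle h2pos.le
              _ = 1 := by field_simp
          linarith
      · -- n ≥ 1 : contradiction since im s < 0
        have hQpos : 0 < Q := by
          rw [hQ_def]
          apply ms_pos
          · intro x hx; obtain ⟨r, hr, rfl⟩ := Multiset.mem_map.1 hx; exact hnsq_pos r hr
          · simpa using hR
        have h3 : s.im = 0 := by rw [hs0]; simp
        rw [hs_im] at h3
        nlinarith
    · -- Case B
      have hfzs : fz * (Fz z + Pz z * s) = 0 := by linear_combination hT0
      have hFPs : Fz z + Pz z * s = 0 := (mul_eq_zero.1 hfzs).resolve_left hfz0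
      have hPz0 : Pz z ≠ 0 := by
        intro h
        apply hFzz
        rw [h] at hFPs
        linear_combination hFPs
      have hs0 : s ≠ 0 := by
        intro h
        apply hFzz
        rw [h] at hFPs
        linear_combination hFPs
      have hR : R ≠ 0 := by
        intro h
        apply hs0
        rw [hs_def, h]
        simp
      have hQpos : 0 < Q := by
        rw [hQ_def]
        apply ms_pos
        · intro x hx; obtain ⟨r, hr, rfl⟩ := Multiset.mem_map.1 hx; exact hnsq_pos r hr
        · simpa using hR
      have hn1 : 1 ≤ R.card := Multiset.card_pos.2 (by simpa using hR)
      have hnm : R.card ≤ m := hcard ▸ hdeg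
      -- Cauchy-Schwarz
      have hcs : Complex.normSq s ≤ R.card * Q := by
        have h1 : ‖s‖ ≤ ((R.map (fun r : ℝ => (z - (r:ℂ))⁻¹)).map (fun x => ‖x‖)).sum := by
          rw [hs_def]; exact norm_multiset_sum_le _
        rw [Multiset.map_map] at h1
        set M : Multiset ℝ := R.map (fun r : ℝ => ‖(z - (r:ℂ))⁻¹‖) with hM_def
        have hMnn : ∀ x ∈ M, 0 ≤ x := by
          intro x hx; obtain ⟨r, hr, rfl⟩ := Multiset.mem_map.1 hx; exact norm_nonneg _
        have h2 := ms_cs M hMnn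
        have hMsq : (M.map (fun x => x ^ 2)).sum = Q := by
          rw [hM_def, Multiset.map_map, hQ_def]
          congr 1
          apply Multiset.map_congr rfl
          intro r _
          simp only [Function.comp, hnsqf_def]
          rw [Complex.sq_norm]
        have hMcard : (M.card : ℝ) = (R.card : ℝ) := by rw [hM_def, Multiset.card_map]
        have hMsum : 0 ≤ M.sum := Multiset.sum_nonneg hMnn
        have h3 : Complex.normSq s ≤ ‖s‖ ^ 2 := by
          rw [Complex.sq_norm]
        have h4 : ‖s‖ ^ 2 ≤ M.sum ^ 2 := by
          apply sq_le_sq' _ h1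
          linarith [norm_nonneg s]
        calc Complex.normSq s ≤ ‖s‖ ^ 2 := h3
          _ ≤ M.sum ^ 2 := h4
          _ ≤ M.card * (M.map (fun x => x ^ 2)).sum := h2
          _ = R.card * Q := by rw [hMsq]; rw_mod_cast [hMcard]
      -- the function g
      set g : ℂ → ℂ := fun w => w + (m : ℂ) * Pz w / Fz w with hg_def
      have hana : AnalyticAt ℂ g z := by
        apply AnalyticAt.add analyticAt_id
        apply AnalyticAt.div
        · exact AnalyticAt.mul analyticAt_const (hPzdiff.analyticAt z)
        · exact hFzdiff.analyticAt z
        · exact hFzz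
      have hge : 0 ≤ (g z).im := hloc z hz hFzz
      have hPF_z : (m : ℂ) * Pz z / Fz z = -(m : ℂ) * s⁻¹ := by
        have hFeq : Fz z = -(Pz z * s) := by linear_combination hFPs
        rw [hFeq]
        field_simp
      have hnsqs : 0 < Complex.normSq s := Complex.normSq_pos.2 hs0
      have hgle : (g z).im ≤ 0 := by
        have hgz : g z = z + (m : ℂ) * Pz z / Fz z := rfl
        rw [hgz, Complex.add_im, hPF_z]
        have h1 : ((-(m : ℂ)) * s⁻¹).im = -(m : ℝ) * s⁻¹.im := by
          have h2 : (-(m : ℂ)) = (((-(m : ℝ)) : ℝ) : ℂ) := by push_cast; ring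
          rw [h2, Complex.im_ofReal_mul]
        rw [h1, Complex.inv_im, hs_im]
        have hQm : Complex.normSq s ≤ m * Q := le_trans hcs (by
          have hc : (R.card : ℝ) ≤ m := by exact_mod_cast hnm
          nlinarith)
        rw [div_eq_mul_inv]
        have expand : z.im + -(m : ℝ) * (- (-z.im * Q) * (Complex.normSq s)⁻¹)
            = z.im * (1 - m * Q * (Complex.normSq s)⁻¹) := by ring
        rw [expand]
        apply mul_nonpos_of_nonneg_of_nonpos hz.le
        have h5 : 1 ≤ m * Q * (Complex.normSq s)⁻¹ := by
          rw [← div_eq_mul_inv, le_div_iff₀ hnsqs]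
          linarith
        linarith
      have him0 : (g z).im = 0 := le_antisymm hgle hge
      have h1ev : ∀ᶠ w in nhds z, 0 < w.im :=
        (isOpen_lt continuous_const Complex.continuous_im).mem_nhds hz
      have h2ev : ∀ᶠ w in nhds z, Fz w ≠ 0 :=
        ContinuousAt.eventually_ne (hFzdiff.continuous.continuousAt) hFzz
      have hub : ∀ᶠ w in nhds z, 0 ≤ (g w).im := by
        filter_upwards [h1ev, h2ev] with w hw1 hw2
        exact hloc w hw1 hw2
      have hevc := loc_const g z hana hub him0
      set c : ℂ := g z with hc_def
      have hc_im : c.im = 0 := him0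
      -- polynomial identity
      have hq0 : C ((m : ℕ) : ℂ) * (Pp.map (algebraMap ℝ ℂ))
          - (C c - X) * (Fp.map (algebraMap ℝ ℂ)) = 0 := by
        apply Polynomial.eq_zero_of_infinite_isRoot
        have hE : {w : ℂ | g w = c ∧ Fz w ≠ 0} ∈ nhds z := by
          filter_upwards [hevc, h2ev] with w hw1 hw2
          exact ⟨hw1, hw2⟩
        apply Set.Infinite.mono _ (infinite_of_mem_nhds z hE)
        rintro w ⟨hw1, hw2⟩
        have hgw : w + (m : ℂ) * Pz w / Fz w = c := hw1
        have h3 : (m : ℂ) * Pz w = (c - w) * Fz w := by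
          field_simp at hgw
          linear_combination hgw
        simp only [Set.mem_setOf_eq, IsRoot, eval_sub, eval_mul, eval_C, eval_X,
          hPz_eval, hFz_eval]
        rw [h3]
        ring
      have hPF : ∀ w : ℂ, (m : ℂ) * Pz w = (c - w) * Fz w := by
        intro w
        have h4 := congrArg (eval w) hq0
        simp only [eval_sub, eval_mul, eval_C, eval_X, eval_zero, hPz_eval, hFz_eval] at h4
        linear_combination h4
      -- derive the root-sum relation
      have hms : (m : ℂ) + (c - z) * s = 0 := by
        have h7 : Fz z * fz * ((m : ℂ) + (c - z) * s) = 0 := by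
          linear_combination (m : ℂ) * hT0 - (fz * s) * hPF z
        have h8 := (mul_eq_zero.1 h7).resolve_left (mul_ne_zero hFzz hfz0)
        exact h8
      -- real and imaginary parts
      have h_im : (c.re - z.re) * s.im + (-z.im) * s.re = 0 := by
        have h4 := congrArg Complex.im hms
        simpa [Complex.add_im, Complex.mul_im, Complex.sub_im, Complex.sub_re, hc_im]
          using h4
      have h_re : (m : ℝ) + ((c.re - z.re) * s.re - (-z.im) * s.im) = 0 := by
        have h4 := congrArg Complex.re hms
        simpa [Complex.add_re, Complex.mul_re, Complex.sub_im, Complex.sub_re, hc_im]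
          using h4
      have hsre : s.re = (z.re - c.re) * Q := by
        have h9 : z.im * ((z.re - c.re) * Q - s.re) = 0 := by
          linear_combination h_im + (z.re - c.re) * hs_im
        have h10 := (mul_eq_zero.1 h9).resolve_left (ne_of_gt hz)
        linarith
      have hmain : (m : ℝ) = ((z.re - c.re) ^ 2 + z.im ^ 2) * Q := by
        linear_combination h_re - (c.re - z.re) * hsre - z.im * hs_im
      -- the multiset computation
      set S1 : ℝ := (R.map (fun r => (r - c.re) * nsqf r)).sum with hS1_def
      set D : ℝ := (R.map (fun r => (r - c.re) ^ 2 * nsqf r)).sum with hD_def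
      have hsre2 : s.re = -1 * S1 + (z.re - c.re) * Q + R.card * 0 := by
        rw [hs_re, hS1_def, hQ_def]
        apply ms_affine
        intro r _
        ring
      have hS1 : S1 = 0 := by
        rw [hsre] at hsre2
        linarith
      have hQD : ((z.re - c.re) ^ 2 + z.im ^ 2) * Q
          = 2 * (z.re - c.re) * S1 + (-1) * D + R.card * 1 := by
        have e0 : (R.map (fun r => ((z.re - c.re) ^ 2 + z.im ^ 2) * nsqf r)).sum
            = ((z.re - c.re) ^ 2 + z.im ^ 2) * (R.map nsqf).sum
              + 0 * (R.map nsqf).sum + R.card * 0 := by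
          apply ms_affine
          intro r _
          ring
        have e2 : (R.map (fun r => ((z.re - c.re) ^ 2 + z.im ^ 2) * nsqf r)).sum
            = 2 * (z.re - c.re) * (R.map (fun r => (r - c.re) * nsqf r)).sum
              + (-1) * (R.map (fun r => (r - c.re) ^ 2 * nsqf r)).sum + R.card * 1 := by
          apply ms_affine
          intro r hr
          have ht := t_norm z r hz
          simp only [hnsqf_def]
          linear_combination ht
        rw [e0] at e2
        rw [hS1_def, hD_def, hQ_def]
        linarith
      rw [hS1] at hQD
      have hD0 : D ≤ 0 := by
        have hcast : (R.card : ℝ) ≤ (m : ℝ) := by exact_mod_cast hnm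
        linarith [hmain]
      have hall : ∀ r ∈ R, r = c.re := by
        intro r hr
        have hterms : ∀ x ∈ R.map (fun r => (r - c.re) ^ 2 * nsqf r), 0 ≤ x := by
          intro x hx
          obtain ⟨r', hr', rfl⟩ := Multiset.mem_map.1 hx
          exact mul_nonneg (sq_nonneg _) (hnsq_pos r' hr').le
        have hz2 := ms_zero _ hterms (hD_def ▸ hD0) ((r - c.re) ^ 2 * nsqf r)
          (Multiset.mem_map_of_mem _ hr)
        have hnz := hnsq_pos r hr
        have hsq : (r - c.re) ^ 2 = 0 := by
          rcases mul_eq_zero.1 hz2 with h | h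
          · exact h
          · exact absurd h (ne_of_gt hnz)
        have := pow_eq_zero_iff (n := 2) (by norm_num) |>.1 hsq
        linarith [sub_eq_zero.1 this]
      have hDnonneg : 0 ≤ D := by
        rw [hD_def]
        apply Multiset.sum_nonneg
        intro x hx
        obtain ⟨r', hr', rfl⟩ := Multiset.mem_map.1 hx
        exact mul_nonneg (sq_nonneg _) (hnsq_pos r' hr').le
      have hneq : (R.card : ℝ) = (m : ℝ) := by
        linarith [hmain]
      have hnm' : R.card = m := by exact_mod_cast hneq
      -- now f is a * (X - c)^m ; show T = 0
      apply hT
      have hcc : ((c.re : ℝ) : ℂ) = c := Complex.ext rfl (by simp [hc_im])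
      have hRrep : R = Multiset.replicate R.card c.re := Multiset.eq_replicate_card.2 hall
      have hfCform : f.map (algebraMap ℝ ℂ) = C a * (X - C c) ^ m := by
        rw [hfac]
        unfold pOf
        rw [hRrep, Multiset.map_replicate, Multiset.prod_replicate, hnm', hcc]
      obtain ⟨k, hk⟩ : ∃ k, m = k + 1 := by
        refine ⟨m - 1, ?_⟩
        omega
      apply Polynomial.map_injective (algebraMap ℝ ℂ) (algebraMap ℝ ℂ).injective
      rw [Polynomial.map_zero]
      apply Polynomial.funext
      intro w
      rw [eval_zero, eval_map, ← aeval_def]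
      have hmne : ((m : ℕ) : ℂ) ≠ 0 := by
        rw [hk]; exact_mod_cast Nat.succ_ne_zero k
      apply mul_left_cancel₀ hmne
      rw [mul_zero]
      have hTev : aeval w T = Fz w * aeval w f + Pz w * aeval w (derivative f) := by
        rw [hTdef, map_add, map_mul, map_mul]
        congr 2
        · rw [aeval_def, ← eval_map, hFz_eval]
        · rw [aeval_def, ← eval_map, hPz_eval]
      have hfev : aeval w f = a * (w - c) ^ m := by
        rw [aeval_def, ← eval_map, hfCform]
        simp
      have hf'ev : aeval w (derivative f) = a * m * (w - c) ^ (m - 1) := by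
        rw [aeval_def, ← eval_map, ← derivative_map, hfCform]
        rw [derivative_C_mul, derivative_pow]
        simp
        ring
      rw [hTev, hfev, hf'ev]
      have hk1 : m - 1 = k := by omega
      have hPF' : ((k : ℂ) + 1) * Pz w = (c - w) * Fz w := by
        have h5 := hPF w
        rw [hk] at h5
        push_cast at h5
        exact h5
      rw [hk1, hk]
      push_cast
      linear_combination (a * ((k : ℂ) + 1) * (w - c) ^ k) * hPF'
  -- conclude from `key`
  intro z₀ hz₀
  by_contra him
  rcases lt_trichotomy z₀.im 0 with hlt | heq | hgt
  · have hconj : aeval ((starRingEnd ℂ) z₀) T = 0 := by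
      rw [Polynomial.aeval_conj, hz₀, map_zero]
    have hgt' : 0 < ((starRingEnd ℂ) z₀).im := by
      rw [Complex.conj_im]; linarith
    exact key _ hgt' hconj
  · exact him heq
  · exact key z₀ hgt hz₀
end

section
/- Let α, β, γ, μ, ν, φ, ψ : ℕ → ℝ be real sequences and let (T_n) be a sequence of real polynomials satisfying T_{n+1}(x) = (α_n x² + β_n x + γ_n)T_n(x) + (μ_n x³ + ν_n x² + φ_n x + ψ_n)T_n′(x) for all n. For each n set m_n = deg T_n, F_n(x) = α_n x² + β_n x + γ_n and G_n(x) = (α_n + m_nμ_n)x³ + (β_n + m_nν_n)x² + (γ_n + m_nφ_n)x + m_nψ_n. Fix n₀ ∈ ℕ and suppose that for every n ≥ n₀: the leading coefficients of F_n and G_n are positive, deg F_n ≤ deg G_n ≤ deg F_n + 1, deg F_n ≤ 1, and β_nγ_nφ_n − γ_n²ν_n − β_n²ψ_n ≥ 0. If T_{n₀} is real-rooted, then T_n is real-rooted for all n ≥ n₀. -/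
open Polynomial

/-- `Fpoly a b c = a x² + b x + c`. -/
noncomputable def Fpoly (a b c : ℝ) : Polynomial ℝ := C a * X ^ 2 + C b * X + C c

/-- `Gpoly a b c d = a x³ + b x² + c x + d`. -/
noncomputable def Gpoly (a b c d : ℝ) : Polynomial ℝ :=
  C a * X ^ 3 + C b * X ^ 2 + C c * X + C d


namespace Aux


/-- weight function -/
noncomputable def wa (x y r : ℝ) : ℝ := ((x - r)^2 + y^2)⁻¹

lemma wa_pos {x y : ℝ} (hy : y ≠ 0) (r : ℝ) : 0 < wa x y r := by
  have : 0 < (x - r)^2 + y^2 := by positivity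
  exact inv_pos.mpr this

lemma wa_nonneg (x y r : ℝ) : 0 ≤ wa x y r :=
  inv_nonneg.mpr (by positivity)

noncomputable def S0 (x y : ℝ) (s : Multiset ℝ) : ℝ := (s.map (wa x y)).sum
noncomputable def S1 (x y : ℝ) (s : Multiset ℝ) : ℝ := (s.map (fun r => wa x y r * r)).sum
noncomputable def S2 (x y : ℝ) (s : Multiset ℝ) : ℝ := (s.map (fun r => wa x y r * r^2)).sum

lemma sum_nonneg_mem {s : Multiset ℝ} {g : ℝ → ℝ} (h : ∀ r ∈ s, 0 ≤ g r)
    (h0 : (s.map g).sum = 0) : ∀ r ∈ s, g r = 0 := by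
  induction s using Multiset.induction_on with
  | empty => intro r hr; simp at hr
  | cons a t ih =>
    simp only [Multiset.map_cons, Multiset.sum_cons] at h0
    have hga : 0 ≤ g a := h a (Multiset.mem_cons_self a t)
    have hgt : 0 ≤ (t.map g).sum := Multiset.sum_nonneg (by
      intro u hu
      obtain ⟨r, hr, rfl⟩ := Multiset.mem_map.mp hu
      exact h r (Multiset.mem_cons_of_mem hr))
    have hga0 : g a = 0 := by linarith
    have ht0 : (t.map g).sum = 0 := by linarith
    intro r hr
    rcases Multiset.mem_cons.mp hr with rfl | hr
    · exact hga0
    · exact ih (fun u hu => h u (Multiset.mem_cons_of_mem hu)) ht0 r hr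

lemma S0_pos {x y : ℝ} (hy : y ≠ 0) {s : Multiset ℝ} (hs : s ≠ 0) : 0 < S0 x y s := by
  obtain ⟨a, ha⟩ := Multiset.exists_mem_of_ne_zero hs
  obtain ⟨t, rfl⟩ := Multiset.exists_cons_of_mem ha
  have : 0 ≤ (t.map (wa x y)).sum := Multiset.sum_nonneg (by
    intro u hu; obtain ⟨r, _, rfl⟩ := Multiset.mem_map.mp hu; exact (wa_pos hy r).le)
  have := wa_pos hy (x := x) a
  simp only [S0, Multiset.map_cons, Multiset.sum_cons]
  linarith

lemma M1 (x y : ℝ) (s : Multiset ℝ) (t : ℝ) :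
    S2 x y s - 2*t*S1 x y s + t^2*S0 x y s = (s.map (fun r => wa x y r * (r - t)^2)).sum := by
  induction s using Multiset.induction_on with
  | empty => simp [S0, S1, S2]
  | cons a u ih =>
    simp only [S0, S1, S2, Multiset.map_cons, Multiset.sum_cons] at *
    ring_nf
    ring_nf at ih
    linarith

lemma M1_nonneg {x y : ℝ} (s : Multiset ℝ) (t : ℝ) :
    0 ≤ S2 x y s - 2*t*S1 x y s + t^2*S0 x y s := by
  rw [M1]
  exact Multiset.sum_nonneg (by
    intro u hu; obtain ⟨r, _, rfl⟩ := Multiset.mem_map.mp hu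
    exact mul_nonneg (wa_nonneg x y r) (sq_nonneg _))

lemma M2 {x y : ℝ} (hy : y ≠ 0) (s : Multiset ℝ) :
    (x^2+y^2)*S0 x y s - 2*x*S1 x y s + S2 x y s = (Multiset.card s : ℝ) := by
  induction s using Multiset.induction_on with
  | empty => simp [S0, S1, S2]
  | cons a u ih =>
    have hne : (x - a)^2 + y^2 ≠ 0 := by positivity
    have key : wa x y a * ((x-a)^2 + y^2) = 1 := inv_mul_cancel₀ hne
    simp only [S0, S1, S2, Multiset.map_cons, Multiset.sum_cons, Multiset.card_cons] at *
    push_cast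
    nlinarith [key, ih]

lemma CS (x y : ℝ) (s : Multiset ℝ) : 0 ≤ S0 x y s * S2 x y s - (S1 x y s)^2 := by
  induction s using Multiset.induction_on with
  | empty => simp [S0, S1, S2]
  | cons a u ih =>
    have h1 := M1_nonneg (x := x) (y := y) u a
    have expand : S0 x y (a ::ₘ u) = wa x y a + S0 x y u ∧
        S1 x y (a ::ₘ u) = wa x y a * a + S1 x y u ∧
        S2 x y (a ::ₘ u) = wa x y a * a^2 + S2 x y u := by
      refine ⟨?_, ?_, ?_⟩ <;> simp [S0, S1, S2]
    obtain ⟨e0, e1, e2⟩ := expand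
    rw [e0, e1, e2]
    have hw : 0 ≤ wa x y a := wa_nonneg x y a
    nlinarith [ih, h1, hw]

lemma eq_of_dd_zero {x y : ℝ} (hy : y ≠ 0) {s : Multiset ℝ} (hs : s ≠ 0)
    (hdd : S0 x y s * S2 x y s - (S1 x y s)^2 = 0) :
    ∀ r ∈ s, r = S1 x y s / S0 x y s := by
  set t := S1 x y s / S0 x y s with ht
  have h0 : 0 < S0 x y s := S0_pos hy hs
  have h1t : S1 x y s = t * S0 x y s := by rw [ht, div_mul_cancel₀ _ h0.ne']
  have hz : (s.map (fun r => wa x y r * (r - t)^2)).sum = 0 := by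
    rw [← M1]
    have : S2 x y s = t^2 * S0 x y s := by
      have := hdd
      rw [h1t] at this
      have h0ne : S0 x y s ≠ 0 := ne_of_gt h0
      nlinarith [this]
    rw [this, h1t]; ring
  intro r hr
  have := sum_nonneg_mem (s := s) (g := fun r => wa x y r * (r - t)^2)
    (by intro u hu; exact mul_nonneg (wa_nonneg x y u) (sq_nonneg _)) hz r hr
  have hwr := wa_pos hy (x := x) r
  have h2 : (r - t)^2 = 0 := (mul_eq_zero.mp this).resolve_left (ne_of_gt hwr)
  have : r - t = 0 := by nlinarith [h2]
  linarith



/-- log derivative of a product of linear factors -/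
lemma prod_deriv (z : ℂ) : ∀ (s : Multiset ℂ), (∀ r ∈ s, r ≠ z) →
    eval z (s.map (fun r => X - C r)).prod ≠ 0 ∧
    eval z (derivative (s.map (fun r => X - C r)).prod) =
      eval z (s.map (fun r => X - C r)).prod * (s.map (fun r => (z - r)⁻¹)).sum := by
  intro s
  induction s using Multiset.induction_on with
  | empty => intro _; simp
  | cons a t ih =>
    intro h
    have ha : a ≠ z := h a (Multiset.mem_cons_self a t)
    obtain ⟨h1, h2⟩ := ih (fun r hr => h r (Multiset.mem_cons_of_mem hr))
    have hza : z - a ≠ 0 := sub_ne_zero.mpr (Ne.symm ha)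
    constructor
    · simp only [Multiset.map_cons, Multiset.prod_cons, eval_mul, eval_sub, eval_X, eval_C]
      exact mul_ne_zero hza h1
    · simp only [Multiset.map_cons, Multiset.prod_cons, Multiset.sum_cons, derivative_mul,
        derivative_sub, derivative_X, derivative_C, sub_zero, one_mul, eval_add, eval_mul,
        eval_sub, eval_X, eval_C, h2]
      field_simp

/-- value of ∑ 1/(z-r) for real r -/
lemma inv_real_sub (z : ℂ) (r : ℝ) (hy : z.im ≠ 0) :
    (z - (r:ℂ))⁻¹ = Complex.ofReal ((z.re - r) * wa z.re z.im r)
      - Complex.ofReal (z.im * wa z.re z.im r) * Complex.I := by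
  have hw : ((z.re - r)^2 + z.im^2) * wa z.re z.im r = 1 := mul_inv_cancel₀ (by positivity)
  have hwC : ((z.re:ℂ) - r)^2 * (wa z.re z.im r : ℂ) + (z.im:ℂ)^2 * (wa z.re z.im r : ℂ) = 1 := by
    have := congrArg (Complex.ofReal) hw
    push_cast at this
    linear_combination this
  have hz : z = (z.re:ℂ) + (z.im:ℂ) * Complex.I := (Complex.re_add_im z).symm
  have hmul : (z - (r:ℂ)) * (Complex.ofReal ((z.re - r) * wa z.re z.im r)
      - Complex.ofReal (z.im * wa z.re z.im r) * Complex.I) = 1 := by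
    push_cast
    linear_combination (((z.re:ℂ) - r) * (wa z.re z.im r : ℂ)
        - (z.im:ℂ) * (wa z.re z.im r : ℂ) * Complex.I) * hz
      + (-((z.im:ℂ)^2 * (wa z.re z.im r : ℂ))) * Complex.I_sq + hwC
  exact inv_eq_of_mul_eq_one_right hmul

lemma Lsum_val {z : ℂ} (hy : z.im ≠ 0) (s : Multiset ℝ) :
    ((s.map (fun r : ℝ => (z - (r:ℂ))⁻¹)).sum : ℂ)
      = Complex.ofReal (z.re * S0 z.re z.im s - S1 z.re z.im s)
        - Complex.ofReal (z.im * S0 z.re z.im s) * Complex.I := by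
  induction s using Multiset.induction_on with
  | empty => simp [S0, S1]
  | cons a t ih =>
    simp only [Multiset.map_cons, Multiset.sum_cons, ih, inv_real_sub z a hy]
    have e0 : S0 z.re z.im (a ::ₘ t) = wa z.re z.im a + S0 z.re z.im t := by simp [S0]
    have e1 : S1 z.re z.im (a ::ₘ t) = wa z.re z.im a * a + S1 z.re z.im t := by simp [S1]
    rw [e0, e1]
    push_cast
    ring



set_option maxHeartbeats 1600000 in
/-- The core real-algebra lemma. -/
lemma realkey (β γ ν φ ψ M x y S0 S1 S2 : ℝ)
    (hy : 0 < y) (hS0 : 0 < S0)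
    (hβ : 0 ≤ β) (hβγ : β = 0 → 0 < γ)
    (hq2 : 0 ≤ β + M*ν) (hq2z : β = 0 → β + M*ν = 0)
    (hq1C : β = 0 → 0 ≤ γ + M*φ)
    (hstar : 0 ≤ β*γ*(γ + M*φ) - γ^2*(β + M*ν) - β^2*(M*ψ))
    (hdd0 : 0 ≤ S0*S2 - S1^2)
    (hm2 : (x^2+y^2)*S0 - 2*x*S1 + S2 = M)
    (hE1 : (β*x+γ) + (ν*(x^2-y^2)+φ*x+ψ)*(x*S0-S1) - ((2*ν*x+φ)*y)*(-(y*S0)) = 0)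
    (hE2 : (β*y) + (ν*(x^2-y^2)+φ*x+ψ)*(-(y*S0)) + ((2*ν*x+φ)*y)*(x*S0-S1) = 0) :
    β + M*ν = 0 ∧ (γ + M*φ)*S0 = β*S1 ∧ (M*ψ)*S0 = γ*S1 ∧ S0*S2 - S1^2 = 0 := by
  set q2 : ℝ := β + M*ν with hq2d
  set q1 : ℝ := γ + M*φ with hq1d
  set q0 : ℝ := M*ψ with hq0d
  set K : ℝ := β*q2*(x^2+y^2) + 2*γ*q2*x + γ*q1 - β*q0 with hKd
  set W1 : ℝ := (q2*(x^2-y^2)+q1*x+q0)*S0 - (β*x+γ)*S1 with hW1d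
  set W2 : ℝ := ((2*q2*x+q1)*y)*S0 - (β*y)*S1 with hW2d
  set dd : ℝ := S0*S2 - S1^2 with hddd
  clear_value q2 q1 q0 K W1 W2 dd
  -- K is nonnegative
  have hK : 0 ≤ K := by
    rcases eq_or_lt_of_le hβ with hb0 | hbpos
    · have hz : q2 = 0 := hq2z hb0.symm
      have hq1' : 0 ≤ q1 := hq1C hb0.symm
      have hg := hβγ hb0.symm
      rw [hKd, hz, ← hb0]
      have := mul_nonneg hg.le hq1'
      nlinarith [this]
    · have hbK : β*K = q2*(β*x+γ)^2 + β^2*q2*y^2 + (β*γ*q1 - γ^2*q2 - β^2*q0) := by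
        rw [hKd]; ring
      have h0 : 0 ≤ β*K := by
        rw [hbK]
        have h1 := mul_nonneg hq2 (sq_nonneg (β*x+γ))
        have h2 := mul_nonneg (mul_nonneg (sq_nonneg β) hq2) (sq_nonneg y)
        nlinarith [h1, h2, hstar]
      nlinarith [h0, hbpos]
  have hid : y*(K*dd + W1^2 + W2^2) = 0 := by
    rw [hKd, hW1d, hW2d, hddd, hq2d, hq1d, hq0d]
    linear_combination (M*((2*(β + M*ν)*x+(γ + M*φ))*y*S0 - β*y*S1))*hE1
      - (M*(((β + M*ν)*(x^2-y^2)+(γ + M*φ)*x+(M*ψ))*S0 - (β*x+γ)*S1))*hE2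
      + (y*(β*(β + M*ν)*(x^2+y^2) + 2*γ*(β + M*ν)*x + γ*(γ + M*φ) - β*(M*ψ))*S0)*hm2
  have hRe : (β*x+γ)*dd + (x*S0-S1)*W1 - (-(y*S0))*W2 = 0 := by
    rw [hW1d, hW2d, hddd, hq2d, hq1d, hq0d]
    linear_combination (S0*M)*hE1 + ((β*x+γ)*S0)*hm2
  have hIm : (β*y)*dd + (-(y*S0))*W1 + (x*S0-S1)*W2 = 0 := by
    rw [hW1d, hW2d, hddd, hq2d, hq1d, hq0d]
    linear_combination (S0*M)*hE2 + ((β*y)*S0)*hm2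
  have hsum : K*dd + W1^2 + W2^2 = 0 := by
    rcases mul_eq_zero.mp hid with h | h
    · exact absurd h hy.ne'
    · exact h
  clear hE1 hE2 hm2 hid
  have hKdd : 0 ≤ K*dd := mul_nonneg hK hdd0
  have hW1 : W1 = 0 := by nlinarith [sq_nonneg W1, sq_nonneg W2, hKdd, hsum]
  have hW2 : W2 = 0 := by nlinarith [sq_nonneg W1, sq_nonneg W2, hKdd, hsum]
  -- dd = 0
  rw [hW1, hW2] at hRe hIm
  have hRe' : (β*x+γ)*dd = 0 := by linarith [hRe]
  have hIm' : (β*y)*dd = 0 := by linarith [hIm]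
  have hdd : dd = 0 := by
    rcases eq_or_lt_of_le hβ with hb0 | hbpos
    · have hg := hβγ hb0.symm
      rcases mul_eq_zero.mp hRe' with h | h
      · rw [← hb0] at h; exfalso; nlinarith [hg, h]
      · exact h
    · rcases mul_eq_zero.mp hIm' with h | h
      · nlinarith [hbpos, hy, h]
      · exact h
  -- q2 = 0
  have hR2 : (2*q2*x+q1)*S0 = β*S1 := by
    have h : y * ((2*q2*x+q1)*S0 - β*S1) = 0 := by linear_combination hW2 - hW2d
    rcases mul_eq_zero.mp h with h' | h'
    · exact absurd h' hy.ne'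
    · linarith
  have hsub2 : q0*S0 - γ*S1 = q2*(x^2+y^2)*S0 := by linear_combination hW1 - hW1d - x*hR2
  have hΔ : 0 ≤ (q1*S0 - β*S1)^2 - 4*q2*(q0*S0 - γ*S1)*S0 := by
    rcases eq_or_lt_of_le hβ with hb0 | hbpos
    · have hz : q2 = 0 := hq2z hb0.symm
      rw [hz]
      nlinarith [sq_nonneg (q1*S0 - β*S1)]
    · have hident : β^2*((q1*S0 - β*S1)^2 - 4*q2*(q0*S0 - γ*S1)*S0)
          = (β^2*S1 - (β*q1 - 2*q2*γ)*S0)^2 + 4*q2*(β*γ*q1 - γ^2*q2 - β^2*q0)*S0^2 := by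
        ring
      have h2 : 0 ≤ β^2*((q1*S0 - β*S1)^2 - 4*q2*(q0*S0 - γ*S1)*S0) := by
        rw [hident]
        have hB := mul_nonneg (mul_nonneg (mul_nonneg (by norm_num : (0:ℝ) ≤ 4) hq2) hstar) (sq_nonneg S0)
        have hA := sq_nonneg (β^2*S1 - (β*q1 - 2*q2*γ)*S0)
        nlinarith [hA, hB]
      nlinarith [h2, mul_pos hbpos hbpos]
  have hsub1 : q1*S0 - β*S1 = -(2*q2*x*S0) := by linear_combination hR2
  have hq2zero : q2 = 0 := by
    have hval : (q1*S0 - β*S1)^2 - 4*q2*(q0*S0 - γ*S1)*S0 = -4*(q2*y*S0)^2 := by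
      rw [hsub1, hsub2]; ring
    have hle : (q2*y*S0)^2 ≤ 0 := by nlinarith [hΔ, hval]
    have : q2*y*S0 = 0 := by nlinarith [sq_nonneg (q2*y*S0), hle]
    rcases mul_eq_zero.mp this with h | h
    · rcases mul_eq_zero.mp h with h' | h'
      · exact h'
      · exact absurd h' hy.ne'
    · exact absurd h hS0.ne'
  refine ⟨hq2zero, ?_, ?_, hdd⟩
  · rw [hq2zero] at hR2; linarith [hR2]
  · rw [hq2zero] at hsub2; linarith [hsub2]

set_option maxHeartbeats 1000000 in
lemma key (β γ ν φ ψ : ℝ) (m : ℕ) (hm : 1 ≤ m) (T : ℝ[X]) (hTne : T ≠ 0)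
    (hroots : ∀ w : ℂ, aeval w T = 0 → w.im = 0)
    (hdeg : T.natDegree = m)
    (hβ : 0 ≤ β) (hβγ : β = 0 → 0 < γ)
    (hq2 : 0 ≤ β + (m:ℝ)*ν) (hq2z : β = 0 → β + (m:ℝ)*ν = 0)
    (hq1C : β = 0 → 0 ≤ γ + (m:ℝ)*φ)
    (hstar : 0 ≤ β*γ*(γ + (m:ℝ)*φ) - γ^2*(β + (m:ℝ)*ν) - β^2*((m:ℝ)*ψ))
    (z : ℂ) (hz : 0 < z.im)
    (hroot : aeval z ((C β * X + C γ) * T + (C ν * X^2 + C φ * X + C ψ) * derivative T) = 0) :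
    (C β * X + C γ) * T + (C ν * X^2 + C φ * X + C ψ) * derivative T = 0 := by
  have hy : z.im ≠ 0 := ne_of_gt hz
  set Tc : ℂ[X] := T.map (algebraMap ℝ ℂ) with hTc
  have hTcne : Tc ≠ 0 := Polynomial.map_ne_zero hTne
  have hsplits : Tc.Splits := IsAlgClosed.splits Tc
  have hcard : Multiset.card Tc.roots = m := by
    rw [splits_iff_card_roots.mp hsplits, hTc, natDegree_map, hdeg]
  have hrim : ∀ r ∈ Tc.roots, r.im = 0 := by
    intro r hr
    apply hroots
    have := isRoot_of_mem_roots hr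
    rw [IsRoot, hTc, eval_map, ← aeval_def] at this
    exact this
  set s : Multiset ℝ := Tc.roots.map Complex.re with hs
  have hsrepr : Tc.roots = s.map (fun r : ℝ => (r:ℂ)) := by
    rw [hs, Multiset.map_map]
    have : Tc.roots.map ((fun r : ℝ => (r:ℂ)) ∘ Complex.re) = Tc.roots.map id :=
      Multiset.map_congr rfl (fun r hr => by
        apply Complex.ext
        · simp
        · simp [hrim r hr])
    rw [this, Multiset.map_id]
  have hnotroot : ∀ r ∈ Tc.roots, r ≠ z := by
    intro r hr h
    rw [h] at hr
    exact hy ((hrim z hr))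
  obtain ⟨hPne, hPder⟩ := prod_deriv z Tc.roots hnotroot
  have hfact : Tc = C Tc.leadingCoeff * (Tc.roots.map (fun a => X - C a)).prod :=
    hsplits.eq_prod_roots
  have hlc : Tc.leadingCoeff ≠ 0 := leadingCoeff_ne_zero.mpr hTcne
  have hTz : aeval z T = Tc.leadingCoeff * eval z (Tc.roots.map (fun a => X - C a)).prod := by
    rw [aeval_def, ← eval_map, ← hTc]
    conv_lhs => rw [hfact]
    rw [eval_mul, eval_C]
  have hTzne : aeval z T ≠ 0 := by
    rw [hTz]; exact mul_ne_zero hlc hPne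
  set Lsum : ℂ := (Tc.roots.map (fun r => (z - r)⁻¹)).sum with hLs
  have hT'z : aeval z (derivative T) = (aeval z T) * Lsum := by
    rw [aeval_def, ← eval_map, ← derivative_map, ← hTc]
    conv_lhs => rw [hfact]
    rw [derivative_C_mul, eval_mul, eval_C, hPder, hTz]
    ring
  -- the scalar equation
  have hE : ((β:ℂ)*z + (γ:ℂ)) + ((ν:ℂ)*z^2 + (φ:ℂ)*z + (ψ:ℂ)) * Lsum = 0 := by
    have hFz : aeval z (C β * X + C γ) = (β:ℂ)*z + (γ:ℂ) := by simp
    have hGz : aeval z (C ν * X^2 + C φ * X + C ψ) = (ν:ℂ)*z^2 + (φ:ℂ)*z + (ψ:ℂ) := by simp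
    rw [map_add, map_mul, map_mul, hT'z, hFz, hGz] at hroot
    have h2 : aeval z T * ((((β:ℂ)*z + (γ:ℂ)) + ((ν:ℂ)*z^2 + (φ:ℂ)*z + (ψ:ℂ)) * Lsum)) = 0 := by
      linear_combination hroot
    rcases mul_eq_zero.mp h2 with h | h
    · exact absurd h hTzne
    · exact h
  set x := z.re with hxd
  set y := z.im with hyd
  set s0 := S0 x y s with hs0d
  set s1 := S1 x y s with hs1d
  set s2 := S2 x y s with hs2d
  have hLval : Lsum = Complex.ofReal (x * s0 - s1) - Complex.ofReal (y * s0) * Complex.I := by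
    rw [hLs, hsrepr, Multiset.map_map]
    exact Lsum_val hy s
  rw [hLval] at hE
  have hEre := congrArg Complex.re hE
  have hEim := congrArg Complex.im hE
  simp only [Complex.add_re, Complex.add_im, Complex.mul_re, Complex.mul_im, Complex.sub_re,
    Complex.sub_im, Complex.ofReal_re, Complex.ofReal_im, Complex.I_re, Complex.I_im,
    Complex.zero_re, Complex.zero_im, pow_two, ← hxd, ← hyd] at hEre hEim
  have hE1 : (β*x+γ) + (ν*(x^2-y^2)+φ*x+ψ)*(x*s0-s1) - ((2*ν*x+φ)*y)*(-(y*s0)) = 0 := by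
    linear_combination hEre
  have hE2 : (β*y) + (ν*(x^2-y^2)+φ*x+ψ)*(-(y*s0)) + ((2*ν*x+φ)*y)*(x*s0-s1) = 0 := by
    linear_combination hEim
  have hsne : s ≠ 0 := by
    intro h
    have hc : Multiset.card s = m := by rw [hs, Multiset.card_map, hcard]
    rw [h] at hc
    simp at hc
    omega
  have hS0pos : 0 < s0 := S0_pos hy hsne
  have hs_card : Multiset.card s = m := by rw [hs, Multiset.card_map, hcard]
  have hm2 : (x^2+y^2)*s0 - 2*x*s1 + s2 = (m:ℝ) := by
    have h := M2 (x := x) hy s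
    rw [hs_card] at h
    exact h
  obtain ⟨hq2zero, hq1e, hq0e, hdd⟩ := realkey β γ ν φ ψ (m:ℝ) x y s0 s1 s2 hz hS0pos
    hβ hβγ hq2 hq2z hq1C hstar (CS x y s) hm2 hE1 hE2
  -- all roots are equal to t
  set t : ℝ := s1 / s0 with ht
  have hallt : ∀ r ∈ s, r = t := eq_of_dd_zero hy hsne hdd
  have hsrep : s = Multiset.replicate m t := Multiset.eq_replicate.mpr ⟨hs_card, hallt⟩
  -- polynomial structure of T
  have hTc_eq : Tc = C Tc.leadingCoeff * (X - C (t:ℂ))^m := by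
    conv_lhs => rw [hfact]
    rw [hsrepr, hsrep, Multiset.map_replicate, Multiset.map_replicate,
      Multiset.prod_replicate]
  have hlcT : Tc.leadingCoeff = ((T.leadingCoeff : ℝ) : ℂ) := by
    rw [hTc, leadingCoeff_map]
    rfl
  have hTeq : T = C T.leadingCoeff * (X - C t)^m := by
    apply Polynomial.map_injective (algebraMap ℝ ℂ) (RingHom.injective _)
    rw [← hTc, hTc_eq, hlcT]
    simp [Polynomial.map_pow]
  -- scalar relations
  have hs0ne : s0 ≠ 0 := ne_of_gt hS0pos
  have e2 : (m:ℝ)*ν = -β := by linarith [hq2zero]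
  have e3 : (m:ℝ)*φ = β*t - γ := by
    have : (γ + (m:ℝ)*φ)*s0 = β*s1 := hq1e
    have htt : t*s0 = s1 := by rw [ht, div_mul_cancel₀ _ hs0ne]
    nlinarith [this, htt, hs0ne]
  have e4 : (m:ℝ)*ψ = γ*t := by
    have htt : t*s0 = s1 := by rw [ht, div_mul_cancel₀ _ hs0ne]
    have := hq0e
    have h5 : ((m:ℝ)*ψ - γ*t)*s0 = 0 := by linear_combination this - γ*htt
    rcases mul_eq_zero.mp h5 with h | h
    · linarith
    · exact absurd h hs0ne
  -- polynomial identities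
  have hGrawm : C (m:ℝ) * (C ν * X^2 + C φ * X + C ψ) = -((X - C t) * (C β * X + C γ)) := by
    have lhs_eq : C (m:ℝ) * (C ν * X^2 + C φ * X + C ψ)
        = C ((m:ℝ)*ν) * X^2 + C ((m:ℝ)*φ) * X + C ((m:ℝ)*ψ) := by
      simp only [C_mul]; ring
    rw [lhs_eq, e2, e3, e4]
    simp only [C_neg, C_sub, C_mul]
    ring
  obtain ⟨k, rfl⟩ : ∃ k, m = k + 1 := ⟨m - 1, (Nat.succ_pred_eq_of_pos hm).symm⟩
  have hmT : C ((k+1:ℕ):ℝ) * T - (X - C t) * derivative T = 0 := by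
    rw [hTeq]
    rw [derivative_C_mul, derivative_pow]
    simp only [derivative_sub, derivative_X, derivative_C, sub_zero, mul_one,
      Nat.add_sub_cancel]
    push_cast
    ring
  have hfin : C ((k+1:ℕ):ℝ) * ((C β * X + C γ) * T + (C ν * X^2 + C φ * X + C ψ) * derivative T)
      = 0 := by
    linear_combination (derivative T) * hGrawm + (C β * X + C γ) * hmT
  rcases mul_eq_zero.mp hfin with h | h
  · exfalso
    rw [C_eq_zero] at h
    have : ((k:ℝ)+1) ≠ 0 := by positivity
    push_cast at h
    exact this h
  · exact h

lemma Fpoly0 (b c : ℝ) : Fpoly 0 b c = C b * X + C c := by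
  simp only [Fpoly, map_zero, zero_mul, zero_add]

lemma Fpoly00 (c : ℝ) : Fpoly 0 0 c = C c := by
  simp only [Fpoly, map_zero, zero_mul, zero_add]

lemma Gpoly0 (b c d : ℝ) : Gpoly 0 b c d = C b * X ^ 2 + C c * X + C d := by
  simp only [Gpoly, map_zero, zero_mul, zero_add]

end Aux

theorem stmt_1 (α β γ μ ν φ ψ : ℕ → ℝ) (T : ℕ → Polynomial ℝ)
    (hrec : ∀ n, T (n + 1) =
      Fpoly (α n) (β n) (γ n) * T n
        + Gpoly (μ n) (ν n) (φ n) (ψ n) * derivative (T n))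
    (n₀ : ℕ)
    (hFlead : ∀ n, n₀ ≤ n → 0 < (Fpoly (α n) (β n) (γ n)).leadingCoeff)
    (hGlead : ∀ n, n₀ ≤ n → 0 <
      (Gpoly (α n + ((T n).natDegree : ℝ) * μ n) (β n + ((T n).natDegree : ℝ) * ν n)
        (γ n + ((T n).natDegree : ℝ) * φ n) (((T n).natDegree : ℝ) * ψ n)).leadingCoeff)
    (hdegFG : ∀ n, n₀ ≤ n → (Fpoly (α n) (β n) (γ n)).natDegree ≤
      (Gpoly (α n + ((T n).natDegree : ℝ) * μ n) (β n + ((T n).natDegree : ℝ) * ν n)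
        (γ n + ((T n).natDegree : ℝ) * φ n) (((T n).natDegree : ℝ) * ψ n)).natDegree)
    (hdegGF : ∀ n, n₀ ≤ n →
      (Gpoly (α n + ((T n).natDegree : ℝ) * μ n) (β n + ((T n).natDegree : ℝ) * ν n)
        (γ n + ((T n).natDegree : ℝ) * φ n) (((T n).natDegree : ℝ) * ψ n)).natDegree ≤
      (Fpoly (α n) (β n) (γ n)).natDegree + 1)
    (hdegF : ∀ n, n₀ ≤ n → (Fpoly (α n) (β n) (γ n)).natDegree ≤ 1)
    (hineq : ∀ n, n₀ ≤ n →
      0 ≤ β n * γ n * φ n - (γ n) ^ 2 * ν n - (β n) ^ 2 * ψ n)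
    (hT0 : RealRooted (T n₀)) :
    ∀ n, n₀ ≤ n → RealRooted (T n) := by
  intro n hn
  induction n, hn using Nat.le_induction with
  | base => exact hT0
  | succ n hn ih =>
    set m : ℕ := (T n).natDegree with hmdef
    -- α n = 0
    have hα : α n = 0 := by
      by_contra hne
      have h2 : (Fpoly (α n) (β n) (γ n)).natDegree = 2 := by
        rw [Fpoly]; exact natDegree_quadratic hne
      have := hdegF n hn
      omega
    -- basic facts about F
    have hFl := hFlead n hn
    rw [hα, Aux.Fpoly0] at hFl
    have hβ0 : 0 ≤ β n := by
      by_cases hb : β n = 0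
      · rw [hb]
      · rw [leadingCoeff_linear hb] at hFl
        exact hFl.le
    have hβγ : β n = 0 → 0 < γ n := by
      intro hb
      rw [hb] at hFl
      simp only [map_zero, zero_mul, zero_add, leadingCoeff_C] at hFl
      exact hFl
    -- (m : ℝ)*μ n = 0
    have hμm : (m:ℝ) * μ n = 0 := by
      by_contra hne
      have h0 : α n + (m:ℝ)*μ n ≠ 0 := by rw [hα]; simpa using hne
      have h3 : (Gpoly (α n + (m:ℝ)*μ n) (β n + (m:ℝ)*ν n) (γ n + (m:ℝ)*φ n)
          ((m:ℝ)*ψ n)).natDegree = 3 := by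
        rw [Gpoly]; exact natDegree_cubic h0
      have h4 := hdegGF n hn
      have h5 := hdegF n hn
      rw [← hmdef] at h4
      omega
    have hG00 : α n + (m:ℝ)*μ n = 0 := by rw [hα, zero_add, hμm]
    -- rewrite G hypotheses
    have hGl := hGlead n hn
    have hdGF := hdegGF n hn
    rw [← hmdef, hG00, Aux.Gpoly0] at hGl hdGF
    -- facts about G
    have hq2 : 0 ≤ β n + (m:ℝ)*ν n := by
      by_cases h : β n + (m:ℝ)*ν n = 0
      · rw [h]
      · rw [leadingCoeff_quadratic h] at hGl
        exact hGl.le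
    have hq2z : β n = 0 → β n + (m:ℝ)*ν n = 0 := by
      intro hb
      by_contra h
      have h2 : (C (β n + (m:ℝ)*ν n) * X ^ 2 + C (γ n + (m:ℝ)*φ n) * X
          + C ((m:ℝ)*ψ n)).natDegree = 2 := natDegree_quadratic h
      have hF0 : (Fpoly (α n) (β n) (γ n)).natDegree = 0 := by
        rw [hα, hb, Aux.Fpoly00, natDegree_C]
      omega
    have hq1C : β n = 0 → 0 ≤ γ n + (m:ℝ)*φ n := by
      intro hb
      have hz2 := hq2z hb
      rw [hz2] at hGl
      simp only [map_zero, zero_mul, zero_add] at hGl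
      by_cases h : γ n + (m:ℝ)*φ n = 0
      · rw [h]
      · rw [leadingCoeff_linear h] at hGl
        exact hGl.le
    have hstar : 0 ≤ β n * γ n * (γ n + (m:ℝ)*φ n) - (γ n)^2*(β n + (m:ℝ)*ν n)
        - (β n)^2*((m:ℝ)*ψ n) := by
      have h1 := hineq n hn
      have h2 : 0 ≤ (m:ℝ) * (β n * γ n * φ n - (γ n)^2*ν n - (β n)^2*ψ n) :=
        mul_nonneg (Nat.cast_nonneg m) h1
      nlinarith [h2]
    -- case T n = 0
    by_cases hTn0 : T n = 0
    · left
      rw [hrec n, hTn0]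
      simp
    -- case m = 0
    by_cases hm0 : m = 0
    · right
      intro w hw
      have hc : T n = C ((T n).coeff 0) := eq_C_of_natDegree_eq_zero hm0
      have hcne : (T n).coeff 0 ≠ 0 := by
        intro h
        rw [h, map_zero] at hc
        exact hTn0 hc
      rw [hrec n, hc] at hw
      simp only [derivative_C, mul_zero, add_zero, map_mul, aeval_C] at hw
      rcases mul_eq_zero.mp hw with h | h
      · rw [hα, Aux.Fpoly0] at h
        simp only [map_add, map_mul, aeval_C, aeval_X] at h
        by_cases hb : β n = 0
        · exfalso
          rw [hb] at h
          simp only [map_zero, zero_mul, zero_add] at h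
          have : γ n = 0 := by
            rw [Complex.coe_algebraMap] at h
            exact_mod_cast h
          exact (hβγ hb).ne' this
        · have him := congrArg Complex.im h
          simp only [Complex.add_im, Complex.mul_im, Complex.zero_im] at him
          have hre : (algebraMap ℝ ℂ (β n)).im = 0 := by simp
          have hre2 : (algebraMap ℝ ℂ (β n)).re = β n := by simp
          have hre3 : (algebraMap ℝ ℂ (γ n)).im = 0 := by simp
          rw [hre, hre2, hre3] at him
          have : β n * w.im = 0 := by linarith
          rcases mul_eq_zero.mp this with h' | h'
          · exact absurd h' hb
          · exact h'
      · exfalso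
        rw [Complex.coe_algebraMap] at h
        exact hcne (by exact_mod_cast h)
    -- main case : m ≥ 1
    have hm1 : 1 ≤ m := Nat.one_le_iff_ne_zero.mpr hm0
    have hμ0 : μ n = 0 := by
      rcases mul_eq_zero.mp hμm with h | h
      · exfalso
        have : (m:ℝ) ≠ 0 := Nat.cast_ne_zero.mpr hm0
        exact this h
      · exact h
    rcases ih with h0 | hroots
    · exact absurd h0 hTn0
    have hstep : T (n+1) = (C (β n) * X + C (γ n)) * T n
        + (C (ν n) * X^2 + C (φ n) * X + C (ψ n)) * derivative (T n) := by
      rw [hrec n, hα, hμ0, Aux.Fpoly0]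
      congr 1
      rw [Gpoly]
      simp only [map_zero, zero_mul, zero_add]
    by_cases hTn1 : T (n+1) = 0
    · left; exact hTn1
    right
    intro w hw
    by_contra him
    -- get a root in the upper half plane
    have hzex : ∃ z : ℂ, 0 < z.im ∧ aeval z (T (n+1)) = 0 := by
      rcases lt_or_gt_of_ne him with hlt | hgt
      · refine ⟨(starRingEnd ℂ) w, ?_, ?_⟩
        · simpa using by linarith [hlt]
        · rw [Polynomial.aeval_conj, hw, map_zero]
      · exact ⟨w, hgt, hw⟩
    obtain ⟨z, hz, hzr⟩ := hzex
    rw [hstep] at hzr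
    have hkey := Aux.key (β n) (γ n) (ν n) (φ n) (ψ n) m hm1 (T n) hTn0 hroots rfl
      hβ0 hβγ hq2 hq2z hq1C hstar z hz hzr
    rw [← hstep] at hkey
    exact hTn1 hkey
end

section
/- Let α, β, γ, μ, φ : ℕ → ℝ be real sequences and let (T_n) be a sequence of real polynomials satisfying T_{n+1}(x) = (α_n x² + β_n x + γ_n)T_n(x) + (μ_n x³ + φ_n x)T_n′(x) for all n. For each n set m_n = deg T_n. Fix n₀ ∈ ℕ and suppose that for every n ≥ n₀ we have β_n ≥ 0, γ_n ≥ 0, φ_n ≥ 0 and α_n ≥ −m_nμ_n ≥ 0. If T_{n₀} is Hurwitz stable, then T_n is Hurwitz stable for all n ≥ n₀. -/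
open Polynomial Complex

/-- A real polynomial is Hurwitz stable if it is identically zero or it does not
vanish on the open right half-plane. -/
def HurwitzStable (f : Polynomial ℝ) : Prop :=
  f = 0 ∨ ∀ z : ℂ, 0 < z.re → aeval z f ≠ 0

lemma re_msum (s : Multiset ℂ) : s.sum.re = (s.map Complex.re).sum := by
  induction s using Multiset.induction with
  | empty => simp
  | cons r s ih => simp [ih]

lemma lemA {z r : ℂ} (hz : 0 < z.re) (hr : r.re ≤ 0) : 0 ≤ ((z - r)⁻¹).re := by
  rw [Complex.inv_re]
  apply div_nonneg _ (Complex.normSq_nonneg _)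
  simp only [Complex.sub_re]; linarith

lemma sub_ne {z r : ℂ} (hz : 0 < z.re) (hr : r.re ≤ 0) : z - r ≠ 0 := by
  intro h
  have := sub_eq_zero.mp h
  rw [this] at hz; linarith

lemma lemB {z r : ℂ} (hz : 0 < z.re) (hr : r.re ≤ 0) : (z ^ 2 * (z - r)⁻¹).re ≤ z.re := by
  have hne := sub_ne hz hr
  have key : z ^ 2 * (z - r)⁻¹ = z + (r * z) / (z - r) := by field_simp; ring
  rw [key, Complex.add_re]
  have h2 : ((r * z) / (z - r)).re ≤ 0 := by
    rw [Complex.div_re, ← add_div]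
    apply div_nonpos_of_nonpos_of_nonneg _ (Complex.normSq_nonneg _)
    have : (r * z).re * (z - r).re + (r * z).im * (z - r).im
        = r.re * Complex.normSq z - z.re * Complex.normSq r := by
      simp [Complex.mul_re, Complex.mul_im, Complex.normSq_apply]; ring
    rw [this]
    nlinarith [Complex.normSq_nonneg z, Complex.normSq_nonneg r]
  linarith

lemma logderiv (z : ℂ) : ∀ (s : Multiset ℂ), (∀ r ∈ s, z - r ≠ 0) →
    eval z (derivative (s.map fun r => X - C r).prod)
      = eval z (s.map fun r => X - C r).prod * (s.map fun r => (z - r)⁻¹).sum := by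
  intro s
  induction s using Multiset.induction with
  | empty => simp
  | cons r s ih =>
    intro h
    have hzr := h r (Multiset.mem_cons_self r s)
    simp only [Multiset.map_cons, Multiset.prod_cons, Multiset.sum_cons, derivative_mul,
      eval_add, eval_mul, derivative_sub, derivative_X, derivative_C, sub_zero, eval_one,
      eval_sub, eval_X, eval_C]
    rw [ih (fun a ha => h a (Multiset.mem_cons_of_mem ha))]
    field_simp

lemma step (a b c u v : ℝ) (T : Polynomial ℝ)
    (hb : 0 ≤ b) (hc : 0 ≤ c) (hv : 0 ≤ v)
    (hau : -((T.natDegree : ℝ) * u) ≤ a) (hu : 0 ≤ -((T.natDegree : ℝ) * u))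
    (hT : HurwitzStable T) :
    HurwitzStable ((C a * X ^ 2 + C b * X + C c) * T + (C u * X ^ 3 + C v * X) * derivative T) := by
  rcases hT with h0 | hT
  · left; simp [h0]
  have hT0 : T ≠ 0 := fun h => hT 1 (by norm_num) (by simp [h])
  set P : Polynomial ℂ := T.map (algebraMap ℝ ℂ) with hPdef
  have hP0 : P ≠ 0 := fun h => hT0 ((Polynomial.map_eq_zero_iff (algebraMap ℝ ℂ).injective).mp h)
  set s : Multiset ℂ := P.roots with hs
  have haev : ∀ w : ℂ, aeval w T = P.eval w := fun w => by rw [aeval_def, ← eval_map]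
  have hre : ∀ r ∈ s, r.re ≤ 0 := by
    intro r hr
    by_contra hgt
    push_neg at hgt
    exact hT r hgt (by rw [haev]; exact Polynomial.isRoot_of_mem_roots hr)
  have hcard : T.natDegree = Multiset.card s :=
    by rw [← Polynomial.natDegree_map (algebraMap ℝ ℂ)]; exact (IsAlgClosed.splits P).natDegree_eq_card_roots
  have hsplit : P = C P.leadingCoeff * (s.map fun r => X - C r).prod :=
    (IsAlgClosed.splits P).eq_prod_roots
  have hder : ∀ z : ℂ, 0 < z.re →
      eval z (derivative P) = eval z P * ((s.map fun r => (z - r)⁻¹).sum) := by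
    intro z hx
    have h1 : derivative P = C P.leadingCoeff * derivative (s.map fun r => X - C r).prod := by
      conv_lhs => rw [hsplit]
      rw [derivative_mul, derivative_C, zero_mul, zero_add]
    rw [h1, eval_mul, eval_C, logderiv z s (fun r hr => sub_ne hx (hre r hr))]
    conv_rhs => rw [hsplit]
    rw [eval_mul, eval_C]
    ring
  set Q : Polynomial ℂ :=
    ((C a * X ^ 2 + C b * X + C c) * T + (C u * X ^ 3 + C v * X) * derivative T).map
      (algebraMap ℝ ℂ) with hQdef
  have haevQ : ∀ w : ℂ,
      aeval w ((C a * X ^ 2 + C b * X + C c) * T + (C u * X ^ 3 + C v * X) * derivative T)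
        = Q.eval w := fun w => by rw [aeval_def, ← eval_map]
  have hQeval : ∀ z : ℂ, Q.eval z
      = ((a : ℂ) * z ^ 2 + (b : ℂ) * z + (c : ℂ)) * P.eval z
        + ((u : ℂ) * z ^ 3 + (v : ℂ) * z) * eval z (derivative P) := by
    intro z
    simp [hQdef, hPdef, Polynomial.map_add, Polynomial.map_mul, Polynomial.map_pow,
      Polynomial.derivative_map]
  have hkey : ∀ z : ℂ, 0 < z.re → 0 ≤ (Q.eval z / (z * P.eval z)).re := by
    intro z hx
    have hz0 : z ≠ 0 := fun h => by rw [h] at hx; simp at hx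
    have hPz : P.eval z ≠ 0 := fun h => hT z hx (by rw [haev]; exact h)
    set S : ℂ := (s.map fun r => (z - r)⁻¹).sum with hS
    have hR1 : 0 ≤ S.re := by
      rw [hS, re_msum, Multiset.map_map]
      apply Multiset.sum_nonneg
      intro t ht
      obtain ⟨r, hr, rfl⟩ := Multiset.mem_map.mp ht
      exact lemA hx (hre r hr)
    have hR2 : (z ^ 2 * S).re ≤ (T.natDegree : ℝ) * z.re := by
      rw [hS, ← Multiset.sum_map_mul_left, re_msum, Multiset.map_map]
      calc ((s.map (Complex.re ∘ fun r => z ^ 2 * (z - r)⁻¹))).sum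
          ≤ (s.map fun _ => z.re).sum :=
            Multiset.sum_map_le_sum_map _ _ (fun r hr => lemB hx (hre r hr))
        _ = (Multiset.card s : ℝ) * z.re := by
            simp [Multiset.map_const', Multiset.sum_replicate, nsmul_eq_mul]
        _ = (T.natDegree : ℝ) * z.re := by rw [hcard]
    have hnum : (starRingEnd ℂ) (z * P.eval z) * Q.eval z
        = ((normSq (P.eval z) : ℝ) : ℂ) *
          ((a : ℂ) * (((normSq z : ℝ) : ℂ) * z) + (b : ℂ) * ((normSq z : ℝ) : ℂ)
            + (c : ℂ) * (starRingEnd ℂ) z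
            + (u : ℂ) * (((normSq z : ℝ) : ℂ) * (z ^ 2 * S))
            + (v : ℂ) * (((normSq z : ℝ) : ℂ) * S)) := by
      rw [hQeval, hder z hx, map_mul]
      linear_combination
        ((starRingEnd ℂ) z * ((a : ℂ) * z ^ 2 + (b : ℂ) * z + (c : ℂ))
          + (starRingEnd ℂ) z * ((u : ℂ) * z ^ 3 + (v : ℂ) * z) * S) *
            Complex.mul_conj (P.eval z)
        + (((normSq (P.eval z) : ℝ) : ℂ)) * ((a : ℂ) * z + (b : ℂ) + (u : ℂ) * z ^ 2 * S
            + (v : ℂ) * S) * Complex.mul_conj z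
    have hre2 : ((starRingEnd ℂ) (z * P.eval z) * Q.eval z).re
        = normSq (P.eval z) * (a * (normSq z * z.re) + b * normSq z + c * z.re
            + u * (normSq z * (z ^ 2 * S).re) + v * (normSq z * S.re)) := by
      rw [hnum]
      simp [Complex.re_ofReal_mul, Complex.add_re, Complex.conj_re]
    have hfrac : (Q.eval z / (z * P.eval z)).re
        = ((starRingEnd ℂ) (z * P.eval z) * Q.eval z).re / normSq (z * P.eval z) := by
      simp [Complex.div_re, Complex.mul_re, Complex.mul_im, Complex.conj_re,
        Complex.conj_im, Complex.normSq_apply]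
      ring
    rw [hfrac, hre2]
    apply div_nonneg _ (Complex.normSq_nonneg _)
    apply mul_nonneg (Complex.normSq_nonneg _)
    have hnn : 0 < normSq z := Complex.normSq_pos.mpr hz0
    rcases Nat.eq_zero_or_pos T.natDegree with hm | hm
    · have hs0 : s = 0 := by
        rw [hm] at hcard
        exact Multiset.card_eq_zero.mp (by exact_mod_cast hcard.symm)
      have hS0 : S = 0 := by rw [hS, hs0]; simp
      have ha : 0 ≤ a := by rw [hm] at hau; simpa using hau
      rw [hS0]
      simp only [mul_zero, Complex.zero_re]
      nlinarith [mul_pos hnn hx, mul_nonneg hb hnn.le, mul_nonneg hc hx.le]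
    · have hmu : ((T.natDegree : ℝ)) * u ≤ 0 := by linarith
      have hu' : u ≤ 0 := by
        by_contra hup
        push_neg at hup
        have : 0 < ((T.natDegree : ℝ)) * u := by
          apply mul_pos _ hup
          exact_mod_cast hm
        linarith
      nlinarith [mul_nonneg (by linarith : (0:ℝ) ≤ a + (T.natDegree : ℝ) * u)
          (mul_pos hnn hx).le,
        mul_nonneg hnn.le (mul_nonneg (by linarith : (0:ℝ) ≤ -u)
          (by linarith : (0:ℝ) ≤ (T.natDegree : ℝ) * z.re - (z ^ 2 * S).re)),
        mul_nonneg hb hnn.le, mul_nonneg hc hx.le,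
        mul_nonneg hv (mul_nonneg hnn.le hR1)]
  -- final part
  by_cases hzero : ∃ z : ℂ, 0 < z.re ∧ Q.eval z = 0
  · obtain ⟨z₀, hx₀, hQ₀⟩ := hzero
    left
    set U : Set ℂ := {w : ℂ | 0 < w.re} with hU
    have hUopen : IsOpen U := isOpen_lt continuous_const Complex.continuous_re
    have hUconn : IsPreconnected U := (convex_halfSpace_re_gt 0).isPreconnected
    have hFne : ∀ w ∈ U, w * P.eval w ≠ 0 := by
      intro w hw
      have hw' : 0 < w.re := hw
      exact mul_ne_zero (fun h => by rw [h] at hw'; simp at hw')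
        (fun h => hT w hw' (by rw [haev]; exact h))
    set g : ℂ → ℂ := fun w => (Q.eval w / (w * P.eval w) + 1)⁻¹ with hg
    have hne1 : ∀ w ∈ U, Q.eval w / (w * P.eval w) + 1 ≠ 0 := by
      intro w hw h
      have h1 : (Q.eval w / (w * P.eval w)).re = -1 := by
        have := congrArg Complex.re h
        simp [Complex.add_re] at this
        linarith
      linarith [hkey w hw]
    have hdiff : DifferentiableOn ℂ g U := by
      apply DifferentiableOn.inv _ hne1
      apply DifferentiableOn.add_const
      exact DifferentiableOn.div (Q.differentiable.differentiableOn)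
        ((differentiable_id.mul (P.differentiable)).differentiableOn) hFne
    have hg0 : g z₀ = 1 := by
      simp [hg, hQ₀]
    have hmax : IsMaxOn (norm ∘ g) U z₀ := by
      intro w hw
      have h1 : (1 : ℝ) ≤ ‖Q.eval w / (w * P.eval w) + 1‖ := by
        have := hkey w hw
        calc (1 : ℝ) ≤ (Q.eval w / (w * P.eval w) + 1).re := by
              simp [Complex.add_re]; linarith
          _ ≤ ‖Q.eval w / (w * P.eval w) + 1‖ := Complex.re_le_norm _
          _ = ‖Q.eval w / (w * P.eval w) + 1‖ := rfl
      have h2 : ‖g w‖ ≤ 1 := by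
        rw [hg]
        simpa [norm_inv] using inv_le_one_of_one_le₀ h1
      simpa [Set.mem_setOf_eq, Function.comp_apply, hg0] using h2
    have heq := Complex.eqOn_of_isPreconnected_of_isMaxOn_norm hUconn hUopen hdiff hx₀ hmax
    have hQzero : ∀ w ∈ U, Q.eval w = 0 := by
      intro w hw
      have h := heq hw
      rw [Function.const_apply, hg0] at h
      have h2 : Q.eval w / (w * P.eval w) + 1 = 1 := inv_eq_one.mp h
      have h3 : Q.eval w / (w * P.eval w) = 0 := by
        have := add_eq_right.mp h2
        exact this
      exact (div_eq_zero_iff.mp h3).resolve_right (hFne w hw)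
    have hQ0 : Q = 0 := by
      apply Polynomial.eq_zero_of_infinite_isRoot
      apply Set.infinite_of_injective_forall_mem (f := fun n : ℕ => (n : ℂ) + 1)
      · intro m n h
        have : (m : ℂ) = n := by
          have := add_right_cancel h
          exact this
        exact_mod_cast this
      · intro n
        apply hQzero
        simp [hU]
        positivity
    exact (Polynomial.map_eq_zero_iff (algebraMap ℝ ℂ).injective).mp hQ0
  · right
    intro z hx h0
    exact hzero ⟨z, hx, by rw [← haevQ]; exact h0⟩

theorem stmt_3 (α β γ μ φ : ℕ → ℝ) (T : ℕ → Polynomial ℝ)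
    (hrec : ∀ n, T (n + 1) =
      (C (α n) * X ^ 2 + C (β n) * X + C (γ n)) * T n
        + (C (μ n) * X ^ 3 + C (φ n) * X) * derivative (T n))
    (n₀ : ℕ)
    (hβ : ∀ n, n₀ ≤ n → 0 ≤ β n)
    (hγ : ∀ n, n₀ ≤ n → 0 ≤ γ n)
    (hφ : ∀ n, n₀ ≤ n → 0 ≤ φ n)
    (hαμ : ∀ n, n₀ ≤ n → -(((T n).natDegree : ℝ) * μ n) ≤ α n)
    (hμ : ∀ n, n₀ ≤ n → 0 ≤ -(((T n).natDegree : ℝ) * μ n))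
    (hT0 : HurwitzStable (T n₀)) :
    ∀ n, n₀ ≤ n → HurwitzStable (T n) := by
  intro n hn
  induction n, hn using Nat.le_induction with
  | base => exact hT0
  | succ n hn ih =>
    rw [hrec n]
    exact step (α n) (β n) (γ n) (μ n) (φ n) (T n) (hβ n hn) (hγ n hn) (hφ n hn)
      (hαμ n hn) (hμ n hn) ih
end

section
/- Let (ℛ_n) be the sequence of real polynomials defined by ℛ_0(x) = 1 and ℛ_{n+1}(x) = (2nx + 1)·x·ℛ_n(x) + x(1 − x²)·ℛ_n′(x) for n ≥ 0. Then ℛ_n is Hurwitz stable for every n ∈ ℕ. (This resolves the conjecture of Ma–Wang on the alternating runs polynomials of the dual set of Stirling permutations.) -/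
open Polynomial

/-- Log-derivative formula for a product of linear factors, evaluated at a point. -/
lemma logDeriv_eval (z : ℂ) (s : Multiset ℂ) (hs : ∀ r ∈ s, z - r ≠ 0) :
    eval z (derivative (s.map (fun r => X - C r)).prod) =
      eval z ((s.map (fun r => X - C r)).prod) * (s.map (fun r => (z - r)⁻¹)).sum := by
  induction s using Multiset.induction_on with
  | empty => simp
  | cons r s ih =>
    have hr : z - r ≠ 0 := hs r (Multiset.mem_cons_self r s)
    have ih' := ih (fun x hx => hs x (Multiset.mem_cons_of_mem hx))
    simp only [Multiset.map_cons, Multiset.prod_cons, Multiset.sum_cons, derivative_mul,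
      derivative_sub, derivative_X, derivative_C, sub_zero, eval_add, eval_mul, eval_sub,
      eval_X, eval_C, eval_one, one_mul]
    rw [ih']
    field_simp

/-- Real part of the key fraction is nonnegative. -/
lemma key_re (z r : ℂ) (hz : 0 < z.re) (hr : r.re ≤ 0) :
    0 ≤ ((1 - z * r) / (z - r)).re := by
  have hzr : z - r ≠ 0 := by
    intro h
    have : z.re - r.re = 0 := by rw [← Complex.sub_re, h, Complex.zero_re]
    linarith
  rw [Complex.div_re]
  have hpos : 0 < Complex.normSq (z - r) := Complex.normSq_pos.mpr hzr
  have hnum : 0 ≤ (1 - z * r).re * (z - r).re + (1 - z * r).im * (z - r).im := by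
    simp only [Complex.sub_re, Complex.sub_im, Complex.one_re, Complex.one_im, Complex.mul_re,
      Complex.mul_im]
    have hid : (1 - (z.re * r.re - z.im * r.im)) * (z.re - r.re)
        + (0 - (z.re * r.im + z.im * r.re)) * (z.im - r.im)
        = z.re * (1 + r.re ^ 2 + r.im ^ 2) - r.re * (1 + z.re ^ 2 + z.im ^ 2) := by ring
    rw [hid]
    have h1 : 0 < z.re * (1 + r.re ^ 2 + r.im ^ 2) :=
      mul_pos hz (by positivity)
    have h2 : 0 ≤ (-r.re) * (1 + z.re ^ 2 + z.im ^ 2) :=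
      mul_nonneg (by linarith) (by positivity)
    nlinarith
  rw [← add_div]
  exact div_nonneg hnum hpos.le

lemma multiset_sum_map_sub (s : Multiset ℂ) (f g : ℂ → ℂ) :
    (s.map (fun x => f x - g x)).sum = (s.map f).sum - (s.map g).sum := by
  induction s using Multiset.induction_on with
  | empty => simp
  | cons r s ih => simp [ih]; ring

/-- The key induction step, stated over ℂ. -/
lemma step_s4 (n : ℕ) (F : Polynomial ℂ) (hdeg : F.natDegree ≤ 2 * n)
    (hroots : ∀ w : ℂ, 0 < w.re → F.eval w ≠ 0) (z : ℂ) (hz : 0 < z.re) :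
    ((2 * n : ℂ) * z + 1) * z * F.eval z + z * (1 - z ^ 2) * (derivative F).eval z ≠ 0 := by
  have hFz : F.eval z ≠ 0 := hroots z hz
  have hF : F ≠ 0 := by intro h; exact hFz (by simp [h])
  have hz0 : z ≠ 0 := by intro h; rw [h] at hz; simp at hz
  have hcard : Multiset.card F.roots = F.natDegree :=
    splits_iff_card_roots.mp (IsAlgClosed.splits F)
  have hfac := C_leadingCoeff_mul_prod_multiset_X_sub_C hcard
  have hre : ∀ r ∈ F.roots, r.re ≤ 0 := by
    intro r hrr
    by_contra h
    exact hroots r (lt_of_not_ge h) ((mem_roots hF).mp hrr)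
  have hzr : ∀ r ∈ F.roots, z - r ≠ 0 := by
    intro r hrr h
    have : z.re - r.re = 0 := by rw [← Complex.sub_re, h, Complex.zero_re]
    have := hre r hrr
    linarith
  set S : ℂ := (F.roots.map (fun r => (z - r)⁻¹)).sum with hS
  set T : ℂ := (F.roots.map (fun r => (1 - z * r) / (z - r))).sum with hT
  set m : ℕ := Multiset.card F.roots with hm
  -- log derivative identity
  have hD : (derivative F).eval z = F.eval z * S := by
    conv_lhs => rw [← hfac]
    conv_rhs => rw [← hfac]
    rw [derivative_C_mul, eval_mul, eval_C, logDeriv_eval z _ hzr, eval_mul, eval_C]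
    ring
  -- rewrite (1 - z^2) * S
  have hTS : (1 - z ^ 2) * S = T - (m : ℂ) * z := by
    have h1 : (1 - z ^ 2) * S = (F.roots.map (fun r => (1 - z ^ 2) * (z - r)⁻¹)).sum := by
      rw [hS, Multiset.sum_map_mul_left]
    have h2 : ∀ r ∈ F.roots, (1 - z ^ 2) * (z - r)⁻¹ = (1 - z * r) / (z - r) - z := by
      intro r hrr
      have := hzr r hrr
      field_simp
      ring
    rw [h1, Multiset.map_congr rfl h2]
    have h3 : (F.roots.map (fun r => (1 - z * r) / (z - r) - z)).sum
        = T - (F.roots.map (fun _ => z)).sum := by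
      rw [hT, multiset_sum_map_sub]
    rw [h3, Multiset.map_const', Multiset.sum_replicate, nsmul_eq_mul, hm]
  have hTre : 0 ≤ T.re := by
    rw [hT]
    have : (Complex.reAddGroupHom (F.roots.map (fun r => (1 - z * r) / (z - r))).sum)
        = ((F.roots.map (fun r => (1 - z * r) / (z - r))).map Complex.reAddGroupHom).sum :=
      map_multiset_sum _ _
    rw [show ((F.roots.map (fun r => (1 - z * r) / (z - r))).sum).re
        = (Complex.reAddGroupHom (F.roots.map (fun r => (1 - z * r) / (z - r))).sum) from rfl,
      this, Multiset.map_map]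
    apply Multiset.sum_nonneg
    intro x hx
    obtain ⟨r, hrr, hrx⟩ := Multiset.mem_map.mp hx
    rw [← hrx]
    exact key_re z r hz (hre r hrr)
  have hmn : (m : ℝ) ≤ 2 * n := by
    have hh : m ≤ 2 * n := by rw [hcard]; exact hdeg
    exact_mod_cast hh
  set B : ℂ := ((2 * n : ℂ) * z + 1) + (1 - z ^ 2) * S with hB
  have hBre : 0 < B.re := by
    rw [hB, hTS]
    have hrw : ((2 * (n : ℂ)) * z + 1 + (T - (m : ℂ) * z)).re
        = (2 * (n : ℝ) - (m : ℝ)) * z.re + 1 + T.re := by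
      simp [Complex.add_re, Complex.sub_re, Complex.mul_re, Complex.one_re]
      ring
    rw [hrw]
    have h1 : 0 ≤ (2 * (n : ℝ) - (m : ℝ)) * z.re :=
      mul_nonneg (by linarith) hz.le
    linarith
  have hBne : B ≠ 0 := by
    intro h
    rw [h, Complex.zero_re] at hBre
    exact lt_irrefl 0 hBre
  have hexp : ((2 * n : ℂ) * z + 1) * z * F.eval z + z * (1 - z ^ 2) * (derivative F).eval z
      = F.eval z * (z * B) := by
    rw [hD, hB]; ring
  rw [hexp]
  exact mul_ne_zero hFz (mul_ne_zero hz0 hBne)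

theorem stmt_4 (R : ℕ → Polynomial ℝ)
    (hR0 : R 0 = 1)
    (hrec : ∀ n : ℕ, R (n + 1) =
      (C (2 * (n : ℝ)) * X + 1) * X * R n + X * (1 - X ^ 2) * derivative (R n)) :
    ∀ n : ℕ, HurwitzStable (R n) := by
  -- degree bound
  have hdeg : ∀ n : ℕ, (R n).natDegree ≤ 2 * n := by
    intro n
    induction n with
    | zero => simp [hR0]
    | succ n ih =>
      rw [hrec n]
      apply (natDegree_add_le _ _).trans
      have h1 : ((C (2 * (n:ℝ)) * X + 1) * X * R n).natDegree ≤ 2 * (n + 1) := by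
        apply (natDegree_mul_le).trans
        have : ((C (2 * (n:ℝ)) * X + 1)).natDegree ≤ 1 := by
          apply (natDegree_add_le _ _).trans
          apply max_le
          · exact (natDegree_C_mul_le _ _).trans (by simp)
          · simp
        have h2 : ((C (2 * (n:ℝ)) * X + 1) * X).natDegree ≤ 2 := by
          apply (natDegree_mul_le).trans
          simpa using Nat.add_le_add this (le_refl 1)
        calc ((C (2 * (n:ℝ)) * X + 1) * X).natDegree + (R n).natDegree
            ≤ 2 + 2 * n := Nat.add_le_add h2 ih
          _ ≤ 2 * (n + 1) := by omega
      have h2 : (X * (1 - X ^ 2) * derivative (R n)).natDegree ≤ 2 * (n + 1) := by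
        by_cases hc : (R n).natDegree = 0
        · obtain ⟨c, hcc⟩ : ∃ c, R n = C c := ⟨(R n).coeff 0, (eq_C_of_natDegree_eq_zero hc)⟩
          rw [hcc]
          simp
        · apply (natDegree_mul_le).trans
          have hx : (X * (1 - X ^ 2) : Polynomial ℝ).natDegree ≤ 3 := by
            apply (natDegree_mul_le).trans
            have : ((1 : Polynomial ℝ) - X ^ 2).natDegree ≤ 2 := by
              apply (natDegree_sub_le _ _).trans
              simp
            simpa using Nat.add_le_add (le_refl 1) this
          have hd : (derivative (R n)).natDegree ≤ (R n).natDegree - 1 :=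
            natDegree_derivative_le _
          have := ih
          omega
      exact max_le h1 h2
  intro n
  induction n with
  | zero =>
    right
    intro z hz
    simp [hR0]
  | succ n ih =>
    rcases ih with h0 | hstable
    · left
      rw [hrec n, h0]
      simp
    · right
      intro z hz
      set F : Polynomial ℂ := (R n).map (algebraMap ℝ ℂ) with hF
      have haev : ∀ w : ℂ, aeval w (R n) = F.eval w := by
        intro w
        rw [hF, aeval_def, eval_map]
      have hroots : ∀ w : ℂ, 0 < w.re → F.eval w ≠ 0 := by
        intro w hw
        rw [← haev]
        exact hstable w hw
      have hdegF : F.natDegree ≤ 2 * n := natDegree_map_le.trans (hdeg n)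
      have hstep := step_s4 n F hdegF hroots z hz
      rw [hrec n]
      have hder : aeval z (derivative (R n)) = (derivative F).eval z := by
        rw [aeval_def, ← eval_map, hF, derivative_map]
      have hexpand : (aeval z) ((C (2 * (n:ℝ)) * X + 1) * X * R n
          + X * (1 - X ^ 2) * derivative (R n))
          = ((2 * n : ℂ) * z + 1) * z * F.eval z
            + z * (1 - z ^ 2) * (derivative F).eval z := by
        simp only [map_add, map_mul, map_sub, map_pow, map_one, aeval_X, aeval_C, haev, hder,
          Complex.coe_algebraMap]
        push_cast
        ring
      rw [hexpand]
      exact hstep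
end

section
/- Let T be a Hurwitz stable real polynomial of degree m, and let β, γ, ν, φ, ρ, η ∈ ℝ satisfy φ ≥ 0, ρ ≥ 0, (β + mν)·ν ≤ 0, and (βφ − γν)ρ + φη ≥ 0. Define T⁺(x) = (βx + γ)T(x) + (νx² + φx)T′(x). Then the linear combination (φ − νx)·ρ·T⁺(x) + (φηx + (φ − γ)φρ)·T(x) is Hurwitz stable. -/
open Polynomial

lemma multiset_sum_nonpos (s : Multiset ℝ) (h : ∀ x ∈ s, x ≤ 0) : s.sum ≤ 0 := by
  induction s using Multiset.induction_on with
  | empty => simp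
  | cons a s ih =>
    simp only [Multiset.sum_cons]
    have := h a (Multiset.mem_cons_self a s)
    have := ih (fun x hx => h x (Multiset.mem_cons_of_mem hx))
    linarith

lemma multiset_sum_eq_zero (s : Multiset ℝ) (h : ∀ x ∈ s, x ≤ 0) (h0 : s.sum = 0) :
    ∀ x ∈ s, x = 0 := by
  induction s using Multiset.induction_on with
  | empty => simp
  | cons a s ih =>
    simp only [Multiset.sum_cons] at h0
    have ha := h a (Multiset.mem_cons_self a s)
    have hs : ∀ x ∈ s, x ≤ 0 := fun x hx => h x (Multiset.mem_cons_of_mem hx)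
    have hsum := multiset_sum_nonpos s hs
    have ha0 : a = 0 := by linarith
    have hs0 : s.sum = 0 := by linarith
    intro x hx
    rcases Multiset.mem_cons.mp hx with rfl | hx
    · exact ha0
    · exact ih hs hs0 x hx

lemma eval_derivative_prod (R : Multiset ℂ) (z : ℂ) (hz : ∀ r ∈ R, z ≠ r) :
    eval z (derivative (R.map (fun r => X - C r)).prod) =
      eval z (R.map (fun r => X - C r)).prod * (R.map (fun r => (z - r)⁻¹)).sum := by
  induction R using Multiset.induction_on with
  | empty => simp
  | cons r R ih =>
    have hr : z ≠ r := hz r (Multiset.mem_cons_self r R)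
    have hz' : ∀ s ∈ R, z ≠ s := fun s hs => hz s (Multiset.mem_cons_of_mem hs)
    have hne : z - r ≠ 0 := sub_ne_zero.mpr hr
    simp only [Multiset.map_cons, Multiset.prod_cons, Multiset.sum_cons, derivative_mul,
      derivative_sub, derivative_X, derivative_C, sub_zero, eval_add, eval_mul, eval_sub,
      eval_X, eval_C, eval_one, one_mul]
    rw [ih hz']
    field_simp

lemma re_inv_pos {w : ℂ} (hw : 0 < w.re) : 0 < w⁻¹.re := by
  rw [Complex.inv_re]
  exact div_pos hw (Complex.normSq_pos.mpr (fun h => by simp [h] at hw))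

lemma re_sub_inv_pos {z r : ℂ} (hz : 0 < z.re) (hr : r.re ≤ 0) : 0 < ((z - r)⁻¹).re :=
  re_inv_pos (by simp [Complex.sub_re]; linarith)

lemma re_zr_div_nonpos {z r : ℂ} (hz : 0 < z.re) (hr : r.re ≤ 0) :
    (z * r / (z - r)).re ≤ 0 := by
  rcases eq_or_ne r 0 with rfl | hr0
  · simp
  · have hzr : z - r ≠ 0 := sub_ne_zero.mpr (fun h => by rw [← h] at hr; linarith)
    have hns : 0 < Complex.normSq (z - r) := Complex.normSq_pos.mpr hzr
    have hrn : 0 < r.re ^ 2 + r.im ^ 2 := by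
      rcases Complex.ext_iff.not.mp hr0 with h
      have : r.re ≠ 0 ∨ r.im ≠ 0 := by
        by_contra hc
        push_neg at hc
        exact hr0 (Complex.ext hc.1 hc.2)
      rcases this with h | h <;> positivity
    rw [Complex.div_re]
    rw [← add_div, div_nonpos_iff]
    right
    refine ⟨?_, le_of_lt hns⟩
    simp only [Complex.mul_re, Complex.mul_im, Complex.sub_re, Complex.sub_im]
    nlinarith [mul_nonneg (by positivity : (0:ℝ) ≤ z.re^2 + z.im^2) (neg_nonneg.mpr hr),
      mul_pos hrn hz]

lemma re_zr_div_eq_zero {z r : ℂ} (hz : 0 < z.re) (hr : r.re ≤ 0)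
    (h : (z * r / (z - r)).re = 0) : r = 0 := by
  by_contra hr0
  have hzr : z - r ≠ 0 := sub_ne_zero.mpr (fun hh => by rw [← hh] at hr; linarith)
  have hns : 0 < Complex.normSq (z - r) := Complex.normSq_pos.mpr hzr
  have hrn : 0 < r.re ^ 2 + r.im ^ 2 := by
    have : r.re ≠ 0 ∨ r.im ≠ 0 := by
      by_contra hc
      push_neg at hc
      exact hr0 (Complex.ext hc.1 hc.2)
    rcases this with h' | h' <;> positivity
  rw [Complex.div_re, ← add_div] at h
  field_simp at h
  simp only [mul_zero, Complex.mul_re, Complex.mul_im, Complex.sub_re, Complex.sub_im] at h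
  nlinarith [mul_nonneg (by positivity : (0:ℝ) ≤ z.re^2 + z.im^2) (neg_nonneg.mpr hr),
    mul_pos hrn hz, h]

theorem stmt_5 (T : Polynomial ℝ) (m : ℕ) (hm : T.natDegree = m)
    (hT : HurwitzStable T)
    (β γ ν φ ρ η : ℝ)
    (hφ : 0 ≤ φ) (hρ : 0 ≤ ρ)
    (hβν : (β + (m : ℝ) * ν) * ν ≤ 0)
    (hcomb : 0 ≤ (β * φ - γ * ν) * ρ + φ * η) :
    HurwitzStable ((C φ - C ν * X) * C ρ *
        ((C β * X + C γ) * T + (C ν * X ^ 2 + C φ * X) * derivative T)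
      + (C (φ * η) * X + C ((φ - γ) * φ * ρ)) * T) := by
  by_cases hE : ((C φ - C ν * X) * C ρ *
        ((C β * X + C γ) * T + (C ν * X ^ 2 + C φ * X) * derivative T)
      + (C (φ * η) * X + C ((φ - γ) * φ * ρ)) * T) = 0
  · exact Or.inl hE
  right
  intro z hz hEz
  apply hE; clear hE
  -- T ≠ 0
  rcases eq_or_ne T 0 with rfl | hT0
  · simp
  have hTrhp : ∀ w : ℂ, 0 < w.re → aeval w T ≠ 0 := by
    rcases hT with h | h
    · exact absurd h hT0
    · exact h
  set Tc : Polynomial ℂ := T.map (algebraMap ℝ ℂ) with hTcdef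
  have hTc0 : Tc ≠ 0 := by
    simpa [hTcdef, Polynomial.map_eq_zero] using hT0
  have hTz : ∀ w : ℂ, 0 < w.re → eval w Tc ≠ 0 := by
    intro w hw
    rw [hTcdef, eval_map, ← aeval_def]
    exact hTrhp w hw
  set R : Multiset ℂ := Tc.roots with hRdef
  have hcard : R.card = Tc.natDegree :=
    (splits_iff_card_roots.mp (IsAlgClosed.splits _))
  have hdegTc : Tc.natDegree = m := by
    rw [hTcdef, natDegree_map, hm]
  have hcardm : R.card = m := hcard.trans hdegTc
  have hroots_re : ∀ r ∈ R, r.re ≤ 0 := by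
    intro r hr
    by_contra hc
    push_neg at hc
    exact hTz r hc ((mem_roots hTc0).mp hr)
  have hzr : ∀ r ∈ R, z ≠ r := by
    intro r hr h
    exact hTz z hz (h ▸ ((mem_roots hTc0).mp hr))
  have hfact : Tc = C Tc.leadingCoeff * (R.map fun r => X - C r).prod :=
    (C_leadingCoeff_mul_prod_multiset_X_sub_C hcard).symm
  set S : ℂ := (R.map fun r => (z - r)⁻¹).sum with hSdef
  have hderiv : eval z (derivative Tc) = eval z Tc * S := by
    conv_lhs => rw [hfact]
    conv_rhs => rw [hfact]
    rw [derivative_C_mul, eval_mul, eval_mul, mul_assoc]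
    congr 1
    exact eval_derivative_prod R z hzr
  set Q : ℂ := (R.map fun r => z * r / (z - r)).sum with hQdef
  have hQ : Q = z ^ 2 * S - (m : ℂ) * z := by
    have h1 : R.map (fun r => z * r / (z - r)) = R.map (fun r => z ^ 2 * (z - r)⁻¹ - z) := by
      refine Multiset.map_congr rfl (fun r hr => ?_)
      have hne : z - r ≠ 0 := sub_ne_zero.mpr (hzr r hr)
      field_simp
      ring
    rw [hQdef, h1, Multiset.sum_map_sub, Multiset.sum_map_mul_left, Multiset.map_const',
      Multiset.sum_replicate, hcardm, ← hSdef, nsmul_eq_mul]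
  have hzne : z ≠ 0 := fun h => by simp [h] at hz
  set tz : ℂ := eval z Tc with htzdef
  have htzne : tz ≠ 0 := hTz z hz
  -- bracket equation
  have haT : aeval z T = tz := by rw [htzdef, hTcdef, eval_map, aeval_def]
  have haT' : aeval z (derivative T) = tz * S := by
    rw [← hderiv, hTcdef, derivative_map, eval_map, aeval_def]
  have h0 : (((φ:ℂ) - ν*z)*ρ*((β*z+γ)*tz + (ν*z^2+φ*z)*(tz*S))
      + ((φ*η)*z + ((φ-γ)*φ*ρ))*tz) = 0 := by
    rw [← hEz]
    simp only [map_add, map_mul, map_sub, map_pow, aeval_X, aeval_C, haT, haT',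
      Complex.coe_algebraMap]
  have hbr : ((φ:ℂ) - ν*z)*ρ*((β*z+γ) + (ν*z^2+φ*z)*S) + ((φ*η)*z + ((φ-γ)*φ*ρ)) = 0 := by
    have h2 : (((φ:ℂ) - ν*z)*ρ*((β*z+γ) + (ν*z^2+φ*z)*S)
        + ((φ*η)*z + ((φ-γ)*φ*ρ))) * tz = 0 := by linear_combination h0
    rcases mul_eq_zero.mp h2 with h | h
    · exact h
    · exact absurd h htzne
  have hkey : (((β*φ - γ*ν)*ρ + φ*η : ℝ) : ℂ) + ((ρ*φ^2 : ℝ) : ℂ) * z⁻¹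
      + ((ρ*φ^2 : ℝ) : ℂ) * S - ((ρ*(ν*(β+(m:ℝ)*ν)) : ℝ) : ℂ) * z
      - ((ρ*ν^2 : ℝ) : ℂ) * Q = 0 := by
    have hzinv : z * z⁻¹ = 1 := mul_inv_cancel₀ hzne
    have hmul : z * ((((β*φ - γ*ν)*ρ + φ*η : ℝ) : ℂ) + ((ρ*φ^2 : ℝ) : ℂ) * z⁻¹
        + ((ρ*φ^2 : ℝ) : ℂ) * S - ((ρ*(ν*(β+(m:ℝ)*ν)) : ℝ) : ℂ) * z
        - ((ρ*ν^2 : ℝ) : ℂ) * Q) = 0 := by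
      rw [hQ]
      push_cast
      linear_combination hbr + ((ρ:ℂ)*(φ:ℂ)^2) * hzinv
    rcases mul_eq_zero.mp hmul with h | h
    · exact absurd h hzne
    · exact h
  -- real parts
  have hSre : S.re = (R.map fun r => ((z - r)⁻¹).re).sum := by
    rw [hSdef, ← Complex.coe_reAddGroupHom, map_multiset_sum, Multiset.map_map]
    rfl
  have hQre : Q.re = (R.map fun r => (z * r / (z - r)).re).sum := by
    rw [hQdef, ← Complex.coe_reAddGroupHom, map_multiset_sum, Multiset.map_map]
    rfl
  have hSre0 : 0 ≤ S.re := by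
    rw [hSre]
    refine Multiset.sum_nonneg (fun x hx => ?_)
    obtain ⟨r, hr, rfl⟩ := Multiset.mem_map.mp hx
    exact le_of_lt (re_sub_inv_pos hz (hroots_re r hr))
  have hQre0 : Q.re ≤ 0 := by
    rw [hQre]
    refine multiset_sum_nonpos _ (fun x hx => ?_)
    obtain ⟨r, hr, rfl⟩ := Multiset.mem_map.mp hx
    exact re_zr_div_nonpos hz (hroots_re r hr)
  have hinv0 : 0 < (z⁻¹).re := re_inv_pos hz
  have hre := congrArg Complex.re hkey
  simp only [Complex.add_re, Complex.sub_re, Complex.re_ofReal_mul, Complex.ofReal_re,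
    Complex.zero_re] at hre
  -- each term is zero
  have t1 : 0 ≤ ρ*φ^2 * (z⁻¹).re := mul_nonneg (by positivity) (le_of_lt hinv0)
  have t2 : 0 ≤ ρ*φ^2 * S.re := mul_nonneg (by positivity) hSre0
  have t3 : ρ*(ν*(β+(m:ℝ)*ν)) ≤ 0 := by
    have : ν*(β+(m:ℝ)*ν) ≤ 0 := by nlinarith
    exact mul_nonpos_of_nonneg_of_nonpos hρ this
  have t3' : ρ*(ν*(β+(m:ℝ)*ν)) * z.re ≤ 0 := mul_nonpos_of_nonpos_of_nonneg t3 (le_of_lt hz)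
  have t4 : ρ*ν^2*Q.re ≤ 0 := mul_nonpos_of_nonneg_of_nonpos (by positivity) hQre0
  have hc0 : (β*φ - γ*ν)*ρ + φ*η = 0 := by linarith
  have h2z : ρ*φ^2 * (z⁻¹).re = 0 := by linarith
  have hpf : ρ*φ^2 = 0 := by
    rcases mul_eq_zero.mp h2z with h | h
    · exact h
    · exact absurd h (ne_of_gt hinv0)
  have h3z : ρ*(ν*(β+(m:ℝ)*ν)) * z.re = 0 := by linarith
  have h3 : ρ*(ν*(β+(m:ℝ)*ν)) = 0 := by
    rcases mul_eq_zero.mp h3z with h | h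
    · exact h
    · exact absurd h (ne_of_gt hz)
  have h4 : ρ*ν^2*Q.re = 0 := by linarith
  -- case analysis
  rcases eq_or_ne ρ 0 with rfl | hρn
  · have hφη : φ * η = 0 := by linarith
    simp [hφη]
  · have hφ0 : φ = 0 := by
      have : φ^2 = 0 := by
        rcases mul_eq_zero.mp hpf with h | h
        · exact absurd h hρn
        · exact h
      exact pow_eq_zero_iff (n := 2) (by norm_num) |>.mp this
    rcases eq_or_ne ν 0 with rfl | hνn
    · subst hφ0
      simp
    · have hβm : β + (m:ℝ)*ν = 0 := by
        have h' : ν*(β+(m:ℝ)*ν) = 0 := by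
          rcases mul_eq_zero.mp h3 with h | h
          · exact absurd h hρn
          · exact h
        rcases mul_eq_zero.mp h' with h | h
        · exact absurd h hνn
        · exact h
      have hγ0 : γ = 0 := by
        have : γ * ν * ρ = 0 := by
          rw [hφ0] at hc0
          linarith
        rcases mul_eq_zero.mp this with h | h
        · rcases mul_eq_zero.mp h with h' | h'
          · exact h'
          · exact absurd h' hνn
        · exact absurd h hρn
      -- roots all zero
      have hQre00 : Q.re = 0 := by
        rcases mul_eq_zero.mp h4 with h | h
        · rcases mul_eq_zero.mp h with h' | h'
          · exact absurd h' hρn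
          · exact absurd (pow_eq_zero_iff (n := 2) (by norm_num) |>.mp h') hνn
        · exact h
      have hroots0 : ∀ r ∈ R, r = 0 := by
        intro r hr
        have := multiset_sum_eq_zero _ (fun x hx => by
          obtain ⟨r', hr', rfl⟩ := Multiset.mem_map.mp hx
          exact re_zr_div_nonpos hz (hroots_re r' hr'))
          (hQre ▸ hQre00) _ (Multiset.mem_map.mpr ⟨r, hr, rfl⟩)
        exact re_zr_div_eq_zero hz (hroots_re r hr) this
      -- Tc = C a * X ^ m
      have hTceq : Tc = C Tc.leadingCoeff * X ^ m := by
        have hmc : R.map (fun r => X - C r) = R.map (fun _ => (X : Polynomial ℂ)) :=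
          Multiset.map_congr rfl (fun r hr => by rw [hroots0 r hr, map_zero, sub_zero])
        conv_lhs => rw [hfact]
        rw [hmc, Multiset.map_const', Multiset.prod_replicate, hcardm]
      have hXT' : X * derivative Tc = C (m:ℂ) * Tc := by
        rw [hTceq, derivative_C_mul, derivative_X_pow]
        cases m with
        | zero => simp
        | succ k =>
          rw [Nat.add_sub_cancel]
          ring
      -- conclude E = 0 via map to ℂ
      subst hφ0 hγ0
      have hβ : β = -((m:ℝ)*ν) := by linarith
      subst hβ
      rw [← Polynomial.map_eq_zero_iff (f := algebraMap ℝ ℂ)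
        (algebraMap ℝ ℂ).injective]
      simp only [Polynomial.map_add, Polynomial.map_mul, Polynomial.map_sub, Polynomial.map_pow,
        map_C, map_X, Polynomial.map_neg, ← derivative_map, ← hTcdef, map_neg, map_mul,
        Complex.coe_algebraMap,
        Complex.ofReal_natCast, zero_mul, mul_zero, sub_zero, zero_sub, map_zero,
        Complex.ofReal_zero, add_zero, zero_add]
      linear_combination (-(C (ν:ℂ) * C (ρ:ℂ) * C (ν:ℂ) * X^2)) * hXT'
end

section
/- Let n ∈ ℕ, let ν ∈ {0, 1}, let g₀, g₁, …, g_n ∈ ℝ, and define the real polynomials g(x) = Σ_{k=0}^{n} g_k x^k and f(x) = (1 + x)^ν · Σ_{k=0}^{n} g_k x^k (1 + x²)^{n−k}. Then f is Hurwitz stable if and only if g is Hurwitz stable. In particular, if f is Hurwitz stable and its leading coefficient is positive, then g_k ≥ 0 for all 0 ≤ k ≤ n (i.e., f is semi-γ-positive). -/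
open Polynomial Complex

lemma hprod_aux (q : ℝ[X]) (hq : ∀ i j, 0 ≤ q.coeff i * q.coeff j) :
    ∀ x y : ℝ, (x = 0 ∨ ∃ m, x = q.coeff m) → (y = 0 ∨ ∃ m, y = q.coeff m) → 0 ≤ x * y := by
  rintro x y (rfl | ⟨a, rfl⟩) (rfl | ⟨b, rfl⟩)
  · simp
  · simp
  · simp
  · exact hq a b

lemma hs_deg0 (p : ℝ[X]) (h0 : p.natDegree = 0) (i j : ℕ) : 0 ≤ p.coeff i * p.coeff j := by
  obtain ⟨a, rfl⟩ := Polynomial.natDegree_eq_zero.mp h0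
  simp only [coeff_C]
  split_ifs <;> simp [mul_self_nonneg]

lemma hs_key : ∀ (N : ℕ) (p : ℝ[X]), p.natDegree ≤ N →
    (∀ z : ℂ, 0 < z.re → aeval z p ≠ 0) → ∀ i j, 0 ≤ p.coeff i * p.coeff j := by
  intro N
  induction N with
  | zero => exact fun p hdeg _ i j => hs_deg0 p (Nat.le_zero.mp hdeg) i j
  | succ N ih =>
    intro p hdeg hstab i j
    by_cases h0 : p.natDegree = 0
    · exact hs_deg0 p h0 i j
    have hp0 : p ≠ 0 := fun h => hstab 1 (by norm_num) (by simp [h])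
    have hpc0 : p.map (algebraMap ℝ ℂ) ≠ 0 := by
      simpa [Polynomial.map_eq_zero] using hp0
    have hdegpos : 0 < degree (p.map (algebraMap ℝ ℂ)) := by
      rw [degree_map_eq_of_injective (algebraMap ℝ ℂ).injective]
      exact natDegree_pos_iff_degree_pos.mp (Nat.pos_of_ne_zero h0)
    obtain ⟨r, hr⟩ := Complex.exists_root hdegpos
    have hroot : aeval r p = 0 := by rwa [IsRoot, eval_map, ← aeval_def] at hr
    have hre : r.re ≤ 0 := by
      by_contra h; push_neg at h; exact hstab r h hroot
    by_cases him : r.im = 0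
    · -- real root case
      set s : ℝ := r.re with hsdef
      have hrs : (s : ℂ) = r := by
        apply Complex.ext <;> simp [hsdef, him]
      have h1 : (algebraMap ℝ ℂ) (p.eval s) = 0 := by
        rw [← aeval_algebraMap_apply_eq_algebraMap_eval,
          show ((algebraMap ℝ ℂ) s) = r from hrs]
        exact hroot
      have hroot' : IsRoot p s := (_root_.map_eq_zero (algebraMap ℝ ℂ)).mp h1
      have hdvd : (X - C s) ∣ p := dvd_iff_isRoot.mpr hroot'
      obtain ⟨q, hq3, hpq⟩ : ∃ q : ℝ[X], q.natDegree = p.natDegree - 1 ∧ p = (X - C s) * q := by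
        refine ⟨p /ₘ (X - C s), ?_, ?_⟩
        · rw [natDegree_divByMonic p (monic_X_sub_C s), natDegree_X_sub_C]
        · have hm : p %ₘ (X - C s) = 0 := (modByMonic_eq_zero_iff_dvd (monic_X_sub_C s)).mpr hdvd
          have h2 := modByMonic_add_div p (X - C s)
          rw [hm, zero_add] at h2
          exact h2.symm
      have hqdeg : q.natDegree ≤ N := by omega
      have hqstab : ∀ z : ℂ, 0 < z.re → aeval z q ≠ 0 := by
        intro z hz hq0
        apply hstab z hz
        have h4 : aeval z p = (z - (s : ℂ)) * aeval z q := by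
          rw [hpq]; simp [Polynomial.aeval_def]
        rw [h4, hq0, mul_zero]
      have ihq := ih q hqdeg hqstab
      have hprod := hprod_aux q ihq
      have hcf : ∀ m, p.coeff m =
          (if 1 ≤ m then q.coeff (m - 1) else 0) + (-s) * q.coeff m := by
        intro m
        have h5 : p = q * X ^ 1 - C s * q := by rw [hpq]; ring
        rw [h5]
        simp only [coeff_sub, coeff_mul_X_pow', coeff_C_mul]
        ring
      have ht : (0:ℝ) ≤ -s := by simp [hsdef]; linarith
      have m1 : ∀ m, ((if 1 ≤ m then q.coeff (m - 1) else 0) = 0 ∨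
          ∃ a, (if 1 ≤ m then q.coeff (m - 1) else 0) = q.coeff a) := by
        intro m; split_ifs
        · exact Or.inr ⟨_, rfl⟩
        · exact Or.inl rfl
      have mq : ∀ m, (q.coeff m = 0 ∨ ∃ a, q.coeff m = q.coeff a) := fun m => Or.inr ⟨m, rfl⟩
      rw [hcf i, hcf j]
      nlinarith [hprod _ _ (m1 i) (m1 j), mul_nonneg ht (hprod _ _ (m1 i) (mq j)),
        mul_nonneg ht (hprod _ _ (mq i) (m1 j)),
        mul_nonneg (mul_nonneg ht ht) (hprod _ _ (mq i) (mq j))]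
    · -- complex conjugate pair case
      have hconj : r ≠ (starRingEnd ℂ) r := by
        intro h
        have h6 := congrArg Complex.im h
        simp only [Complex.conj_im] at h6
        exact him (by linarith)
      have hrootc : aeval ((starRingEnd ℂ) r) p = 0 := by
        rw [Polynomial.aeval_conj, hroot, map_zero]
      obtain ⟨t1, ht1⟩ := dvd_iff_isRoot.mpr hr
      have hrt1 : IsRoot t1 ((starRingEnd ℂ) r) := by
        have h7 : eval ((starRingEnd ℂ) r) (p.map (algebraMap ℝ ℂ)) = 0 := by
          rw [eval_map, ← aeval_def]; exact hrootc
        rw [ht1, eval_mul, eval_sub, eval_X, eval_C, mul_eq_zero] at h7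
        rcases h7 with h | h
        · exact absurd (sub_eq_zero.mp h).symm hconj
        · exact h
      obtain ⟨t2, ht2⟩ := dvd_iff_isRoot.mpr hrt1
      set b : ℝ := 2 * r.re with hbdef
      set c : ℝ := Complex.normSq r with hcdef
      set s : ℝ[X] := X ^ 2 - C b * X + C c with hsdef
      have hmap : s.map (algebraMap ℝ ℂ) =
          (X - C r) * (X - C ((starRingEnd ℂ) r)) := by
        have e1 : r + (starRingEnd ℂ) r = ((b : ℝ) : ℂ) := by
          rw [Complex.add_conj]
        have e2 : r * (starRingEnd ℂ) r = ((c : ℝ) : ℂ) := by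
          rw [Complex.mul_conj]
        have e3 : (X - C r) * (X - C ((starRingEnd ℂ) r)) =
            X ^ 2 - C (r + (starRingEnd ℂ) r) * X + C (r * (starRingEnd ℂ) r) := by
          simp only [C_add, C_mul]; ring
        rw [e3, e1, e2, hsdef]
        simp only [Polynomial.map_add, Polynomial.map_sub, Polynomial.map_pow,
          Polynomial.map_mul, map_X, map_C]
        norm_num
      have hmonic : s.Monic := by
        rw [hsdef]; monicity!
      have hsdvd : s ∣ p := by
        rw [← map_dvd_map (algebraMap ℝ ℂ) (algebraMap ℝ ℂ).injective hmonic, hmap]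
        exact ⟨t2, by rw [ht1, ht2, mul_assoc]⟩
      have hsdeg : s.natDegree = 2 := by
        rw [hsdef]; compute_degree!
      obtain ⟨q, hq3, hpq⟩ : ∃ q : ℝ[X], q.natDegree = p.natDegree - 2 ∧ p = s * q := by
        refine ⟨p /ₘ s, ?_, ?_⟩
        · rw [natDegree_divByMonic p hmonic, hsdeg]
        · have hm : p %ₘ s = 0 := (modByMonic_eq_zero_iff_dvd hmonic).mpr hsdvd
          have h9 := modByMonic_add_div p s
          rw [hm, zero_add] at h9
          exact h9.symm
      have hqdeg : q.natDegree ≤ N := by omega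
      have hqstab : ∀ z : ℂ, 0 < z.re → aeval z q ≠ 0 := by
        intro z hz hq0
        apply hstab z hz
        have h12 : aeval z p = aeval z s * aeval z q := by rw [hpq, map_mul]
        rw [h12, hq0, mul_zero]
      have ihq := ih q hqdeg hqstab
      have hprod := hprod_aux q ihq
      have hcf : ∀ m, p.coeff m =
          (if 2 ≤ m then q.coeff (m - 2) else 0) +
          (-b) * (if 1 ≤ m then q.coeff (m - 1) else 0) + c * q.coeff m := by
        intro m
        have h13 : p = q * X ^ 2 - C b * (q * X ^ 1) + C c * q := by
          rw [hpq, hsdef]; ring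
        rw [h13]
        simp only [coeff_add, coeff_sub, coeff_mul_X_pow', coeff_C_mul]
        ring
      have hb : (0:ℝ) ≤ -b := by simp [hbdef]; linarith
      have hc0 : (0:ℝ) ≤ c := Complex.normSq_nonneg r
      have m2 : ∀ m, ((if 2 ≤ m then q.coeff (m - 2) else 0) = 0 ∨
          ∃ a, (if 2 ≤ m then q.coeff (m - 2) else 0) = q.coeff a) := by
        intro m; split_ifs
        · exact Or.inr ⟨_, rfl⟩
        · exact Or.inl rfl
      have m1 : ∀ m, ((if 1 ≤ m then q.coeff (m - 1) else 0) = 0 ∨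
          ∃ a, (if 1 ≤ m then q.coeff (m - 1) else 0) = q.coeff a) := by
        intro m; split_ifs
        · exact Or.inr ⟨_, rfl⟩
        · exact Or.inl rfl
      have mq : ∀ m, (q.coeff m = 0 ∨ ∃ a, q.coeff m = q.coeff a) := fun m => Or.inr ⟨m, rfl⟩
      rw [hcf i, hcf j]
      nlinarith [hprod _ _ (m2 i) (m2 j), mul_nonneg hb (hprod _ _ (m2 i) (m1 j)),
        mul_nonneg hb (hprod _ _ (m1 i) (m2 j)),
        mul_nonneg (mul_nonneg hb hb) (hprod _ _ (m1 i) (m1 j)),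
        mul_nonneg hc0 (hprod _ _ (m2 i) (mq j)),
        mul_nonneg hc0 (hprod _ _ (mq i) (m2 j)),
        mul_nonneg (mul_nonneg hb hc0) (hprod _ _ (m1 i) (mq j)),
        mul_nonneg (mul_nonneg hb hc0) (hprod _ _ (mq i) (m1 j)),
        mul_nonneg (mul_nonneg hc0 hc0) (hprod _ _ (mq i) (mq j))]

lemma coeff_gsum (n : ℕ) (g : ℕ → ℝ) (j : ℕ) (hj : j ≤ n) :
    (∑ k ∈ Finset.range (n + 1), C (g k) * X ^ k).coeff j = g j := by
  rw [finset_sum_coeff]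
  simp only [coeff_C_mul, coeff_X_pow]
  rw [Finset.sum_eq_single j]
  · simp
  · intro b _ hb
    simp [Ne.symm hb]
  · intro h
    exact absurd (Finset.mem_range.mpr (by omega)) h

lemma map_re_pos {z : ℂ} (hz : 0 < z.re) : 1 + z ^ 2 ≠ 0 ∧ 0 < (z / (1 + z ^ 2)).re := by
  have hz0 : z ≠ 0 := fun h => by simp [h] at hz
  have hns : 0 < Complex.normSq z := Complex.normSq_pos.mpr hz0
  have h1 : 0 < (z + z⁻¹).re := by
    rw [Complex.add_re, Complex.inv_re]
    positivity
  have h2 : z + z⁻¹ ≠ 0 := fun h => by rw [h] at h1; simp at h1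
  have h3 : 1 + z ^ 2 ≠ 0 := by
    intro h
    apply h2
    field_simp
    linear_combination h
  have h4 : z / (1 + z ^ 2) = (z + z⁻¹)⁻¹ := by
    have h5 : z + z⁻¹ = (1 + z ^ 2) / z := by
      field_simp
      ring
    rw [h5, inv_div]
  rw [h4]
  refine ⟨h3, ?_⟩
  rw [Complex.inv_re]
  have := Complex.normSq_pos.mpr h2
  positivity

lemma exists_preimage {w : ℂ} (hw : 0 < w.re) :
    ∃ z : ℂ, 0 < z.re ∧ 1 + z ^ 2 ≠ 0 ∧ z / (1 + z ^ 2) = w := by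
  have hw0 : w ≠ 0 := fun h => by simp [h] at hw
  have hdeg : 0 < degree (C w * X ^ 2 - X + C w) := by
    have h : degree (C w * X ^ 2 - X + C w) = 2 := by
      compute_degree!
    rw [h]; norm_num
  obtain ⟨z, hz⟩ := Complex.exists_root hdeg
  have hzeq : w * z ^ 2 - z + w = 0 := by
    simpa [IsRoot] using hz
  have hz0 : z ≠ 0 := by
    intro h
    rw [h] at hzeq
    simp at hzeq
    exact hw0 hzeq
  have h3 : 1 + z ^ 2 ≠ 0 := by
    intro h
    apply hz0
    have h5 : w * (1 + z ^ 2) = z := by linear_combination hzeq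
    rw [h, mul_zero] at h5
    exact h5.symm
  have heq : z / (1 + z ^ 2) = w := by
    field_simp
    linear_combination -hzeq
  refine ⟨z, ?_, h3, heq⟩
  rcases lt_trichotomy z.re 0 with h | h | h
  · exfalso
    have hneg : 0 < (-z).re := by simp; linarith
    have h6 := (map_re_pos hneg).2
    have e : (-z) / (1 + (-z) ^ 2) = -w := by
      rw [neg_sq, neg_div, heq]
    rw [e] at h6
    simp at h6
    linarith
  · exfalso
    have him2 : (1 + z ^ 2).im = 0 := by
      simp [pow_two, Complex.add_im, Complex.mul_im, h]
    have hre0 : w.re = 0 := by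
      rw [← heq, Complex.div_re, him2, h]
      simp
    linarith
  · exact h

lemma eval_F (n : ℕ) (g : ℕ → ℝ) (z : ℂ) (hz : 1 + z ^ 2 ≠ 0) :
    aeval z (∑ k ∈ Finset.range (n + 1), C (g k) * X ^ k * (1 + X ^ 2) ^ (n - k)) =
      (1 + z ^ 2) ^ n * aeval (z / (1 + z ^ 2)) (∑ k ∈ Finset.range (n + 1), C (g k) * X ^ k) := by
  rw [map_sum, map_sum, Finset.mul_sum]
  apply Finset.sum_congr rfl
  intro k hk
  have hkn : k ≤ n := Nat.lt_succ_iff.mp (Finset.mem_range.mp hk)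
  simp only [map_mul, map_pow, map_add, map_one, aeval_X, aeval_C]
  rw [div_pow]
  rw [show (1 + z ^ 2) ^ n = (1 + z ^ 2) ^ (n - k) * (1 + z ^ 2) ^ k by
    rw [← pow_add]; congr 1; omega]
  field_simp

theorem stmt_10 (n : ℕ) (ν : ℕ) (hν : ν = 0 ∨ ν = 1) (g : ℕ → ℝ) :
    (HurwitzStable ((1 + X) ^ ν *
        ∑ k ∈ Finset.range (n + 1), C (g k) * X ^ k * (1 + X ^ 2) ^ (n - k)) ↔
      HurwitzStable (∑ k ∈ Finset.range (n + 1), C (g k) * X ^ k)) ∧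
    (HurwitzStable ((1 + X) ^ ν *
        ∑ k ∈ Finset.range (n + 1), C (g k) * X ^ k * (1 + X ^ 2) ^ (n - k)) →
      0 < ((1 + X) ^ ν *
        ∑ k ∈ Finset.range (n + 1), C (g k) * X ^ k * (1 + X ^ 2) ^ (n - k)).leadingCoeff →
      ∀ k, k ≤ n → 0 ≤ g k) := by
  set gp : ℝ[X] := ∑ k ∈ Finset.range (n + 1), C (g k) * X ^ k with hgp
  set F : ℝ[X] := ∑ k ∈ Finset.range (n + 1), C (g k) * X ^ k * (1 + X ^ 2) ^ (n - k) with hF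
  have hX1 : (1 + X : ℝ[X]) ≠ 0 := fun h => by
    simpa [coeff_one] using congrArg (fun p : ℝ[X] => coeff p 1) h
  have hpow : ((1 + X : ℝ[X])) ^ ν ≠ 0 := pow_ne_zero _ hX1
  have hg0 : gp = 0 → ∀ k ≤ n, g k = 0 := by
    intro h k hk
    have h2 : gp.coeff k = g k := by rw [hgp]; exact coeff_gsum n g k hk
    rw [h] at h2
    simpa using h2.symm
  have hF0 : F = 0 ↔ gp = 0 := by
    constructor
    · intro h
      have hmap : gp.map (algebraMap ℝ ℂ) = 0 := by
        apply eq_zero_of_infinite_isRoot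
        apply Set.infinite_of_injective_forall_mem (f := fun m : ℕ => ((m : ℂ) + 1))
        · intro a b hab
          simp only at hab
          have : (a : ℂ) = b := by linear_combination hab
          exact_mod_cast this
        · intro m
          have hwre : (0:ℝ) < ((m : ℂ) + 1).re := by simp; positivity
          obtain ⟨z, hzre, hz2, hzw⟩ := exists_preimage hwre
          have h5 := eval_F n g z hz2
          rw [← hF, ← hgp, hzw, h, map_zero] at h5
          have h6 : aeval ((m : ℂ) + 1) gp = 0 := by
            rcases mul_eq_zero.mp h5.symm with h7 | h7
            · exact absurd h7 (pow_ne_zero _ hz2)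
            · exact h7
          show IsRoot _ _
          rw [IsRoot, eval_map, ← aeval_def]
          exact h6
      exact (Polynomial.map_eq_zero_iff (algebraMap ℝ ℂ).injective).mp hmap
    · intro h
      rw [hF]
      apply Finset.sum_eq_zero
      intro k hk
      rw [hg0 h k (Nat.lt_succ_iff.mp (Finset.mem_range.mp hk))]
      simp
  have hstricteq : (∀ z : ℂ, 0 < z.re → aeval z ((1 + X) ^ ν * F) ≠ 0) ↔
      (∀ w : ℂ, 0 < w.re → aeval w gp ≠ 0) := by
    constructor
    · intro hf w hw
      obtain ⟨z, hzre, hz2, hzw⟩ := exists_preimage hw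
      intro h0
      apply hf z hzre
      have h5 := eval_F n g z hz2
      rw [← hF, ← hgp, hzw] at h5
      rw [map_mul, h5, h0, mul_zero, mul_zero]
    · intro hg z hz
      obtain ⟨hz2, hwre⟩ := map_re_pos hz
      have h5 := eval_F n g z hz2
      rw [← hF, ← hgp] at h5
      rw [map_mul, h5]
      apply mul_ne_zero
      · simp only [map_pow, map_add, map_one, aeval_X]
        apply pow_ne_zero
        intro h
        have h7 := congrArg Complex.re h
        simp at h7
        linarith
      · exact mul_ne_zero (pow_ne_zero _ hz2) (hg _ hwre)
  have hiff : HurwitzStable ((1 + X) ^ ν * F) ↔ HurwitzStable gp := by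
    unfold HurwitzStable
    apply or_congr _ hstricteq
    constructor
    · intro h
      exact hF0.mp ((mul_eq_zero.mp h).resolve_left hpow)
    · intro h
      rw [hF0.mpr h, mul_zero]
  refine ⟨hiff, ?_⟩
  intro hstab hlc k hk
  by_cases hgpz : gp = 0
  · exact le_of_eq (hg0 hgpz k hk).symm
  · have hgstrict : ∀ w : ℂ, 0 < w.re → aeval w gp ≠ 0 := (hiff.mp hstab).resolve_left hgpz
    have hfne : (1 + X : ℝ[X]) ^ ν * F ≠ 0 := by
      intro h
      exact hgpz (hF0.mp ((mul_eq_zero.mp h).resolve_left hpow))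
    have hfstrict : ∀ z : ℂ, 0 < z.re → aeval z ((1 + X : ℝ[X]) ^ ν * F) ≠ 0 :=
      hstab.resolve_left hfne
    set f : ℝ[X] := (1 + X : ℝ[X]) ^ ν * F with hfdef
    have hfc : ∀ i, 0 ≤ f.coeff i := by
      intro i
      have h6 := hs_key f.natDegree f le_rfl hfstrict i f.natDegree
      rw [coeff_natDegree] at h6
      nlinarith [hlc]
    have heval1pos : 0 < f.eval 1 := by
      rw [eval_eq_sum_range]
      apply Finset.sum_pos'
      · intro i _
        simpa using hfc i
      · refine ⟨f.natDegree, Finset.self_mem_range_succ _, ?_⟩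
        simpa [coeff_natDegree] using hlc
    by_contra hneg
    push_neg at hneg
    have hall : ∀ j, j ≤ n → g j ≤ 0 := by
      intro j hj
      have h8 := hs_key gp.natDegree gp le_rfl hgstrict j k
      have e1 : gp.coeff j = g j := by rw [hgp]; exact coeff_gsum n g j hj
      have e2 : gp.coeff k = g k := by rw [hgp]; exact coeff_gsum n g k hk
      rw [e1, e2] at h8
      nlinarith [hneg]
    have heval1 : f.eval 1 = 2 ^ ν * ∑ j ∈ Finset.range (n + 1), g j * 2 ^ (n - j) := by
      rw [hfdef, hF]
      simp only [eval_mul, eval_pow, eval_add, eval_one, eval_X, eval_finset_sum, eval_C]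
      norm_num
    have hsumle : (∑ j ∈ Finset.range (n + 1), g j * 2 ^ (n - j)) ≤ 0 := by
      apply Finset.sum_nonpos
      intro j hj
      have h9 := hall j (Nat.lt_succ_iff.mp (Finset.mem_range.mp hj))
      have h2p : (0:ℝ) < 2 ^ (n - j) := by positivity
      nlinarith
    have hle : f.eval 1 ≤ 0 := by
      rw [heval1]
      have h2p : (0:ℝ) ≤ 2 ^ ν := by positivity
      nlinarith
    linarith
end

section
/- Let β, μ, ν : ℕ → ℝ be real sequences with μ_n ≤ 0 ≤ ν_n for all n, and let (T_n) be a sequence of real polynomials such that, with m_n = deg T_n, one has deg T_{n+1} = deg T_n + 1 and T_{n+1}(x) = (−m_nμ_n x² + β_n x + β_n + m_nν_n)·T_n(x) + (μ_n x³ + ν_n x² − ν_n x − μ_n)·T_n′(x) for all n. Suppose that μ_n + ν_n ≤ 0 and 2β_n + m_n(μ_n + ν_n) ≥ 0 for all n, and that T_0 is Hurwitz stable. Then T_n is Hurwitz stable for all n ∈ ℕ. -/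
open Polynomial

-- Lemma: half-plane norm bound for log derivative style expression
lemma sub_norm_le (x : ℝ) (u : ℂ) (hx : 0 < x) (hu : x ≤ u.re) :
    ‖(2 * x : ℂ) - u‖ ≤ ‖u‖ := by
  have h2 : ‖(2 * x : ℂ) - u‖ ^ 2 ≤ ‖u‖ ^ 2 := by
    rw [← Complex.normSq_eq_norm_sq, ← Complex.normSq_eq_norm_sq]
    simp only [Complex.normSq_apply, Complex.sub_re, Complex.sub_im, Complex.mul_re,
      Complex.mul_im, Complex.ofReal_re, Complex.ofReal_im, Complex.re_ofNat, Complex.im_ofNat]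
    nlinarith
  nlinarith [norm_nonneg u, norm_nonneg ((2 * x : ℂ) - u)]

lemma L1 : ∀ (n : ℕ) (f : ℂ[X]), f.natDegree = n →
    (∀ w : ℂ, 0 < w.re → eval w f ≠ 0) → ∀ z : ℂ, 0 < z.re →
    ‖(2 * z.re : ℂ) * eval z (derivative f) - (n : ℂ) * eval z f‖ ≤ n * ‖eval z f‖ := by
  intro n
  induction n with
  | zero =>
    intro f hf _ z _
    obtain ⟨a, rfl⟩ := Polynomial.natDegree_eq_zero.mp hf
    simp
  | succ k ih =>
    intro f hf hroots z hz
    have hf0 : f ≠ 0 := fun h => by simp [h] at hf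
    obtain ⟨ρ, hρ⟩ : ∃ ρ, IsRoot f ρ := Complex.exists_root (by
      rw [Polynomial.degree_eq_natDegree hf0, hf]; exact_mod_cast Nat.succ_pos k)
    have hρre : ρ.re ≤ 0 := by
      by_contra h
      exact hroots ρ (lt_of_not_ge h) hρ
    set g := f /ₘ (X - C ρ) with hg
    have hfg : (X - C ρ) * g = f := (mul_divByMonic_eq_iff_isRoot).mpr hρ
    have hg0 : g ≠ 0 := fun h => hf0 (by rw [← hfg, h, mul_zero])
    have hdegg : g.natDegree = k := by
      have := hfg ▸ hf
      rw [← hfg] at hf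
      rw [natDegree_mul (X_sub_C_ne_zero ρ) hg0, natDegree_X_sub_C] at hf
      omega
    have hgroots : ∀ w : ℂ, 0 < w.re → eval w g ≠ 0 := by
      intro w hw hgw
      exact hroots w hw (by rw [← hfg]; simp [hgw])
    have hih := ih g hdegg hgroots z hz
    have hder : derivative f = g + (X - C ρ) * derivative g := by
      rw [← hfg, derivative_mul, derivative_sub, derivative_X, derivative_C]; ring
    set a := eval z g
    set b := eval z (derivative g)
    set u := z - ρ
    have heva : eval z f = u * a := by rw [← hfg]; simp [u, a]
    have hevb : eval z (derivative f) = a + u * b := by rw [hder]; simp [u, a, b]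
    have hure : z.re ≤ u.re := by simp [u, Complex.sub_re]; linarith
    rw [heva, hevb]
    have key : (2 * z.re : ℂ) * (a + u * b) - ((k : ℂ) + 1) * (u * a)
        = u * ((2 * z.re : ℂ) * b - (k : ℂ) * a) + ((2 * z.re : ℂ) - u) * a := by ring
    push_cast
    rw [key]
    calc ‖u * ((2 * z.re : ℂ) * b - (k : ℂ) * a) + ((2 * z.re : ℂ) - u) * a‖
        ≤ ‖u‖ * ‖(2 * z.re : ℂ) * b - (k : ℂ) * a‖ + ‖(2 * z.re : ℂ) - u‖ * ‖a‖ := by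
          refine (norm_add_le _ _).trans ?_
          rw [norm_mul, norm_mul]
      _ ≤ ‖u‖ * (k * ‖a‖) + ‖u‖ * ‖a‖ := by
          gcongr
          exact sub_norm_le z.re u hz hure
      _ = (k + 1) * ‖u * a‖ := by rw [norm_mul]; ring


lemma keyR (M p ν β x y : ℝ) (hM : 1 ≤ M) (hp : 0 ≤ p) (hν : 0 ≤ ν) (hs : ν ≤ p)
    (hb : M * (p - ν) ≤ 2 * β) (hx : 0 < x) (hne : β ≠ 0 ∨ ν ≠ 0) :
    M ^ 2 * ((-p * (x^3 - 3*x*y^2) + ν * (x^2 - y^2) - ν * x + p) ^ 2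
        + (-p * (3*x^2*y - y^3) + 2*ν*x*y - ν*y) ^ 2)
    < (2*x*(M*p*(x^2 - y^2) + β*x + β + M*ν) + M*(-p*(x^3 - 3*x*y^2) + ν*(x^2 - y^2) - ν*x + p)) ^ 2
      + (2*x*(M*p*2*x*y + β*y) + M*(-p*(3*x^2*y - y^3) + 2*ν*x*y - ν*y)) ^ 2 := by
  have hβ0 : 0 ≤ β := by nlinarith
  have hQpos : 0 < (x^2 - y^2 + 1)^2 + 4*x^2*y^2 := by
    rcases eq_or_ne y 0 with hy | hy
    · subst hy; nlinarith [sq_nonneg x, sq_nonneg (x^2 + 1)]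
    · have : 0 < 4*x^2*y^2 := by positivity
      nlinarith [sq_nonneg (x^2 - y^2 + 1)]
  rcases eq_or_ne β 0 with hβ | hβ
  · subst hβ
    have hpν : p = ν := by nlinarith
    have hν0 : ν ≠ 0 := hne.resolve_left (by norm_num)
    have hνpos : 0 < ν := lt_of_le_of_ne hν (Ne.symm hν0)
    rw [hpν]
    have hid : (2*x*(M*ν*(x^2 - y^2) + 0*x + 0 + M*ν) + M*(-ν*(x^3 - 3*x*y^2) + ν*(x^2 - y^2) - ν*x + ν)) ^ 2
      + (2*x*(M*ν*2*x*y + 0*y) + M*(-ν*(3*x^2*y - y^3) + 2*ν*x*y - ν*y)) ^ 2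
      - M ^ 2 * ((-ν * (x^3 - 3*x*y^2) + ν * (x^2 - y^2) - ν * x + ν) ^ 2
        + (-ν * (3*x^2*y - y^3) + 2*ν*x*y - ν*y) ^ 2)
      = 4*x*(M^2*ν^2*((x^2 - y^2 + 1)^2 + 4*x^2*y^2)) := by ring
    have hMpos : 0 < M := by linarith
    have hpos : 0 < 4*x*(M^2*ν^2*((x^2 - y^2 + 1)^2 + 4*x^2*y^2)) := by
      apply mul_pos (by linarith)
      exact mul_pos (mul_pos (pow_pos hMpos 2) (pow_pos hνpos 2)) hQpos
    linarith
  · have hβpos : 0 < β := lt_of_le_of_ne hβ0 (Ne.symm hβ)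
    set s := p - ν with hsdef
    have hs0 : 0 ≤ s := by simp [hsdef]; linarith
    have t1pos : 0 < β*(β + M*ν)*x*((1+x)^2 + y^2) := by
      have h1 : 0 < β + M*ν := by nlinarith
      have h2 : 0 < (1+x)^2 + y^2 := by positivity
      exact mul_pos (mul_pos (mul_pos hβpos h1) hx) h2
    have t2nn : 0 ≤ M*p*β*((1 - y^2)^2 + x*(1 + y^2) + 2*x^2*y^2 + x^3 + x^4) := by
      apply mul_nonneg (by positivity)
      nlinarith [sq_nonneg (1 - y^2), sq_nonneg (x*y), sq_nonneg y, sq_nonneg x, sq_nonneg (x^2)]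
    have t3nn : 0 ≤ M^2*s^2*x^2 := by positivity
    have t4nn : 0 ≤ M^2*p*ν*((x^2 - y^2 + 1)^2 + 4*x^2*y^2) := by positivity
    have t5nn : 0 ≤ M*s*(2*β - M*s)*y^2 := by
      apply mul_nonneg (mul_nonneg (mul_nonneg (by linarith) hs0) (by linarith)) (sq_nonneg y)
    have hid : (2*x*(M*p*(x^2 - y^2) + β*x + β + M*ν) + M*(-p*(x^3 - 3*x*y^2) + ν*(x^2 - y^2) - ν*x + p)) ^ 2
      + (2*x*(M*p*2*x*y + β*y) + M*(-p*(3*x^2*y - y^3) + 2*ν*x*y - ν*y)) ^ 2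
      - M ^ 2 * ((-p * (x^3 - 3*x*y^2) + ν * (x^2 - y^2) - ν * x + p) ^ 2
        + (-p * (3*x^2*y - y^3) + 2*ν*x*y - ν*y) ^ 2)
      = 4*x*( β*(β + M*ν)*x*((1+x)^2 + y^2)
            + M*p*β*((1 - y^2)^2 + x*(1 + y^2) + 2*x^2*y^2 + x^3 + x^4)
            + M^2*s^2*x^2
            + M^2*p*ν*((x^2 - y^2 + 1)^2 + 4*x^2*y^2)
            + M*s*(2*β - M*s)*y^2 ) := by rw [hsdef]; ring
    have hpos : 0 < 4*x*( β*(β + M*ν)*x*((1+x)^2 + y^2)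
            + M*p*β*((1 - y^2)^2 + x*(1 + y^2) + 2*x^2*y^2 + x^3 + x^4)
            + M^2*s^2*x^2
            + M^2*p*ν*((x^2 - y^2 + 1)^2 + 4*x^2*y^2)
            + M*s*(2*β - M*s)*y^2 ) := by
      apply mul_pos (by linarith)
      linarith
    linarith

lemma keyC (M μ ν β : ℝ) (z : ℂ) (hM : 1 ≤ M) (hμ : μ ≤ 0) (hν : 0 ≤ ν)
    (hsum : μ + ν ≤ 0) (hb : 0 ≤ 2 * β + M * (μ + ν)) (hx : 0 < z.re)
    (hne : β ≠ 0 ∨ ν ≠ 0) :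
    M * ‖(μ : ℂ) * z ^ 3 + (ν : ℂ) * z ^ 2 - (ν : ℂ) * z - (μ : ℂ)‖
    < ‖(2 * z.re : ℂ) * ((-(M * μ) : ℂ) * z ^ 2 + (β : ℂ) * z + ((β : ℂ) + (M * ν : ℂ)))
        + (M : ℂ) * ((μ : ℂ) * z ^ 3 + (ν : ℂ) * z ^ 2 - (ν : ℂ) * z - (μ : ℂ))‖ := by
  set x := z.re
  set y := z.im
  set Bc := (μ : ℂ) * z ^ 3 + (ν : ℂ) * z ^ 2 - (ν : ℂ) * z - (μ : ℂ) with hBc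
  set Pc := (2 * z.re : ℂ) * ((-(M * μ) : ℂ) * z ^ 2 + (β : ℂ) * z + ((β : ℂ) + (M * ν : ℂ)))
        + (M : ℂ) * ((μ : ℂ) * z ^ 3 + (ν : ℂ) * z ^ 2 - (ν : ℂ) * z - (μ : ℂ)) with hPc
  have hBre : Bc.re = -(-μ) * (x^3 - 3*x*y^2) + ν * (x^2 - y^2) - ν * x + (-μ) := by
    simp only [hBc, pow_succ, pow_zero, one_mul, Complex.add_re, Complex.sub_re,
      Complex.mul_re, Complex.mul_im, Complex.add_im, Complex.sub_im,
      Complex.ofReal_re, Complex.ofReal_im, x, y]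
    ring
  have hBim : Bc.im = -(-μ) * (3*x^2*y - y^3) + 2*ν*x*y - ν*y := by
    simp only [hBc, pow_succ, pow_zero, one_mul, Complex.add_re, Complex.sub_re,
      Complex.mul_re, Complex.mul_im, Complex.add_im, Complex.sub_im,
      Complex.ofReal_re, Complex.ofReal_im, x, y]
    ring
  have hPre : Pc.re = 2*x*(M*(-μ)*(x^2 - y^2) + β*x + β + M*ν)
      + M*(-(-μ)*(x^3 - 3*x*y^2) + ν*(x^2 - y^2) - ν*x + (-μ)) := by
    simp only [hPc, pow_succ, pow_zero, one_mul, Complex.add_re, Complex.sub_re,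
      Complex.mul_re, Complex.mul_im, Complex.add_im, Complex.sub_im,
      Complex.ofReal_re, Complex.ofReal_im, Complex.re_ofNat, Complex.im_ofNat,
      Complex.neg_re, Complex.neg_im, x, y]
    ring
  have hPim : Pc.im = 2*x*(M*(-μ)*2*x*y + β*y)
      + M*(-(-μ)*(3*x^2*y - y^3) + 2*ν*x*y - ν*y) := by
    simp only [hPc, pow_succ, pow_zero, one_mul, Complex.add_re, Complex.sub_re,
      Complex.mul_re, Complex.mul_im, Complex.add_im, Complex.sub_im,
      Complex.ofReal_re, Complex.ofReal_im, Complex.re_ofNat, Complex.im_ofNat,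
      Complex.neg_re, Complex.neg_im, x, y]
    ring
  have hk := keyR M (-μ) ν β x y hM (by linarith) hν (by linarith) (by linarith) hx hne
  have hsq : (M * ‖Bc‖) ^ 2 < ‖Pc‖ ^ 2 := by
    have e1 : (M * ‖Bc‖) ^ 2 = M ^ 2 * ((-(-μ) * (x^3 - 3*x*y^2) + ν * (x^2 - y^2) - ν * x + (-μ)) ^ 2
        + (-(-μ) * (3*x^2*y - y^3) + 2*ν*x*y - ν*y) ^ 2) := by
      rw [mul_pow, ← Complex.normSq_eq_norm_sq, Complex.normSq_apply, hBre, hBim]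
      ring
    have e2 : ‖Pc‖ ^ 2 = (2*x*(M*(-μ)*(x^2 - y^2) + β*x + β + M*ν) + M*(-(-μ)*(x^3 - 3*x*y^2) + ν*(x^2 - y^2) - ν*x + (-μ))) ^ 2
      + (2*x*(M*(-μ)*2*x*y + β*y) + M*(-(-μ)*(3*x^2*y - y^3) + 2*ν*x*y - ν*y)) ^ 2 := by
      rw [← Complex.normSq_eq_norm_sq, Complex.normSq_apply, hPre, hPim]
      ring
    rw [e1, e2]
    exact hk
  nlinarith [norm_nonneg Bc, norm_nonneg Pc, mul_nonneg (by linarith : (0:ℝ) ≤ M) (norm_nonneg Bc)]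

theorem stmt_11 (β μ ν : ℕ → ℝ) (T : ℕ → Polynomial ℝ)
    (hμν : ∀ n, μ n ≤ 0 ∧ 0 ≤ ν n)
    (hdeg : ∀ n, (T (n + 1)).natDegree = (T n).natDegree + 1)
    (hrec : ∀ n, T (n + 1) =
      (C (-(((T n).natDegree : ℝ) * μ n)) * X ^ 2 + C (β n) * X
          + C (β n + ((T n).natDegree : ℝ) * ν n)) * T n
        + (C (μ n) * X ^ 3 + C (ν n) * X ^ 2 - C (ν n) * X - C (μ n)) *
            derivative (T n))
    (hsum : ∀ n, μ n + ν n ≤ 0)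
    (hβ : ∀ n, 0 ≤ 2 * β n + ((T n).natDegree : ℝ) * (μ n + ν n))
    (hT0 : HurwitzStable (T 0)) :
    ∀ n, HurwitzStable (T n) := by
  intro n
  induction n with
  | zero => exact hT0
  | succ n ih =>
    -- T n is nonzero
    have hTn0 : T n ≠ 0 := by
      intro h
      have hd := hdeg n
      rw [hrec n, h] at hd
      simp at hd
    have hstab : ∀ z : ℂ, 0 < z.re → aeval z (T n) ≠ 0 := by
      rcases ih with h | h
      · exact absurd h hTn0
      · exact h
    refine Or.inr ?_
    intro z hz hzero
    set m := (T n).natDegree with hm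
    set M : ℝ := (m : ℝ) with hM
    -- evaluation identity
    have heval : (0 : ℂ) = ((-(M * μ n) : ℂ) * z ^ 2 + (β n : ℂ) * z + ((β n : ℂ) + (M * ν n : ℂ)))
          * aeval z (T n)
        + ((μ n : ℂ) * z ^ 3 + (ν n : ℂ) * z ^ 2 - (ν n : ℂ) * z - (μ n : ℂ))
          * aeval z (derivative (T n)) := by
      rw [← hzero, hrec n]
      simp only [map_add, map_mul, map_sub, map_pow, aeval_C, aeval_X,
        Complex.coe_algebraMap, ← hm, ← hM]
      push_cast
      ring
    rcases Nat.eq_zero_or_pos m with hm0 | hmpos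
    · -- constant case
      obtain ⟨c, hc⟩ := natDegree_eq_zero.mp hm0
      have hc0 : c ≠ 0 := by
        intro h; rw [← hc, h] at hTn0; simp at hTn0
      have hβne : β n ≠ 0 := by
        intro hb0
        have h1 : T (n + 1) = 0 := by
          rw [hrec n, ← hc, hb0]
          simp
        have hd := hdeg n
        rw [h1] at hd
        simp at hd
      have hder0 : aeval z (derivative (T n)) = 0 := by rw [← hc]; simp
      have hMc : (M : ℂ) = 0 := by
        rw [hM, hm0]; norm_num
      rw [hMc, hder0] at heval
      have h2 : ((β n : ℂ)) * (z + 1) * aeval z (T n) = 0 := by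
        linear_combination -heval
      have hz1 : z + 1 ≠ 0 := by
        intro h
        have : z = -1 := by linear_combination h
        rw [this] at hz
        norm_num at hz
      have hβc : (β n : ℂ) ≠ 0 := by exact_mod_cast hβne
      exact (mul_ne_zero (mul_ne_zero hβc hz1) (hstab z hz)) h2
    · have hM1 : 1 ≤ M := by rw [hM]; exact_mod_cast hmpos
      have hne : β n ≠ 0 ∨ ν n ≠ 0 := by
        by_contra h
        push_neg at h
        obtain ⟨hb0, hν0⟩ := h
        have hμ0 : μ n = 0 := by
          have h1 := hβ n
          have h2 := (hμν n).1
          rw [hb0, hν0] at h1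
          have : 0 < ((T n).natDegree : ℝ) := by exact_mod_cast hmpos
          nlinarith
        have hd := hdeg n
        rw [hrec n, hb0, hν0, hμ0] at hd
        simp at hd
      set f := (T n).map (algebraMap ℝ ℂ) with hf
      have hfdeg : f.natDegree = m := by
        rw [hf, natDegree_map]
      have hfroots : ∀ w : ℂ, 0 < w.re → eval w f ≠ 0 := by
        intro w hw
        rw [hf, eval_map, ← aeval_def]
        exact hstab w hw
      have hL := L1 m f hfdeg hfroots z hz
      have hd1 : eval z (derivative f) = aeval z (derivative (T n)) := by
        rw [hf, derivative_map, eval_map, ← aeval_def]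
      have hd2 : eval z f = aeval z (T n) := by
        rw [hf, eval_map, ← aeval_def]
      rw [hd1, hd2] at hL
      set tz := aeval z (T n) with htz
      set dz := aeval z (derivative (T n)) with hdz
      have htz0 : tz ≠ 0 := hstab z hz
      set Ac : ℂ := (-(M * μ n) : ℂ) * z ^ 2 + (β n : ℂ) * z + ((β n : ℂ) + (M * ν n : ℂ)) with hAc
      set Bc : ℂ := (μ n : ℂ) * z ^ 3 + (ν n : ℂ) * z ^ 2 - (ν n : ℂ) * z - (μ n : ℂ) with hBc
      have hkey := keyC M (μ n) (ν n) (β n) z hM1 (hμν n).1 (hμν n).2 (hsum n)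
        (by have := hβ n; rw [hM]; linarith) hz hne
      rw [← hAc, ← hBc] at hkey
      have hid : Bc * ((2 * z.re : ℂ) * dz - (M : ℂ) * tz)
          = -(((2 * z.re : ℂ) * Ac + (M : ℂ) * Bc) * tz) := by
        have h0 : Ac * tz + Bc * dz = 0 := heval.symm
        linear_combination (2 * z.re : ℂ) * h0
      have hLM : ‖(2 * z.re : ℂ) * dz - (M : ℂ) * tz‖ ≤ M * ‖tz‖ := by
        have : ((m : ℕ) : ℂ) = (M : ℂ) := by rw [hM]; push_cast; ring
        rw [this] at hL
        rw [hM]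
        exact_mod_cast hL
      have hnorm : ‖(2 * z.re : ℂ) * Ac + (M : ℂ) * Bc‖ * ‖tz‖
          = ‖Bc‖ * ‖(2 * z.re : ℂ) * dz - (M : ℂ) * tz‖ := by
        rw [← norm_mul, ← norm_mul, hid, norm_neg]
      have htzpos : 0 < ‖tz‖ := norm_pos_iff.mpr htz0
      nlinarith [norm_nonneg Bc, hkey, hLM, hnorm, htzpos]
end

section
/- Let r, s ∈ ℝ with r ≥ 1 and r + s ≥ 1. Then for all complex numbers x, y with Re(x) > 0 and Re(y) > 0, one has ((1 − x)² + r(1 + x)²)·(1 + y) + s·(1 + x)·(1 + xy) ≠ 0. (That is, the bivariate polynomial ((1−x)² + r(1+x)²)(1+y) + s(1+x)(1+xy) is Hurwitz stable in two variables.) -/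
lemma key_ineq (r s a b c : ℝ) (hr : 1 ≤ r) (hrs : 1 ≤ r + s)
    (hc : 0 ≤ c + a * b) (hab : a < b) (ha : 0 ≤ a) :
    0 < a ^ 2 + 2 * r * c + r ^ 2 * b ^ 2 + s * (c + r * b ^ 2)
      + s ^ 2 * b * (b - a) / 4 := by
  have hb : 0 < b := lt_of_le_of_lt ha hab
  have hba : 0 < b - a := by linarith
  have h1 : 0 ≤ (c + a * b) * (2 * r + s) := mul_nonneg hc (by linarith)
  have h2 : 0 ≤ (b * (b - a) / 4) * (s - 1 + r) ^ 2 :=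
    mul_nonneg (by positivity) (sq_nonneg _)
  have h3 : 0 ≤ (b / 2) * (r * (b + a) + b - 3 * a) * (s - 1 + r) := by
    apply mul_nonneg
    · apply mul_nonneg (by positivity)
      nlinarith [mul_nonneg (by linarith : (0:ℝ) ≤ r - 1) (by linarith : (0:ℝ) ≤ b + a)]
    · linarith
  have h4 : 0 ≤ ((r - 1) ^ 2 / 4) * (b * (b - a)) :=
    mul_nonneg (by positivity) (by positivity)
  have h5 : 0 ≤ (r - 1) * (b * (b - a)) :=
    mul_nonneg (by linarith) (by positivity)
  have h6 : 0 < (b - a) ^ 2 := by positivity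
  nlinarith [h1, h2, h3, h4, h5, h6]

theorem stmt_12 (r s : ℝ) (hr : 1 ≤ r) (hrs : 1 ≤ r + s) :
    ∀ x y : ℂ, 0 < x.re → 0 < y.re →
      ((1 - x) ^ 2 + (r : ℂ) * (1 + x) ^ 2) * (1 + y)
        + (s : ℂ) * (1 + x) * (1 + x * y) ≠ 0 := by
  intro x y hx hy h
  set A : ℂ := (1 - x) ^ 2 + (r : ℂ) * (1 + x) ^ 2 with hA
  set P : ℂ := A + (s : ℂ) * (1 + x) with hPdef
  set Q : ℂ := A + (s : ℂ) * x * (1 + x) with hQdef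
  have hP : P = -y * Q := by
    rw [hPdef, hQdef, hA]
    linear_combination h
  -- Re(P * conj Q) = -y.re * normSq Q ≤ 0
  have hre : (P * (starRingEnd ℂ) Q).re = -(y.re * Complex.normSq Q) := by
    rw [hP, mul_assoc, Complex.mul_conj]
    simp [Complex.mul_re]
  -- But Re(P * conj Q) > 0
  set u := x.re with hu
  set v := x.im with hv
  have hkey := key_ineq r s ((1 - u) ^ 2 + v ^ 2) ((1 + u) ^ 2 + v ^ 2)
      ((1 - u ^ 2 - v ^ 2) ^ 2 - 4 * v ^ 2) hr hrs
      (by nlinarith [sq_nonneg (1 - u ^ 2 - v ^ 2)])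
      (by nlinarith) (by positivity)
  have heq : (P * (starRingEnd ℂ) Q).re =
      ((1 - u) ^ 2 + v ^ 2) ^ 2 + 2 * r * ((1 - u ^ 2 - v ^ 2) ^ 2 - 4 * v ^ 2)
        + r ^ 2 * ((1 + u) ^ 2 + v ^ 2) ^ 2
        + s * (((1 - u ^ 2 - v ^ 2) ^ 2 - 4 * v ^ 2) + r * ((1 + u) ^ 2 + v ^ 2) ^ 2)
        + s ^ 2 * ((1 + u) ^ 2 + v ^ 2) * (((1 + u) ^ 2 + v ^ 2) - ((1 - u) ^ 2 + v ^ 2)) / 4 := by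
    rw [hPdef, hQdef, hA]
    simp only [Complex.mul_re, Complex.mul_im, Complex.add_re, Complex.add_im,
      Complex.sub_re, Complex.sub_im, Complex.one_re, Complex.one_im,
      Complex.ofReal_re, Complex.ofReal_im, Complex.conj_re, Complex.conj_im,
      pow_two, ← hu, ← hv]
    ring
  have hns : 0 ≤ Complex.normSq Q := Complex.normSq_nonneg Q
  nlinarith [mul_nonneg hy.le hns, hre, heq, hkey]
end

section
/- Let δ be a positive integer and let (P_n)_{n≥0} be the sequence of real polynomials defined by P_0(x) = 1 and P_{n+1}(x) = ((n/δ)x² + x + 1 + n/δ)·P_n(x) + (1/δ)(1 − x)(1 + x²)·P_n′(x) for n ≥ 0. Then P_n is unimodal for every n ≥ 3. -/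
open Polynomial

/-- Integer-indexed coefficient function of a polynomial (zero at negative indices). -/
noncomputable def Bc (p : Polynomial ℝ) (k : ℤ) : ℝ := if 0 ≤ k then p.coeff k.toNat else 0

lemma Bc_neg (p : Polynomial ℝ) (k : ℤ) (h : k < 0) : Bc p k = 0 := by
  simp [Bc, not_le.mpr h]

lemma Bc_add (p q : Polynomial ℝ) (k : ℤ) : Bc (p + q) k = Bc p k + Bc q k := by
  unfold Bc; split <;> simp

lemma Bc_sub (p q : Polynomial ℝ) (k : ℤ) : Bc (p - q) k = Bc p k - Bc q k := by
  unfold Bc; split <;> simp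

lemma Bc_C_mul (a : ℝ) (p : Polynomial ℝ) (k : ℤ) : Bc (C a * p) k = a * Bc p k := by
  unfold Bc; split <;> simp

lemma Bc_X_mul (p : Polynomial ℝ) (k : ℤ) : Bc (X * p) k = Bc p (k - 1) := by
  unfold Bc
  rcases lt_trichotomy k 0 with h | h | h
  · rw [if_neg (by omega), if_neg (by omega)]
  · subst h; simp
  · rw [if_pos (by omega), if_pos (by omega)]
    have : k.toNat = (k-1).toNat + 1 := by omega
    rw [this, coeff_X_mul]

lemma Bc_deriv (p : Polynomial ℝ) (k : ℤ) : Bc (derivative p) k = ((k:ℝ) + 1) * Bc p (k + 1) := by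
  unfold Bc
  rcases lt_trichotomy k (-1) with h | h | h
  · rw [if_neg (by omega), if_neg (by omega)]; ring
  · subst h; norm_num
  · rw [if_pos (by omega), if_pos (by omega)]
    have : (k+1).toNat = k.toNat + 1 := by omega
    rw [this, coeff_derivative]
    have hk : ((k.toNat : ℝ)) = (k:ℝ) := by
      have h2 : (k.toNat : ℤ) = k := by omega
      exact_mod_cast congrArg (fun z : ℤ => (z : ℝ)) h2
    rw [hk]; ring

section Main

variable (δ : ℕ) (P : ℕ → Polynomial ℝ)

/-- The integer-indexed coefficient recurrence. -/
lemma recBc (hδ : 0 < δ)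
    (hrec : ∀ n : ℕ, P (n + 1) =
      (C ((n : ℝ) / (δ : ℝ)) * X ^ 2 + X + C (1 + (n : ℝ) / (δ : ℝ))) * P n
        + C (1 / (δ : ℝ)) * (1 - X) * (1 + X ^ 2) * derivative (P n)) (n : ℕ) (k : ℤ) :
    (δ:ℝ) * Bc (P (n+1)) k = ((δ:ℝ)+(n:ℝ)-(k:ℝ)) * Bc (P n) k
      + ((δ:ℝ)+(k:ℝ)-1) * Bc (P n) (k-1) + ((n:ℝ)-(k:ℝ)+2) * Bc (P n) (k-2)
      + ((k:ℝ)+1) * Bc (P n) (k+1) := by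
  have hd : (δ:ℝ) ≠ 0 := by positivity
  have hpoly : P (n+1) = C ((n:ℝ)/(δ:ℝ)) * (X*(X*(P n))) + X * (P n) + C (1+(n:ℝ)/(δ:ℝ)) * (P n)
      + C (1/(δ:ℝ)) * derivative (P n) - C (1/(δ:ℝ)) * (X * derivative (P n))
      + C (1/(δ:ℝ)) * (X*(X*derivative (P n))) - C (1/(δ:ℝ)) * (X*(X*(X*derivative (P n)))) := by
    rw [hrec n]; ring
  rw [hpoly]
  simp only [Bc_add, Bc_sub, Bc_C_mul, Bc_X_mul, Bc_deriv]
  ring_nf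
  field_simp
  ring_nf
  push_cast
  ring

variable (hδ : 0 < δ) (hP0 : P 0 = 1)
variable (hA : ∀ (n : ℕ) (k : ℤ), (δ:ℝ) * Bc (P (n+1)) k = ((δ:ℝ)+(n:ℝ)-(k:ℝ)) * Bc (P n) k
      + ((δ:ℝ)+(k:ℝ)-1) * Bc (P n) (k-1) + ((n:ℝ)-(k:ℝ)+2) * Bc (P n) (k-2)
      + ((k:ℝ)+1) * Bc (P n) (k+1))

include hδ hP0 hA

lemma degBc : ∀ (n : ℕ) (k : ℤ), (n:ℤ) < k → Bc (P n) k = 0 := by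
  intro n
  induction n with
  | zero =>
    intro k hk
    have h0 : 0 ≤ k := by omega
    have : k.toNat ≠ 0 := by omega
    simp [Bc, h0, hP0, coeff_one, this]
  | succ n ih =>
    intro k hk
    have hd : (δ:ℝ) ≠ 0 := by positivity
    have h := hA n k
    have e1 : Bc (P n) k = 0 := ih k (by omega)
    have e2 : Bc (P n) (k-1) = 0 := ih (k-1) (by omega)
    have e4 : Bc (P n) (k+1) = 0 := ih (k+1) (by omega)
    rcases eq_or_lt_of_le (by omega : (n:ℤ) + 2 ≤ k) with h2 | h2
    · have e3 : ((n:ℝ)-(k:ℝ)+2) = 0 := by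
        have : (k:ℝ) = (n:ℝ) + 2 := by exact_mod_cast congrArg (fun z : ℤ => (z:ℝ)) h2.symm
        rw [this]; ring
      rw [e1, e2, e3, e4] at h
      have : (δ:ℝ) * Bc (P (n+1)) k = 0 := by rw [h]; ring
      exact (mul_eq_zero.mp this).resolve_left hd
    · have e3 : Bc (P n) (k-2) = 0 := ih (k-2) (by omega)
      rw [e1, e2, e3, e4] at h
      have : (δ:ℝ) * Bc (P (n+1)) k = 0 := by rw [h]; ring
      exact (mul_eq_zero.mp this).resolve_left hd

lemma symBc : ∀ (n : ℕ) (k : ℤ), Bc (P n) k = Bc (P n) ((n:ℤ) - k) := by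
  intro n
  induction n with
  | zero =>
    intro k
    have e : ((0:ℕ):ℤ) - k = -k := by push_cast; ring
    rw [e]
    rcases lt_trichotomy k 0 with h | h | h
    · rw [Bc_neg _ _ h]
      have h0 : (0:ℤ) ≤ -k := by omega
      have hnz : (-k).toNat ≠ 0 := by omega
      simp only [Bc, if_pos h0, hP0, coeff_one, if_neg hnz]
    · subst h; norm_num
    · rw [Bc_neg _ (-k : ℤ) (by omega)]
      have hnz : k.toNat ≠ 0 := by omega
      simp only [Bc, if_pos h.le, hP0, coeff_one, if_neg hnz]
  | succ n ih =>
    intro k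
    have hd : (δ:ℝ) ≠ 0 := by positivity
    have h1 := hA n ((n:ℤ) + 1 - k)
    have h2 := hA n k
    have s1 : Bc (P n) ((n:ℤ)+1-k) = Bc (P n) (k-1) := by
      rw [ih]; congr 1; ring
    have s2 : Bc (P n) ((n:ℤ)+1-k-1) = Bc (P n) k := by
      rw [ih]; congr 1; ring
    have s3 : Bc (P n) ((n:ℤ)+1-k-2) = Bc (P n) (k+1) := by
      rw [ih]; congr 1; ring
    have s4 : Bc (P n) ((n:ℤ)+1-k+1) = Bc (P n) (k-2) := by
      rw [ih]; congr 1; ring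
    rw [s1, s2, s3, s4] at h1
    have hcast : (((n:ℤ) + 1 - k : ℤ) : ℝ) = (n:ℝ) + 1 - (k:ℝ) := by push_cast; ring
    rw [hcast] at h1
    have goal' : (δ:ℝ) * Bc (P (n+1)) ((n:ℤ)+1-k) = (δ:ℝ) * Bc (P (n+1)) k := by
      rw [h1, h2]; ring
    have h3 := mul_left_cancel₀ hd goal'
    have e : ((n+1:ℕ):ℤ) - k = (n:ℤ)+1-k := by push_cast; ring
    rw [e]
    exact h3.symm

omit hP0

lemma stepH3 (hsym : ∀ (n : ℕ) (k : ℤ), Bc (P n) k = Bc (P n) ((n:ℤ) - k)) (n : ℕ) (hn : 3 ≤ n)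
    (h3 : ∀ k : ℤ, 2*k ≤ (n:ℤ)+1 → Bc (P n) (k-1) ≤ Bc (P n) k)
    (h4 : ∀ m : ℤ, 2*m = (n:ℤ)-1 → 0 ≤ 2*((δ:ℝ)-2) * (Bc (P n) m - Bc (P n) (m-1))
        + ((n:ℝ)+5) * (Bc (P n) (m-1) - Bc (P n) (m-2))) :
    ∀ k : ℤ, 2*k ≤ (n:ℤ)+2 → Bc (P (n+1)) (k-1) ≤ Bc (P (n+1)) k := by
  intro k hk
  rcases lt_or_ge k 0 with hneg | hpos
  · rw [Bc_neg _ _ hneg, Bc_neg _ _ (by omega)]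
  have hdR : (0:ℝ) < (δ:ℝ) := by positivity
  have hdR1 : (1:ℝ) ≤ (δ:ℝ) := by exact_mod_cast hδ
  have hkR : (0:ℝ) ≤ (k:ℝ) := by exact_mod_cast hpos
  have hkR2 : 2*(k:ℝ) ≤ (n:ℝ)+2 := by exact_mod_cast hk
  have hnR : (3:ℝ) ≤ (n:ℝ) := by exact_mod_cast hn
  have h1 := hA n k
  have h2 := hA n (k-1)
  rw [show k-1-1 = k-2 from by ring, show k-1-2 = k-3 from by ring,
      show k-1+1 = k from by ring] at h2
  push_cast at h2
  suffices hD : 0 ≤ (δ:ℝ) * (Bc (P (n+1)) k - Bc (P (n+1)) (k-1)) by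
    nlinarith [hD]
  rcases (by omega : 2*k ≤ (n:ℤ)-1 ∨ 2*k = (n:ℤ) ∨ 2*k = (n:ℤ)+1 ∨ 2*k = (n:ℤ)+2) with hc | hc | hc | hc
  · have hc1 : Bc (P n) k ≤ Bc (P n) (k+1) := by
      have := h3 (k+1) (by omega); rwa [show k+1-1 = k from by ring] at this
    have hc2 : Bc (P n) (k-1) ≤ Bc (P n) k := h3 k (by omega)
    have hc3 : Bc (P n) (k-2) ≤ Bc (P n) (k-1) := by
      have := h3 (k-1) (by omega); rwa [show k-1-1 = k-2 from by ring] at this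
    have hc4 : Bc (P n) (k-3) ≤ Bc (P n) (k-2) := by
      have := h3 (k-2) (by omega); rwa [show k-2-1 = k-3 from by ring] at this
    have hcZ : 2*(k:ℝ) ≤ (n:ℝ)-1 := by exact_mod_cast hc
    have p1 : 0 ≤ ((k:ℝ)+1) * (Bc (P n) (k+1) - Bc (P n) k) :=
      mul_nonneg (by linarith) (by linarith)
    have p2 : 0 ≤ ((δ:ℝ)+(n:ℝ)-(k:ℝ)+1) * (Bc (P n) k - Bc (P n) (k-1)) :=
      mul_nonneg (by linarith) (by linarith)
    have p3 : 0 ≤ ((δ:ℝ)+(k:ℝ)-1) * (Bc (P n) (k-1) - Bc (P n) (k-2)) :=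
      mul_nonneg (by linarith) (by linarith)
    have p4 : 0 ≤ ((n:ℝ)-(k:ℝ)+3) * (Bc (P n) (k-2) - Bc (P n) (k-3)) :=
      mul_nonneg (by linarith) (by linarith)
    linarith [h1, h2, p1, p2, p3, p4]
  · have hs : Bc (P n) (k+1) = Bc (P n) (k-1) := by
      rw [hsym n (k+1)]; congr 1; omega
    have hcR : (n:ℝ) = 2*(k:ℝ) := by exact_mod_cast hc.symm
    have hc2 : Bc (P n) (k-1) ≤ Bc (P n) k := h3 k (by omega)
    have hc3 : Bc (P n) (k-2) ≤ Bc (P n) (k-1) := by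
      have := h3 (k-1) (by omega); rwa [show k-1-1 = k-2 from by ring] at this
    have hc4 : Bc (P n) (k-3) ≤ Bc (P n) (k-2) := by
      have := h3 (k-2) (by omega); rwa [show k-2-1 = k-3 from by ring] at this
    have hDeq : (δ:ℝ) * (Bc (P (n+1)) k - Bc (P (n+1)) (k-1))
        = ((δ:ℝ)+(n:ℝ)-2*(k:ℝ)) * (Bc (P n) k - Bc (P n) (k-1))
          + ((δ:ℝ)+(k:ℝ)-1) * (Bc (P n) (k-1) - Bc (P n) (k-2))
          + ((n:ℝ)-(k:ℝ)+3) * (Bc (P n) (k-2) - Bc (P n) (k-3)) := by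
      linear_combination h1 - h2 + ((k:ℝ)+1) * hs
    have p1 : 0 ≤ ((δ:ℝ)+(n:ℝ)-2*(k:ℝ)) * (Bc (P n) k - Bc (P n) (k-1)) :=
      mul_nonneg (by linarith) (by linarith)
    have p2 : 0 ≤ ((δ:ℝ)+(k:ℝ)-1) * (Bc (P n) (k-1) - Bc (P n) (k-2)) :=
      mul_nonneg (by linarith) (by linarith)
    have p3 : 0 ≤ ((n:ℝ)-(k:ℝ)+3) * (Bc (P n) (k-2) - Bc (P n) (k-3)) :=
      mul_nonneg (by linarith) (by linarith)
    linarith [hDeq, p1, p2, p3]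
  · have hs1 : Bc (P n) (k+1) = Bc (P n) (k-2) := by
      rw [hsym n (k+1)]; congr 1; omega
    have hs2 : Bc (P n) k = Bc (P n) (k-1) := by
      rw [hsym n k]; congr 1; omega
    have hcR : 2*(k:ℝ) = (n:ℝ)+1 := by exact_mod_cast hc
    have hDeq : (δ:ℝ) * (Bc (P (n+1)) k - Bc (P (n+1)) (k-1))
        = ((δ:ℝ)-2) * (Bc (P n) (k-1) - Bc (P n) (k-2))
          + ((n:ℝ)-(k:ℝ)+3) * (Bc (P n) (k-2) - Bc (P n) (k-3)) := by
      linear_combination h1 - h2 + ((k:ℝ)+1) * hs1 + ((δ:ℝ)+(n:ℝ)-2*(k:ℝ)) * hs2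
    have h4i := h4 (k-1) (by omega)
    rw [show k-1-1 = k-2 from by ring, show k-1-2 = k-3 from by ring] at h4i
    have hm : ((n:ℝ)+5) * (Bc (P n) (k-2) - Bc (P n) (k-3))
        = 2*((n:ℝ)-(k:ℝ)+3) * (Bc (P n) (k-2) - Bc (P n) (k-3)) := by
      have : (n:ℝ)+5 = 2*((n:ℝ)-(k:ℝ)+3) := by linarith
      rw [this]
    linarith [hDeq, h4i, hm.le, hm.ge]
  · have hs1 : Bc (P n) (k+1) = Bc (P n) (k-3) := by
      rw [hsym n (k+1)]; congr 1; omega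
    have hs2 : Bc (P n) k = Bc (P n) (k-2) := by
      rw [hsym n k]; congr 1; omega
    have hcR : (n:ℝ) = 2*(k:ℝ)-2 := by
      have : ((n:ℤ):ℝ) = 2*(k:ℝ)-2 := by
        exact_mod_cast congrArg (fun z : ℤ => (z:ℝ)) (by omega : (n:ℤ) = 2*k-2)
      exact_mod_cast this
    have hDeq : (δ:ℝ) * (Bc (P (n+1)) k - Bc (P (n+1)) (k-1)) = 0 := by
      linear_combination h1 - h2 + ((k:ℝ)+1) * hs1 + ((δ:ℝ)+(n:ℝ)-2*(k:ℝ)) * hs2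
        + (2*Bc (P n) (k-2) - Bc (P n) (k-1) - Bc (P n) (k-3)) * hcR
    linarith [hDeq]

set_option maxHeartbeats 1000000 in
lemma stepH4 (hsym : ∀ (n : ℕ) (k : ℤ), Bc (P n) k = Bc (P n) ((n:ℤ) - k)) (n : ℕ) (hn : 3 ≤ n)
    (h3 : ∀ k : ℤ, 2*k ≤ (n:ℤ)+1 → Bc (P n) (k-1) ≤ Bc (P n) k)
    (h3' : ∀ k : ℤ, 2*k ≤ (n:ℤ)+2 → Bc (P (n+1)) (k-1) ≤ Bc (P (n+1)) k) :
    ∀ m : ℤ, 2*m = ((n+1:ℕ):ℤ)-1 → 0 ≤ 2*((δ:ℝ)-2) * (Bc (P (n+1)) m - Bc (P (n+1)) (m-1))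
        + (((n+1:ℕ):ℝ)+5) * (Bc (P (n+1)) (m-1) - Bc (P (n+1)) (m-2)) := by
  intro m hm
  have hmn : 2*m = (n:ℤ) := by push_cast at hm; omega
  have hm2 : (2:ℤ) ≤ m := by omega
  have hmR : (n:ℝ) = 2*(m:ℝ) := by exact_mod_cast hmn.symm
  have hm2R : (2:ℝ) ≤ (m:ℝ) := by exact_mod_cast hm2
  have hnc : ((n+1:ℕ):ℝ) = (n:ℝ)+1 := by push_cast; ring
  rw [hnc]
  have hc'm : 0 ≤ Bc (P (n+1)) m - Bc (P (n+1)) (m-1) := by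
    have := h3' m (by omega); linarith
  have hc'm1 : 0 ≤ Bc (P (n+1)) (m-1) - Bc (P (n+1)) (m-2) := by
    have := h3' (m-1) (by omega)
    rw [show m-1-1 = m-2 from by ring] at this; linarith
  rcases (by omega : 2 ≤ δ ∨ δ = 1) with hd2 | hd1
  · have hd2R : (2:ℝ) ≤ (δ:ℝ) := by exact_mod_cast hd2
    have p1 : 0 ≤ 2*((δ:ℝ)-2) * (Bc (P (n+1)) m - Bc (P (n+1)) (m-1)) :=
      mul_nonneg (by linarith) hc'm
    have p2 : 0 ≤ ((n:ℝ)+1+5) * (Bc (P (n+1)) (m-1) - Bc (P (n+1)) (m-2)) :=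
      mul_nonneg (by linarith) hc'm1
    linarith
  · have hd1R : (δ:ℝ) = 1 := by rw [hd1]; norm_num
    have hcm : 0 ≤ Bc (P n) m - Bc (P n) (m-1) := by
      have := h3 m (by omega); linarith
    have hcm1 : 0 ≤ Bc (P n) (m-1) - Bc (P n) (m-2) := by
      have := h3 (m-1) (by omega); rw [show m-1-1 = m-2 from by ring] at this; linarith
    have hcm2 : 0 ≤ Bc (P n) (m-2) - Bc (P n) (m-3) := by
      have := h3 (m-2) (by omega); rw [show m-2-1 = m-3 from by ring] at this; linarith
    have hcm3 : 0 ≤ Bc (P n) (m-3) - Bc (P n) (m-4) := by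
      have := h3 (m-3) (by omega); rw [show m-3-1 = m-4 from by ring] at this; linarith
    have hs : Bc (P n) (m+1) = Bc (P n) (m-1) := by
      rw [hsym n (m+1)]; congr 1; omega
    have h1 := hA n m
    have h2 := hA n (m-1)
    rw [show m-1-1 = m-2 from by ring, show m-1-2 = m-3 from by ring,
        show m-1+1 = m from by ring] at h2
    push_cast at h2
    have h2' := hA n (m-2)
    rw [show m-2-1 = m-3 from by ring, show m-2-2 = m-4 from by ring,
        show m-2+1 = m-1 from by ring] at h2'
    push_cast at h2'
    have hDm : (δ:ℝ) * (Bc (P (n+1)) m - Bc (P (n+1)) (m-1))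
        = ((δ:ℝ)+(n:ℝ)-2*(m:ℝ)) * (Bc (P n) m - Bc (P n) (m-1))
          + ((m:ℝ)) * (Bc (P n) (m-1) - Bc (P n) (m-2))
          + ((n:ℝ)-(m:ℝ)+3) * (Bc (P n) (m-2) - Bc (P n) (m-3))
          + ((δ:ℝ)-1) * (Bc (P n) (m-1) - Bc (P n) (m-2)) := by
      linear_combination h1 - h2 + ((m:ℝ)+1) * hs
    have hDm1 : (δ:ℝ) * (Bc (P (n+1)) (m-1) - Bc (P (n+1)) (m-2))
        = ((m:ℝ)) * (Bc (P n) m - Bc (P n) (m-1))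
          + ((δ:ℝ)+(n:ℝ)-(m:ℝ)+2) * (Bc (P n) (m-1) - Bc (P n) (m-2))
          + ((δ:ℝ)+(m:ℝ)-2) * (Bc (P n) (m-2) - Bc (P n) (m-3))
          + ((n:ℝ)-(m:ℝ)+4) * (Bc (P n) (m-3) - Bc (P n) (m-4)) := by
      linear_combination h2 - h2'
    have hDm1x : ((n:ℝ)+6) * ((δ:ℝ) * (Bc (P (n+1)) (m-1) - Bc (P (n+1)) (m-2)))
        = ((n:ℝ)+6) * (((m:ℝ)) * (Bc (P n) m - Bc (P n) (m-1))
          + ((δ:ℝ)+(n:ℝ)-(m:ℝ)+2) * (Bc (P n) (m-1) - Bc (P n) (m-2))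
          + ((δ:ℝ)+(m:ℝ)-2) * (Bc (P n) (m-2) - Bc (P n) (m-3))
          + ((n:ℝ)-(m:ℝ)+4) * (Bc (P n) (m-3) - Bc (P n) (m-4))) := by
      rw [hDm1]
    rw [hd1R] at hDm hDm1x
    have q1 : 0 ≤ (((n:ℝ)+6)*(m:ℝ) - 2*(1+(n:ℝ)-2*(m:ℝ))) * (Bc (P n) m - Bc (P n) (m-1)) :=
      mul_nonneg (by nlinarith) hcm
    have q2 : 0 ≤ (((n:ℝ)+6)*((n:ℝ)-(m:ℝ)+3) - 2*(m:ℝ)) * (Bc (P n) (m-1) - Bc (P n) (m-2)) :=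
      mul_nonneg (by nlinarith) hcm1
    have q3 : 0 ≤ (((n:ℝ)+6)*((m:ℝ)-1) - 2*((n:ℝ)-(m:ℝ)+3)) * (Bc (P n) (m-2) - Bc (P n) (m-3)) :=
      mul_nonneg (by nlinarith) hcm2
    have q4 : 0 ≤ (((n:ℝ)+6)*((n:ℝ)-(m:ℝ)+4)) * (Bc (P n) (m-3) - Bc (P n) (m-4)) :=
      mul_nonneg (by nlinarith) hcm3
    rw [hd1R]
    linarith [hDm, hDm1x, q1, q2, q3, q4]

end Main

section Base

variable (δ : ℕ) (P : ℕ → Polynomial ℝ) (hδ : 0 < δ) (hP0 : P 0 = 1)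
variable (hrec : ∀ n : ℕ, P (n + 1) =
      (C ((n : ℝ) / (δ : ℝ)) * X ^ 2 + X + C (1 + (n : ℝ) / (δ : ℝ))) * P n
        + C (1 / (δ : ℝ)) * (1 - X) * (1 + X ^ 2) * derivative (P n))

include hδ hP0 hrec

lemma hP3ex : P 3 = C (1+6*((δ:ℝ))⁻¹+4*((δ:ℝ))⁻¹^2) * (1+X^3)
    + C (3+6*((δ:ℝ))⁻¹+4*((δ:ℝ))⁻¹^2) * (X+X^2) := by
  have hP1 : P 1 = X + 1 := by
    rw [hrec 0, hP0]
    simp [derivative_one]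
  have hP2 : P 2 = C (1+2*((δ:ℝ))⁻¹) * (1+X^2) + C 2 * X := by
    rw [hrec 1, hP1]
    simp only [Nat.cast_one, derivative_add, derivative_X, derivative_one, one_div,
      map_add, map_mul, map_one, map_ofNat, add_zero]
    ring
  rw [hrec 2, hP2]
  simp only [Nat.cast_ofNat, derivative_add, derivative_mul, derivative_C, derivative_X,
    derivative_one, derivative_X_pow, derivative_ofNat, map_add, map_mul, map_one,
    map_ofNat, map_pow, one_div]
  rw [show (2:ℝ)/(δ:ℝ) = 2*((δ:ℝ))⁻¹ from by ring]
  simp only [map_add, map_mul, map_one, map_ofNat, map_pow]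
  ring

lemma coeffP3 : Bc (P 3) 0 = 1+6*((δ:ℝ))⁻¹+4*((δ:ℝ))⁻¹^2
    ∧ Bc (P 3) 1 = 3+6*((δ:ℝ))⁻¹+4*((δ:ℝ))⁻¹^2 := by
  have h3 := hP3ex δ P hδ hP0 hrec
  refine ⟨?_, ?_⟩ <;>
  · rw [show ∀ j : ℤ, Bc (P 3) j = if (0:ℤ) ≤ j then (P 3).coeff j.toNat else 0 from fun _ => rfl]
    rw [h3]
    norm_num [mul_add, mul_one, coeff_add, coeff_C_mul, coeff_C, coeff_X_pow, coeff_X,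
      coeff_one, coeff_mul_X_pow', coeff_mul_X]

lemma baseH3 (hsym21 : Bc (P 3) 2 = Bc (P 3) 1) :
    ∀ k : ℤ, 2*k ≤ ((3:ℕ):ℤ)+1 → Bc (P 3) (k-1) ≤ Bc (P 3) k := by
  obtain ⟨c0, c1⟩ := coeffP3 δ P hδ hP0 hrec
  have c2 : Bc (P 3) 2 = 3+6*((δ:ℝ))⁻¹+4*((δ:ℝ))⁻¹^2 := by rw [hsym21, c1]
  have hu : (0:ℝ) ≤ ((δ:ℝ))⁻¹ := by positivity
  intro k hk
  rcases (by omega : k < 0 ∨ k = 0 ∨ k = 1 ∨ k = 2) with h | h | h | h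
  · rw [Bc_neg _ _ h, Bc_neg _ _ (by omega)]
  · subst h; rw [Bc_neg _ _ (by norm_num), c0]; nlinarith
  · subst h; rw [show (1:ℤ)-1 = 0 from rfl, c0, c1]; linarith
  · subst h; rw [show (2:ℤ)-1 = 1 from rfl, c1, c2]

lemma baseH4 : ∀ m : ℤ, 2*m = ((3:ℕ):ℤ)-1 →
    0 ≤ 2*((δ:ℝ)-2) * (Bc (P 3) m - Bc (P 3) (m-1))
      + (((3:ℕ):ℝ)+5) * (Bc (P 3) (m-1) - Bc (P 3) (m-2)) := by
  obtain ⟨c0, c1⟩ := coeffP3 δ P hδ hP0 hrec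
  have hu : (0:ℝ) ≤ ((δ:ℝ))⁻¹ := by positivity
  have hd1 : (1:ℝ) ≤ (δ:ℝ) := by exact_mod_cast hδ
  intro m hm
  have hm1 : m = 1 := by omega
  subst hm1
  rw [show (1:ℤ)-1 = 0 from rfl, Bc_neg (P 3) (1-2) (by norm_num), c0, c1]
  push_cast
  nlinarith

end Base

/-- A real polynomial `f` of degree `m` is unimodal if its coefficients increase up to
some index `t` and decrease from `t` to `m`. -/
def Unimodal (f : Polynomial ℝ) : Prop :=
  ∃ t : ℕ, (∀ i : ℕ, i + 1 ≤ t → f.coeff i ≤ f.coeff (i + 1)) ∧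
    (∀ i : ℕ, t ≤ i → i + 1 ≤ f.natDegree → f.coeff (i + 1) ≤ f.coeff i)

theorem stmt_14 (δ : ℕ) (hδ : 0 < δ) (P : ℕ → Polynomial ℝ)
    (hP0 : P 0 = 1)
    (hrec : ∀ n : ℕ, P (n + 1) =
      (C ((n : ℝ) / (δ : ℝ)) * X ^ 2 + X + C (1 + (n : ℝ) / (δ : ℝ))) * P n
        + C (1 / (δ : ℝ)) * (1 - X) * (1 + X ^ 2) * derivative (P n)) :
    ∀ n : ℕ, 3 ≤ n → Unimodal (P n) := by
  have hA := recBc δ P hδ hrec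
  have hsym := symBc δ P hδ hP0 hA
  have hdeg := degBc δ P hδ hP0 hA
  have key : ∀ n : ℕ, 3 ≤ n →
      ((∀ k : ℤ, 2*k ≤ (n:ℤ)+1 → Bc (P n) (k-1) ≤ Bc (P n) k)
        ∧ (∀ m : ℤ, 2*m = (n:ℤ)-1 → 0 ≤ 2*((δ:ℝ)-2) * (Bc (P n) m - Bc (P n) (m-1))
            + ((n:ℝ)+5) * (Bc (P n) (m-1) - Bc (P n) (m-2)))) := by
    intro n hn
    induction n, hn using Nat.le_induction with
    | base =>
      refine ⟨baseH3 δ P hδ hP0 hrec ?_, baseH4 δ P hδ hP0 hrec⟩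
      rw [hsym 3 2]; congr 1
    | succ n hn ih =>
      obtain ⟨ih3, ih4⟩ := ih
      have h3' := stepH3 δ P hδ hA hsym n hn ih3 ih4
      have h3'' : ∀ k : ℤ, 2*k ≤ ((n+1:ℕ):ℤ)+1 → Bc (P (n+1)) (k-1) ≤ Bc (P (n+1)) k := by
        intro k hk; exact h3' k (by push_cast at hk ⊢; omega)
      refine ⟨h3'', ?_⟩
      have h4' := stepH4 δ P hδ hA hsym n hn ih3 h3'
      intro m hm
      have := h4' m (by push_cast at hm ⊢; omega)
      push_cast at this ⊢
      linarith
  intro n hn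
  obtain ⟨h3, _⟩ := key n hn
  have hBc : ∀ j : ℕ, (P n).coeff j = Bc (P n) (j:ℤ) := by
    intro j; simp [Bc]
  refine ⟨(n+1)/2, ?_, ?_⟩
  · intro i hi
    rw [hBc i, hBc (i+1)]
    have h := h3 ((i:ℤ)+1) (by push_cast; omega)
    rw [show (i:ℤ)+1-1 = (i:ℤ) from by ring] at h
    have e : ((i+1:ℕ):ℤ) = (i:ℤ)+1 := by push_cast; ring
    rw [e]
    exact h
  · intro i hit hid
    have hnd : (P n).natDegree ≤ n := by
      apply Polynomial.natDegree_le_iff_coeff_eq_zero.mpr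
      intro m hm
      have := hdeg n (m:ℤ) (by exact_mod_cast hm)
      simpa [Bc] using this
    have hin : i + 1 ≤ n := le_trans hid hnd
    rw [hBc i, hBc (i+1)]
    rw [hsym n ((i:ℤ)), hsym n (((i+1:ℕ)):ℤ)]
    have h := h3 ((n:ℤ)-i) (by push_cast; omega)
    have e1 : ((n:ℤ)) - ((i+1:ℕ):ℤ) = (n:ℤ)-i-1 := by push_cast; ring
    rw [e1]
    exact h
end

section
/- Let (Â_n)_{n≥1} be the alternating Eulerian polynomials of type A, defined by Â_1(x) = 1 and 2Â_{n+1}(x) = ((n − 1)x² + 2x + n + 1)·Â_n(x) + (1 − x)(1 + x²)·Â_n′(x) for n ≥ 1, and let (B̂_n)_{n≥0} be the alternating Eulerian polynomials of type B, defined by B̂_0(x) = 1 and B̂_{n+1}(x) = (nx² + x + n + 1)·B̂_n(x) + (1 − x)(1 + x²)·B̂_n′(x) for n ≥ 0. Then for every n ∈ ℕ: 2^n · Â_{n+1}(x) = Σ_{k=0}^{n} C(n,k) · B̂_k(x) · B̂_{n−k}(x). -/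
open Polynomial

theorem stmt_15 (A B : ℕ → Polynomial ℝ)
    (hA1 : A 1 = 1)
    (hArec : ∀ n : ℕ, 1 ≤ n → 2 * A (n + 1) =
      (C ((n : ℝ) - 1) * X ^ 2 + 2 * X + C ((n : ℝ) + 1)) * A n
        + (1 - X) * (1 + X ^ 2) * derivative (A n))
    (hB0 : B 0 = 1)
    (hBrec : ∀ n : ℕ, B (n + 1) =
      (C (n : ℝ) * X ^ 2 + X + C ((n : ℝ) + 1)) * B n
        + (1 - X) * (1 + X ^ 2) * derivative (B n)) :
    ∀ n : ℕ, (2 : ℝ) ^ n • A (n + 1) =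
      ∑ k ∈ Finset.range (n + 1), C ((n.choose k : ℕ) : ℝ) * B k * B (n - k) := by
  intro n
  induction n with
  | zero => simp [hA1, hB0]
  | succ n ih =>
    set S : Polynomial ℝ :=
      ∑ k ∈ Finset.range (n + 1), C ((n.choose k : ℕ) : ℝ) * B k * B (n - k) with hSdef
    have hS' : derivative S = ∑ k ∈ Finset.range (n + 1), C ((n.choose k : ℕ) : ℝ) *
        (derivative (B k) * B (n - k) + B k * derivative (B (n - k))) := by
      rw [hSdef, derivative_sum]
      refine Finset.sum_congr rfl fun k _ => ?_
      simp only [derivative_mul, derivative_C, zero_mul, zero_add]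
      ring
    -- split the (n+1)-sum
    have hsplit : ∑ k ∈ Finset.range (n + 2), C (((n+1).choose k : ℕ) : ℝ) * B k * B (n + 1 - k)
        = ∑ k ∈ Finset.range (n + 1), C ((n.choose k : ℕ) : ℝ) * B k * B (n + 1 - k)
        + ∑ k ∈ Finset.range (n + 1), C ((n.choose k : ℕ) : ℝ) * B (k + 1) * B (n - k) := by
      rw [Finset.sum_range_succ' _ (n + 1)]
      have hterm : ∀ k ∈ Finset.range (n + 1),
          C (((n+1).choose (k+1) : ℕ) : ℝ) * B (k + 1) * B (n + 1 - (k + 1))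
          = C ((n.choose (k+1) : ℕ) : ℝ) * B (k + 1) * B (n + 1 - (k + 1))
            + C ((n.choose k : ℕ) : ℝ) * B (k + 1) * B (n - k) := by
        intro k _
        have h1 : n + 1 - (k + 1) = n - k := by omega
        rw [h1, Nat.choose_succ_succ]
        push_cast
        rw [C_add]
        ring
      rw [Finset.sum_congr rfl hterm, Finset.sum_add_distrib]
      have hshift : ∑ k ∈ Finset.range (n + 1),
          C ((n.choose (k+1) : ℕ) : ℝ) * B (k + 1) * B (n + 1 - (k + 1))
          = ∑ k ∈ Finset.range (n + 1), C ((n.choose k : ℕ) : ℝ) * B k * B (n + 1 - k)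
            - C ((n.choose 0 : ℕ) : ℝ) * B 0 * B (n + 1) := by
        have := Finset.sum_range_succ' (fun k => C ((n.choose k : ℕ) : ℝ) * B k * B (n + 1 - k)) (n + 1)
        rw [Finset.sum_range_succ] at this
        simp only [Nat.choose_succ_self, Nat.cast_zero, map_zero, zero_mul, add_zero] at this
        have h0 : n + 1 - 0 = n + 1 := rfl
        rw [h0] at this
        linear_combination -this
      rw [hshift]
      simp only [Nat.sub_zero, Nat.choose_zero_right]
      ring
    -- per-term expansion
    have hterm2 : ∀ k ∈ Finset.range (n + 1),
        C ((n.choose k : ℕ) : ℝ) * B k * B (n + 1 - k)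
          + C ((n.choose k : ℕ) : ℝ) * B (k + 1) * B (n - k)
        = (C (n : ℝ) * X ^ 2 + 2 * X + C ((n : ℝ) + 2)) *
            (C ((n.choose k : ℕ) : ℝ) * B k * B (n - k))
          + (1 - X) * (1 + X ^ 2) * (C ((n.choose k : ℕ) : ℝ) *
            (derivative (B k) * B (n - k) + B k * derivative (B (n - k)))) := by
      intro k hk
      have hk' : k ≤ n := by
        have := Finset.mem_range.mp hk; omega
      rw [show n + 1 - k = (n - k) + 1 from by omega, hBrec (n - k), hBrec k]
      have hc : ((n - k : ℕ) : ℝ) = (n : ℝ) - (k : ℝ) := by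
        push_cast [hk']; ring
      rw [hc]
      simp only [C_add, C_sub, C_1, map_ofNat]
      ring
    have hRHS : ∑ k ∈ Finset.range (n + 2), C (((n+1).choose k : ℕ) : ℝ) * B k * B (n + 1 - k)
        = (C (n : ℝ) * X ^ 2 + 2 * X + C ((n : ℝ) + 2)) * S
          + (1 - X) * (1 + X ^ 2) * derivative S := by
      rw [hsplit, ← Finset.sum_add_distrib, Finset.sum_congr rfl hterm2, hS', hSdef,
        Finset.mul_sum, Finset.mul_sum, ← Finset.sum_add_distrib]
    -- left-hand side
    have h2 := hArec (n + 1) (by omega)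
    have hc1 : ((n + 1 : ℕ) : ℝ) - 1 = (n : ℝ) := by push_cast; ring
    have hc2 : ((n + 1 : ℕ) : ℝ) + 1 = (n : ℝ) + 2 := by push_cast; ring
    rw [hc1, hc2] at h2
    have hsm : (2 : ℝ) ^ (n + 1) • A (n + 1 + 1) = (2 : ℝ) ^ n • (2 * A (n + 1 + 1)) := by
      rw [pow_succ, mul_comm ((2:ℝ)^n) 2, mul_smul, smul_eq_C_mul ((2:ℝ))]
      simp [map_ofNat]
    rw [hsm, h2, smul_add, hRHS]
    rw [← mul_smul_comm, ← mul_smul_comm, ← derivative_smul, ih]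
end

section
/- Let (M̃_n)_{n≥0} be defined by M̃_0(x) = 1 and M̃_n(x) = (2n − 1)x·M̃_{n−1}(x) + 2x(1 − x)·M̃_{n−1}′(x) for n ≥ 1, and let (M_n)_{n≥1} be defined by M_1(x) = 1 and M_n(x) = ((2n − 2)x + 1)·M_{n−1}(x) + 2x(1 − x)·M_{n−1}′(x) for n ≥ 2. Then for every n ≥ 1, M̃_n is alternatingly increasing with respect to n (where deg M̃_n = n) and M_n is alternatingly increasing with respect to n − 1 (where deg M_n = n − 1). -/
open Polynomial

/-- A real polynomial `p` is alternatingly increasing with respect to `n` if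
`0 ≤ p₀ ≤ pₙ ≤ p₁ ≤ p_{n-1} ≤ p₂ ≤ ⋯ ≤ p_{⌊(n+1)/2⌋}`. -/
def AltIncreasing (p : Polynomial ℝ) (n : ℕ) : Prop :=
  0 ≤ p.coeff 0 ∧ (∀ i : ℕ, 2 * i < n → p.coeff i ≤ p.coeff (n - i)) ∧
    (∀ i : ℕ, 2 * i + 1 ≤ n → p.coeff (n - i) ≤ p.coeff (i + 1))

private lemma coeffM_zero (a : ℝ) (q : ℝ[X]) :
    ((C a * X + 1) * q + 2*X*(1-X)*derivative q).coeff 0 = q.coeff 0 := by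
  simp [mul_coeff_zero]

private lemma coeffM_succ (a : ℝ) (q : ℝ[X]) (k : ℕ) :
    ((C a * X + 1) * q + 2*X*(1-X)*derivative q).coeff (k+1)
      = (2*k+3) * q.coeff (k+1) + (a - 2*k) * q.coeff k := by
  have h : (C a * X + 1) * q + 2*X*(1-X)*derivative q
      = C a * (X * q) + q + C 2 * (X * derivative q)
        - C 2 * (X * (X * derivative q)) := by
    have h2 : (2 : ℝ[X]) = C 2 := (map_ofNat C 2).symm
    rw [h2]; ring
  rw [h]
  cases k with
  | zero => simp [coeff_X_mul, coeff_derivative, mul_coeff_zero]; ring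
  | succ j =>
    simp [coeff_X_mul, coeff_derivative]
    push_cast
    ring

private lemma coeffMt_zero (a : ℝ) (q : ℝ[X]) :
    (C a * X * q + 2*X*(1-X)*derivative q).coeff 0 = 0 := by
  simp [mul_coeff_zero]

private lemma coeffMt_succ (a : ℝ) (q : ℝ[X]) (k : ℕ) :
    (C a * X * q + 2*X*(1-X)*derivative q).coeff (k+1)
      = (2*k+2) * q.coeff (k+1) + (a - 2*k) * q.coeff k := by
  have h : C a * X * q + 2*X*(1-X)*derivative q
      = C a * (X * q) + C 2 * (X * derivative q)
        - C 2 * (X * (X * derivative q)) := by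
    have h2 : (2 : ℝ[X]) = C 2 := (map_ofNat C 2).symm
    rw [h2]; ring
  rw [h]
  cases k with
  | zero => simp [coeff_X_mul, coeff_derivative, mul_coeff_zero]; ring
  | succ j =>
    simp [coeff_X_mul, coeff_derivative]
    push_cast
    ring

private lemma mainM (M : ℕ → Polynomial ℝ)
    (hM1 : M 1 = 1)
    (hMrec : ∀ n : ℕ, 2 ≤ n → M n =
      (C (2 * (n : ℝ) - 2) * X + 1) * M (n - 1)
        + 2 * X * (1 - X) * derivative (M (n - 1))) :
    ∀ n : ℕ, (M (n+1)).coeff 0 = 1 ∧ (∀ i, n < i → (M (n+1)).coeff i = 0) ∧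
      (M (n+1)).coeff n = 2^n ∧ AltIncreasing (M (n+1)) n := by
  intro n
  induction n with
  | zero =>
    refine ⟨by simp [hM1], fun i hi => ?_, by simp [hM1], by simp [hM1], ?_, ?_⟩
    · rw [hM1]; simp [coeff_one]; omega
    · intro i hi; omega
    · intro i hi; omega
  | succ n ih =>
    obtain ⟨hq0, hqv, hql, hq00, hq1, hq2⟩ := ih
    set q := M (n+1) with hqdef
    have hrec : M (n+2) = (C (2 * ((n:ℝ)+2) - 2) * X + 1) * q
        + 2 * X * (1 - X) * derivative q := by
      have := hMrec (n+2) (by omega)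
      simpa using this
    have hc0 : (M (n+2)).coeff 0 = 1 := by rw [hrec, coeffM_zero]; exact hq0
    have hcs : ∀ k : ℕ, (M (n+2)).coeff (k+1)
        = (2*k+3) * q.coeff (k+1) + (2*(n:ℝ)+2 - 2*k) * q.coeff k := by
      intro k
      rw [hrec, coeffM_succ]
      ring_nf
    have hq1' : ∀ i j : ℕ, i + j = n → 2*i < n → q.coeff i ≤ q.coeff j := by
      intro i j hij h2
      have := hq1 i h2
      rwa [show n - i = j by omega] at this
    have hq2' : ∀ i j : ℕ, i + j = n → 2*i + 1 ≤ n → q.coeff j ≤ q.coeff (i+1) := by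
      intro i j hij h2
      have := hq2 i h2
      rwa [show n - i = j by omega] at this
    have hmono : ∀ i : ℕ, 2*i + 2 ≤ n + 1 → q.coeff i ≤ q.coeff (i+1) := by
      intro i h
      exact le_trans (hq1' i (n-i) (by omega) (by omega))
        (hq2' i (n-i) (by omega) (by omega))
    have hup : ∀ j : ℕ, 2*j ≤ n + 1 → 0 ≤ q.coeff j := by
      intro j
      induction j with
      | zero => intro _; exact hq00
      | succ k ihk => intro h; exact le_trans (ihk (by omega)) (hmono k (by omega))
    have hnn : ∀ j : ℕ, 0 ≤ q.coeff j := by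
      intro j
      by_cases h1 : 2*j ≤ n+1
      · exact hup j h1
      · by_cases h2 : n < j
        · rw [hqv j h2]
        · exact le_trans (hup (n-j) (by omega)) (hq1' (n-j) j (by omega) (by omega))
    have hcv : ∀ i, n + 1 < i → (M (n+2)).coeff i = 0 := by
      intro i hi
      obtain ⟨k, rfl⟩ : ∃ k, i = k + 1 := ⟨i - 1, by omega⟩
      rw [hcs k, hqv (k+1) (by omega), hqv k (by omega)]
      ring
    have hcl : (M (n+2)).coeff (n+1) = 2^(n+1) := by
      rw [hcs n, hqv (n+1) (by omega), hql]
      push_cast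
      ring
    refine ⟨hc0, hcv, hcl, by rw [hc0]; norm_num, ?_, ?_⟩
    · intro i hi
      match i, hi with
      | 0, _ =>
        rw [Nat.sub_zero, hc0, hcl]
        have : (1:ℝ) ≤ 2^(n+1) := one_le_pow₀ one_le_two
        linarith
      | (j+1), hi =>
        have hj : 2*j + 2 ≤ n := by omega
        set t := n - j - 1 with ht0
        have htj : t + j + 1 = n := by omega
        have hsub : n + 1 - (j+1) = t + 1 := by omega
        rw [hsub, hcs j, hcs t]
        have htR : (t:ℝ) = (n:ℝ) - 1 - (j:ℝ) := by
          have : ((t:ℕ) : ℝ) + (j:ℝ) + 1 = (n:ℝ) := by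
            exact_mod_cast congrArg (Nat.cast (R := ℝ)) htj
          linarith
        have f1 : q.coeff j ≤ q.coeff (t+1) := hq1' j (t+1) (by omega) (by omega)
        have f2 : q.coeff (j+1) ≤ q.coeff t := by
          rcases Nat.lt_or_ge (2*(j+1)) n with h | h
          · exact hq1' (j+1) t (by omega) h
          · have : t = j + 1 := by omega
            rw [this]
        have f3 : q.coeff j ≤ q.coeff (j+1) := hmono j (by omega)
        have hjn : 2*(j:ℝ) + 2 ≤ (n:ℝ) := by exact_mod_cast hj
        have e1 : (0:ℝ) ≤ (2*(n:ℝ) - 2*j + 1) * (q.coeff (t+1) - q.coeff j) :=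
          mul_nonneg (by linarith) (by linarith)
        have e2 : (0:ℝ) ≤ (2*(j:ℝ) + 3) * (q.coeff t - q.coeff (j+1)) :=
          mul_nonneg (by linarith) (by linarith)
        rw [htR]
        nlinarith [e1, e2, f2, f3]
    · intro i hi
      rcases Nat.lt_or_ge (2*i + 1) (n+1) with hlt | hge
      · have hin : 2*i + 1 ≤ n := by omega
        set s := n - i with hs0
        have hsi : s + i = n := by omega
        have hsub : n + 1 - i = s + 1 := by omega
        rw [hsub, hcs s, hcs i]
        have hsR : (s:ℝ) = (n:ℝ) - (i:ℝ) := by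
          have : ((s:ℕ):ℝ) + (i:ℝ) = (n:ℝ) := by
            exact_mod_cast congrArg (Nat.cast (R := ℝ)) hsi
          linarith
        have g1 : q.coeff s ≤ q.coeff (i+1) := hq2' i s (by omega) hin
        have g2 : q.coeff (s+1) ≤ q.coeff i := by
          match i, hin with
          | 0, _ =>
            rw [hqv (s+1) (by omega)]
            exact hnn 0
          | (i'+1), hin =>
            exact hq2' i' (s+1) (by omega) (by omega)
        have g3 : q.coeff (s+1) ≤ q.coeff (i+1) :=
          le_trans g2 (hmono i (by omega))
        have hinR : 2*(i:ℝ) + 1 ≤ (n:ℝ) := by exact_mod_cast hin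
        have e1 : (0:ℝ) ≤ (2*(i:ℝ) + 2) * (q.coeff (i+1) - q.coeff s) :=
          mul_nonneg (by linarith) (by linarith)
        have e2 : (0:ℝ) ≤ (2*(n:ℝ) - 2*i + 2) * (q.coeff i - q.coeff (s+1)) :=
          mul_nonneg (by linarith) (by linarith)
        rw [hsR]
        nlinarith [e1, e2, g3]
      · have : n + 1 - i = i + 1 := by omega
        rw [this]

private lemma corrMt (Mt M : ℕ → Polynomial ℝ)
    (hMt0 : Mt 0 = 1)
    (hMtrec : ∀ n : ℕ, 1 ≤ n → Mt n =
      C (2 * (n : ℝ) - 1) * X * Mt (n - 1)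
        + 2 * X * (1 - X) * derivative (Mt (n - 1)))
    (hM1 : M 1 = 1)
    (hMrec : ∀ n : ℕ, 2 ≤ n → M n =
      (C (2 * (n : ℝ) - 2) * X + 1) * M (n - 1)
        + 2 * X * (1 - X) * derivative (M (n - 1))) :
    ∀ n : ℕ, (∀ i, i ≤ n+1 → (Mt (n+1)).coeff i = (M (n+1)).coeff (n+1-i)) ∧
      (∀ i, n+1 < i → (Mt (n+1)).coeff i = 0) := by
  intro n
  induction n with
  | zero =>
    have h1 : Mt 1 = X := by
      have := hMtrec 1 (le_refl 1)
      simp [hMt0] at this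
      rw [this, show ((C (2:ℝ) - 1) : ℝ[X]) = 1 by rw [map_ofNat C 2]; ring]
      ring
    constructor
    · intro i hi
      interval_cases i <;> simp [h1, hM1, coeff_one]
    · intro i hi
      rw [h1, coeff_X]
      simp; omega
  | succ n ihn =>
    obtain ⟨ie, iev⟩ := ihn
    obtain ⟨hq0, hqv, hql, -⟩ := mainM M hM1 hMrec n
    set q := M (n+1) with hqdef
    have hrecc : M (n+2) = (C (2 * ((n:ℝ)+2) - 2) * X + 1) * q
        + 2 * X * (1 - X) * derivative q := by
      have := hMrec (n+2) (by omega)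
      simpa using this
    have hc0 : (M (n+2)).coeff 0 = 1 := by rw [hrecc, coeffM_zero]; exact hq0
    have hcs : ∀ k : ℕ, (M (n+2)).coeff (k+1)
        = (2*k+3) * q.coeff (k+1) + (2*(n:ℝ)+2 - 2*k) * q.coeff k := by
      intro k
      rw [hrecc, coeffM_succ]
      ring_nf
    have hrect : Mt (n+2) = C (2 * ((n:ℝ)+2) - 1) * X * Mt (n+1)
        + 2 * X * (1 - X) * derivative (Mt (n+1)) := by
      have := hMtrec (n+2) (by omega)
      simpa using this
    have hd0 : (Mt (n+2)).coeff 0 = 0 := by rw [hrect, coeffMt_zero]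
    have hds : ∀ k : ℕ, (Mt (n+2)).coeff (k+1)
        = (2*k+2) * (Mt (n+1)).coeff (k+1)
          + (2*(n:ℝ)+3 - 2*k) * (Mt (n+1)).coeff k := by
      intro k
      rw [hrect, coeffMt_succ]
      ring_nf
    constructor
    · intro i hile
      match i with
      | 0 =>
        rw [hd0, show n+2-0 = (n+1)+1 from rfl, hcs (n+1),
          hqv (n+1) (by omega), hqv (n+2) (by omega)]
        ring
      | (k+1) =>
        rcases Nat.lt_or_ge k (n+1) with hkn | hkn
        · have hsub1 : n+2-(k+1) = (n-k)+1 := by omega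
          rw [hds k, ie (k+1) (by omega), ie k (by omega), hsub1, hcs (n-k),
            show n+1-(k+1) = n-k by omega, show n+1-k = (n-k)+1 by omega]
          have hu : ((n-k : ℕ):ℝ) = (n:ℝ) - (k:ℝ) := by
            have h' : (n-k) + k = n := by omega
            have := congrArg (Nat.cast (R := ℝ)) h'
            push_cast at this
            linarith
          rw [hu]
          ring
        · have hk : k = n+1 := by omega
          subst hk
          rw [hds (n+1), iev (n+2) (by omega), ie (n+1) (le_refl _),
            show n+1-(n+1) = 0 by omega, show n+2-(n+1+1) = 0 by omega, hc0, hq0]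
          push_cast
          ring
    · intro i hi
      obtain ⟨k, rfl⟩ : ∃ k, i = k+1 := ⟨i-1, by omega⟩
      rw [hds k, iev (k+1) (by omega), iev k (by omega)]
      ring

private lemma natDeg_of (p : ℝ[X]) (d : ℕ) (h1 : p.coeff d ≠ 0)
    (h2 : ∀ i, d < i → p.coeff i = 0) : p.natDegree = d :=
  le_antisymm (natDegree_le_iff_coeff_eq_zero.2 h2) (le_natDegree_of_ne_zero h1)

theorem stmt_19 (Mt M : ℕ → Polynomial ℝ)
    (hMt0 : Mt 0 = 1)
    (hMtrec : ∀ n : ℕ, 1 ≤ n → Mt n =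
      C (2 * (n : ℝ) - 1) * X * Mt (n - 1)
        + 2 * X * (1 - X) * derivative (Mt (n - 1)))
    (hM1 : M 1 = 1)
    (hMrec : ∀ n : ℕ, 2 ≤ n → M n =
      (C (2 * (n : ℝ) - 2) * X + 1) * M (n - 1)
        + 2 * X * (1 - X) * derivative (M (n - 1))) :
    ∀ n : ℕ, 1 ≤ n →
      (Mt n).natDegree = n ∧ AltIncreasing (Mt n) n ∧
      (M n).natDegree = n - 1 ∧ AltIncreasing (M n) (n - 1) := by
  intro n hn
  obtain ⟨m, rfl⟩ : ∃ m, n = m + 1 := ⟨n - 1, by omega⟩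
  obtain ⟨hq0, hqv, hql, haltM⟩ := mainM M hM1 hMrec m
  obtain ⟨ie, iev⟩ := corrMt Mt M hMt0 hMtrec hM1 hMrec m
  have hdegM : (M (m+1)).natDegree = m := by
    apply natDeg_of _ _ _ hqv
    rw [hql]
    positivity
  have hdegMt : (Mt (m+1)).natDegree = m + 1 := by
    apply natDeg_of _ _ _ iev
    rw [ie (m+1) (le_refl _), show m+1-(m+1) = 0 by omega, hq0]
    norm_num
  obtain ⟨hq00, hq1, hq2⟩ := haltM
  refine ⟨hdegMt, ⟨?_, ?_, ?_⟩, by simpa using hdegM, by rw [Nat.add_sub_cancel]; exact (⟨hq00, hq1, hq2⟩ : AltIncreasing (M (m+1)) m)⟩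
  · rw [ie 0 (by omega), Nat.sub_zero, hqv (m+1) (by omega)]
  · intro i hi
    rw [ie i (by omega), ie (m+1-i) (by omega),
      show m+1-(m+1-i) = i by omega]
    match i, hi with
    | 0, _ =>
      rw [Nat.sub_zero, hqv (m+1) (by omega), hq0]
      norm_num
    | (j+1), hi =>
      rw [show m+1-(j+1) = m-j by omega]
      exact hq2 j (by omega)
  · intro i hi
    rw [ie (m+1-i) (by omega), show m+1-(m+1-i) = i by omega,
      ie (i+1) (by omega), show m+1-(i+1) = m-i by omega]
    rcases Nat.lt_or_ge (2*i) m with hlt | hge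
    · exact hq1 i hlt
    · rw [show m - i = i by omega]
end
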